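/- arXiv:2311.15699 — 5 statements merged into one kernel-verified Lean document; each statement's English description precedes it below -/
import Mathlib

section
/- Let y = (y_1, y_2, ..., y_n) be a vector of n positive integer car lengths. If y is minimally invariant (i.e., PAinv_n(y) = {(1,1,...,1)}), then y_1 < min(y_2, y_3, ..., y_n) and y_2 ≠ Σ_{j ∈ [n], j ≠ 2} y_j. -/
/-- Car with preference `pref` and length `len` fits at spot `s`:
`pref ≤ s`, the spots `s, s+1, ..., s+len-1` all lie in the lot `[1, m]`,
and none of them is occupied. -/
def FitsAt (occ : Finset ℕ) (m pref len s : ℕ) : Prop :=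
  pref ≤ s ∧ s + len ≤ m + 1 ∧ ∀ t ∈ Finset.Ico s (s + len), t ∉ occ

/-- The car parks at `s`: `s` is the least spot (≥ its preference) where it fits. -/
def ParksAt (occ : Finset ℕ) (m pref len s : ℕ) : Prop :=
  FitsAt occ m pref len s ∧ ∀ s' < s, ¬ FitsAt occ m pref len s'

/-- Every car in the list of (preference, length) pairs can park, with
cars entering in order, starting from the set `occ` of occupied spots. -/
inductive Park (m : ℕ) : Finset ℕ → List (ℕ × ℕ) → Prop
  | nil (occ : Finset ℕ) : Park m occ []
  | cons (occ : Finset ℕ) (pref len : ℕ) (rest : List (ℕ × ℕ)) (s : ℕ) :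
      ParksAt occ m pref len s →
      Park m (occ ∪ Finset.Ico s (s + len)) rest →
      Park m occ ((pref, len) :: rest)

/-- `x` is a parking assortment for the length vector `y`. -/
def PA (y x : List ℕ) : Prop :=
  x.length = y.length ∧ (∀ v ∈ x, 1 ≤ v ∧ v ≤ y.sum) ∧ Park y.sum ∅ (x.zip y)

/-- `x` is a (permutation) invariant parking assortment for `y`. -/
def PAinv (y x : List ℕ) : Prop :=
  ∀ x' : List ℕ, x.Perm x' → PA y x'

/-- The degree of `x`: the number of entries of `x` different from 1. -/
def deg (x : List ℕ) : ℕ := (x.filter (fun v => v ≠ 1)).length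

/-- The characteristic of `y`: the greatest degree over all invariant
parking assortments for `y`. -/
noncomputable def chi (y : List ℕ) : ℕ := sSup {d | ∃ x, PAinv y x ∧ deg x = d}

/-- The invariant solution set of `y`. -/
def Wset (y : List ℕ) : Set ℕ :=
  {w | PAinv y (List.replicate (y.length - 1) 1 ++ [w])}


lemma parksAt_prefix {m c ℓ : ℕ} (hl : 1 ≤ ℓ) (hc : 1 ≤ c) (hm : c + ℓ ≤ m + 1) :
    ParksAt (Finset.Ico 1 c) m 1 ℓ c := by
  refine ⟨⟨hc, hm, ?_⟩, ?_⟩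
  · intro t ht
    simp only [Finset.mem_Ico] at ht ⊢
    omega
  · rintro s' hs' ⟨h1, _, h3⟩
    exact h3 s' (by simp only [Finset.mem_Ico]; omega) (by simp only [Finset.mem_Ico]; omega)

lemma parksAt_left {m a b c ℓ : ℕ} (hl : 1 ≤ ℓ) (ha : 1 ≤ a) (hab : a + ℓ ≤ b) (hbc : b ≤ c)
    (hcm : c ≤ m + 1) :
    ParksAt (Finset.Ico 1 a ∪ Finset.Ico b c) m 1 ℓ a := by
  refine ⟨⟨ha, by omega, ?_⟩, ?_⟩
  · intro t ht
    simp only [Finset.mem_Ico, Finset.mem_union] at ht ⊢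
    omega
  · rintro s' hs' ⟨h1, _, h3⟩
    exact h3 s' (by simp only [Finset.mem_Ico]; omega)
      (by simp only [Finset.mem_Ico, Finset.mem_union]; omega)

lemma parksAt_gapRight {m a b c ℓ : ℕ} (ha : 1 ≤ a) (hab : a ≤ b) (hbc : b < c)
    (hgap : b < a + ℓ) (hfit : c + ℓ ≤ m + 1) :
    ParksAt (Finset.Ico 1 a ∪ Finset.Ico b c) m 1 ℓ c := by
  refine ⟨⟨by omega, hfit, ?_⟩, ?_⟩
  · intro t ht
    simp only [Finset.mem_Ico] at ht
    simp only [Finset.mem_union, Finset.mem_Ico]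
    omega
  · rintro s' hs' ⟨h1, _, h3⟩
    by_cases hsa : s' < a
    · exact h3 s' (by simp only [Finset.mem_Ico]; omega)
        (by simp only [Finset.mem_union, Finset.mem_Ico]; omega)
    · by_cases hsb : s' < b
      · exact h3 b (by simp only [Finset.mem_Ico]; omega)
          (by simp only [Finset.mem_union, Finset.mem_Ico]; omega)
      · exact h3 s' (by simp only [Finset.mem_Ico]; omega)
          (by simp only [Finset.mem_union, Finset.mem_Ico]; omega)

lemma parksAt_w_free {m a w ℓ : ℕ} (haw : a ≤ w) (hm : w + ℓ ≤ m + 1) :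
    ParksAt (Finset.Ico 1 a) m w ℓ w := by
  refine ⟨⟨le_refl w, hm, ?_⟩, ?_⟩
  · intro t ht
    simp only [Finset.mem_Ico] at ht ⊢
    omega
  · rintro s' hs' ⟨h1, _, _⟩
    omega

lemma parksAt_w_blocked {m a w ℓ : ℕ} (hl : 1 ≤ ℓ) (hw : 1 ≤ w) (hwa : w ≤ a) (hm : a + ℓ ≤ m + 1) :
    ParksAt (Finset.Ico 1 a) m w ℓ a := by
  refine ⟨⟨hwa, hm, ?_⟩, ?_⟩
  · intro t ht
    simp only [Finset.mem_Ico] at ht ⊢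
    omega
  · rintro s' hs' ⟨h1, _, h3⟩
    exact h3 s' (by simp only [Finset.mem_Ico]; omega) (by simp only [Finset.mem_Ico]; omega)

lemma pack_pref1 (m : ℕ) : ∀ (P : List ℕ) (c : ℕ) (rest : List (ℕ × ℕ)),
    1 ≤ c → c + P.sum ≤ m + 1 → (∀ ℓ ∈ P, 1 ≤ ℓ) →
    Park m (Finset.Ico 1 (c + P.sum)) rest →
    Park m (Finset.Ico 1 c) (P.map (fun ℓ => (1, ℓ)) ++ rest) := by
  intro P
  induction P with
  | nil => intro c rest hc hm hpos h; simpa using h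
  | cons ℓ T ih =>
    intro c rest hc hm hpos h
    simp only [List.map_cons, List.cons_append]
    refine Park.cons _ _ _ _ c (parksAt_prefix (hpos ℓ (by simp)) hc ?_) ?_
    · have := T.sum; simp only [List.sum_cons] at hm; omega
    · have hocc : Finset.Ico 1 c ∪ Finset.Ico c (c + ℓ) = Finset.Ico 1 (c + ℓ) :=
        Finset.Ico_union_Ico_eq_Ico hc (by omega)
      rw [hocc]
      apply ih (c + ℓ) rest (by omega)
      · simp only [List.sum_cons] at hm; omega
      · intro u hu; exact hpos u (by simp [hu])
      · simp only [List.sum_cons] at h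
        have : c + ℓ + T.sum = c + (ℓ + T.sum) := by omega
        rw [this]; exact h

lemma park_exactFill (m : ℕ) : ∀ (L : List ℕ) (a b c : ℕ),
    1 ≤ a → a + L.sum = b → b ≤ c → c ≤ m + 1 → (∀ ℓ ∈ L, 1 ≤ ℓ) →
    Park m (Finset.Ico 1 a ∪ Finset.Ico b c) (L.map (fun ℓ => (1, ℓ))) := by
  intro L
  induction L with
  | nil => intro a b c _ _ _ _ _; exact Park.nil _
  | cons ℓ T ih =>
    intro a b c ha hsum hbc hcm hpos
    simp only [List.sum_cons] at hsum
    simp only [List.map_cons]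
    refine Park.cons _ _ _ _ a (parksAt_left (hpos ℓ (by simp)) ha (by omega) hbc hcm) ?_
    have hocc : (Finset.Ico 1 a ∪ Finset.Ico b c) ∪ Finset.Ico a (a + ℓ)
        = Finset.Ico 1 (a + ℓ) ∪ Finset.Ico b c := by
      rw [Finset.union_right_comm, Finset.Ico_union_Ico_eq_Ico ha (by omega)]
    rw [hocc]
    exact ih (a + ℓ) b c (by omega) (by omega) hbc hcm (fun u hu => hpos u (by simp [hu]))

lemma park_minGap (m μ : ℕ) (hμ : 1 ≤ μ) : ∀ (L : List ℕ) (a c : ℕ),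
    1 ≤ a → a + μ < c → c + L.sum = m + 1 + μ → (∀ ℓ ∈ L, μ ≤ ℓ) → μ ∈ L →
    Park m (Finset.Ico 1 a ∪ Finset.Ico (a + μ) c) (L.map (fun ℓ => (1, ℓ))) := by
  intro L
  induction L with
  | nil => intro a c _ _ _ _ hmem; simp at hmem
  | cons ℓ T ih =>
    intro a c ha hac hsum hge hmem
    simp only [List.sum_cons] at hsum
    simp only [List.map_cons]
    by_cases hcase : ℓ = μ
    · subst hcase
      refine Park.cons _ _ _ _ a (parksAt_left hμ ha le_rfl (by omega) (by omega)) ?_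
      have hocc : (Finset.Ico 1 a ∪ Finset.Ico (a + ℓ) c) ∪ Finset.Ico a (a + ℓ)
          = Finset.Ico 1 c := by
        rw [Finset.union_right_comm, Finset.Ico_union_Ico_eq_Ico ha (by omega),
          Finset.Ico_union_Ico_eq_Ico (by omega) (by omega)]
      rw [hocc]
      have := pack_pref1 m T c [] (by omega) (by omega)
        (fun u hu => le_trans hμ (hge u (by simp [hu]))) (by rw [show c + T.sum = m + 1 by omega]; exact Park.nil _)
      simpa using this
    · have hμT : μ ∈ T := by cases hmem with | head => exact absurd rfl hcase | tail _ h => exact h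
      have hTμ : μ ≤ T.sum := List.single_le_sum (fun x _ => Nat.zero_le x) μ hμT
      have hℓ : μ < ℓ := lt_of_le_of_ne (hge ℓ (by simp)) (fun h => hcase h.symm)
      refine Park.cons _ _ _ _ c (parksAt_gapRight ha (by omega) hac (by omega) (by omega)) ?_
      have hocc : (Finset.Ico 1 a ∪ Finset.Ico (a + μ) c) ∪ Finset.Ico c (c + ℓ)
          = Finset.Ico 1 a ∪ Finset.Ico (a + μ) (c + ℓ) := by
        rw [Finset.union_assoc, Finset.Ico_union_Ico_eq_Ico (by omega) (by omega)]
      rw [hocc]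
      exact ih a (c + ℓ) ha (by omega) (by omega) (fun u hu => hge u (by simp [hu])) hμT

lemma park_blocked (m : ℕ) (P Q : List ℕ) (yc w : ℕ) (hyc : 1 ≤ yc)
    (hw1 : 1 ≤ w) (hw : w ≤ P.sum + 1) (hm : m = P.sum + yc + Q.sum)
    (hP : ∀ ℓ ∈ P, 1 ≤ ℓ) (hQ : ∀ ℓ ∈ Q, 1 ≤ ℓ) :
    Park m ∅ (P.map (fun ℓ => (1, ℓ)) ++ (w, yc) :: Q.map (fun ℓ => (1, ℓ))) := by
  have h0 : (∅ : Finset ℕ) = Finset.Ico 1 1 := by simp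
  rw [h0]
  apply pack_pref1 m P 1 _ le_rfl (by omega) hP
  refine Park.cons _ _ _ _ (1 + P.sum)
    (parksAt_w_blocked hyc hw1 (by omega) (by omega)) ?_
  have hocc : Finset.Ico 1 (1 + P.sum) ∪ Finset.Ico (1 + P.sum) (1 + P.sum + yc)
      = Finset.Ico 1 (1 + P.sum + yc) :=
    Finset.Ico_union_Ico_eq_Ico (by omega) (by omega)
  rw [hocc]
  have := pack_pref1 m Q (1 + P.sum + yc) [] (by omega) (by omega) hQ
    (by rw [show 1 + P.sum + yc + Q.sum = m + 1 by omega]; exact Park.nil _)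
  simpa using this

lemma zip_replicate_map (w : ℕ) : ∀ (L : List ℕ), (List.replicate L.length w).zip L
    = L.map (fun ℓ => (w, ℓ)) := by
  intro L
  induction L with
  | nil => rfl
  | cons a T ih => simp [List.replicate_succ, ih]

lemma zip_split (w : ℕ) (i j : ℕ) (P Q : List ℕ) (yc : ℕ)
    (hi : P.length = i) (hj : Q.length = j) :
    (List.replicate i 1 ++ w :: List.replicate j 1).zip (P ++ yc :: Q)
      = P.map (fun ℓ => (1, ℓ)) ++ (w, yc) :: Q.map (fun ℓ => (1, ℓ)) := by
  subst hi hj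
  rw [List.zip_append (by simp)]
  simp [zip_replicate_map, List.zip_cons_cons]

lemma perm_char {w : ℕ} (hw : w ≠ 1) {k : ℕ} {l : List ℕ}
    (h : l.Perm (w :: List.replicate k 1)) :
    ∃ i j, i + j = k ∧ l = List.replicate i 1 ++ w :: List.replicate j 1 := by
  have hmem : w ∈ l := h.mem_iff.2 (by simp)
  obtain ⟨A, B, rfl⟩ := List.append_of_mem hmem
  have hperm : (A ++ B).Perm (List.replicate k 1) := by
    have h1 : (A ++ w :: B).Perm (w :: (A ++ B)) := List.perm_middle
    exact (h1.symm.trans h).cons_inv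
  have hAB : A ++ B = List.replicate k 1 := by
    refine List.eq_replicate_iff.2 ⟨by simpa using hperm.length_eq, ?_⟩
    intro b hb
    have : b ∈ List.replicate k 1 := hperm.subset hb
    exact List.eq_of_mem_replicate this
  refine ⟨A.length, B.length, by simpa using congrArg List.length hAB, ?_⟩
  have hA : A = List.replicate A.length 1 := by
    refine List.eq_replicate_iff.2 ⟨rfl, fun b hb => ?_⟩
    exact List.eq_of_mem_replicate (hAB ▸ List.mem_append_left B hb : b ∈ List.replicate k 1)
  have hB : B = List.replicate B.length 1 := by
    refine List.eq_replicate_iff.2 ⟨rfl, fun b hb => ?_⟩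
    exact List.eq_of_mem_replicate (hAB ▸ List.mem_append_right A hb : b ∈ List.replicate k 1)
  rw [← hA, ← hB]

lemma exists_min : ∀ (t : List ℕ), t ≠ [] → ∃ μ ∈ t, ∀ ℓ ∈ t, μ ≤ ℓ := by
  intro t
  induction t with
  | nil => intro h; exact absurd rfl h
  | cons a T ih =>
    intro _
    rcases eq_or_ne T [] with rfl | hT
    · exact ⟨a, by simp⟩
    · obtain ⟨μ, hμm, hμ⟩ := ih hT
      rcases le_total a μ with h | h
      · refine ⟨a, by simp, fun ℓ hℓ => ?_⟩
        cases hℓ with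
        | head => exact le_rfl
        | tail _ hℓ => exact le_trans h (hμ _ hℓ)
      · refine ⟨μ, by simp [hμm], fun ℓ hℓ => ?_⟩
        cases hℓ with
        | head => exact h
        | tail _ hℓ => exact hμ _ hℓ

lemma split_spec (y : List ℕ) (i : ℕ) (h : i < y.length) :
    ∃ yc Q, y = y.take i ++ yc :: Q ∧ Q.length = y.length - i - 1 := by
  have hd : y.drop i ≠ [] := by
    intro hnil
    have := List.length_drop (i := i) (l := y)
    rw [hnil] at this
    simp at this
    omega
  obtain ⟨yc, Q, hQ⟩ := List.exists_cons_of_ne_nil hd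
  refine ⟨yc, Q, ?_, ?_⟩
  · rw [← hQ, List.take_append_drop]
  · have := List.length_drop (i := i) (l := y)
    rw [hQ] at this
    simp at this
    omega

lemma sum_split (P Q : List ℕ) (yc : ℕ) : (P ++ yc :: Q).sum = P.sum + yc + Q.sum := by
  simp [List.sum_append]; omega

lemma PA_parts (y x' : List ℕ) (w i j : ℕ)
    (hx' : x' = List.replicate i 1 ++ w :: List.replicate j 1)
    (hij : i + j + 1 = y.length) (hw1 : 1 ≤ w) (hwm : w ≤ y.sum) (h1m : 1 ≤ y.sum)
    (hpark : Park y.sum ∅ (x'.zip y)) : PA y x' := by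
  refine ⟨by simp [hx']; omega, ?_, hpark⟩
  intro v hv
  rw [hx'] at hv
  simp only [List.mem_append, List.mem_cons, List.mem_replicate] at hv
  rcases hv with ⟨_, rfl⟩ | rfl | ⟨_, rfl⟩ <;> omega

lemma park_blocked_perm (y : List ℕ) (w i j : ℕ) (hij : i + j + 1 = y.length)
    (hpos : ∀ v ∈ y, 0 < v) (hw1 : 1 ≤ w) (hblocked : w ≤ (y.take i).sum + 1) :
    Park y.sum ∅ ((List.replicate i 1 ++ w :: List.replicate j 1).zip y) := by
  obtain ⟨yc, Q, hy, hQ⟩ := split_spec y i (by omega)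
  have hP : (y.take i).length = i := by rw [List.length_take]; omega
  have hzip : (List.replicate i 1 ++ w :: List.replicate j 1).zip y
      = (y.take i).map (fun ℓ => (1, ℓ)) ++ (w, yc) :: Q.map (fun ℓ => (1, ℓ)) := by
    conv_lhs => rw [hy]
    exact zip_split w i j _ Q yc hP (by omega)
  rw [hzip]
  have hsum : y.sum = (y.take i).sum + yc + Q.sum := by conv_lhs => rw [hy, sum_split]
  refine park_blocked y.sum (y.take i) Q yc w ?_ hw1 hblocked hsum ?_ ?_
  · exact hpos yc (by rw [hy]; simp)
  · intro ℓ hℓ; exact hpos ℓ (List.take_subset i y hℓ)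
  · intro ℓ hℓ; exact hpos ℓ (by rw [hy]; simp [hℓ])

lemma PAinv_A (y₁ : ℕ) (t : List ℕ) (μ : ℕ) (hpos : ∀ v ∈ y₁ :: t, 0 < v)
    (hμt : μ ∈ t) (hμmin : ∀ ℓ ∈ t, μ ≤ ℓ) (hμy : μ ≤ y₁) :
    PAinv (y₁ :: t) ((μ + 1) :: List.replicate t.length 1) := by
  have hμ1 : 1 ≤ μ := hpos μ (by simp [hμt])
  have hy₁ : 1 ≤ y₁ := hpos y₁ (by simp)
  have hμsum : μ ≤ t.sum := List.single_le_sum (fun x _ => Nat.zero_le x) μ hμt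
  intro x' hp
  obtain ⟨i, j, hij, hx'⟩ := perm_char (by omega) hp.symm
  have hlen : i + j + 1 = (y₁ :: t).length := by simp; omega
  have hsum : (y₁ :: t).sum = y₁ + t.sum := by simp
  refine PA_parts _ _ (μ + 1) i j hx' hlen (by omega) (by omega) (by omega) ?_
  rw [hx']
  rcases Nat.eq_zero_or_pos i with rfl | hi
  · -- w-car first
    have hj : j = t.length := by omega
    subst hj
    simp only [List.replicate, List.nil_append]
    rw [List.zip_cons_cons, zip_replicate_map]
    refine Park.cons _ _ _ _ (μ + 1) ?_ ?_
    · rw [show (∅ : Finset ℕ) = Finset.Ico 1 1 by simp]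
      exact parksAt_w_free (by omega) (by omega)
    · rw [show (∅ : Finset ℕ) ∪ Finset.Ico (μ + 1) (μ + 1 + y₁)
          = Finset.Ico 1 1 ∪ Finset.Ico (1 + μ) (μ + 1 + y₁) by
        rw [Finset.Ico_self]; rw [show 1 + μ = μ + 1 by omega]]
      exact park_minGap _ μ hμ1 t 1 (μ + 1 + y₁) le_rfl (by omega) (by omega) hμmin hμt
  · -- w-car blocked behind prefix containing y₁
    apply park_blocked_perm _ _ _ _ hlen hpos (by omega)
    have h1 : y₁ ∈ (y₁ :: t).take i := by
      rcases Nat.exists_eq_add_of_lt hi with ⟨i', rfl⟩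
      simp [List.take_cons]
    have := List.single_le_sum (fun (x : ℕ) _ => Nat.zero_le x) y₁ h1
    omega

lemma PAinv_B (y₁ y₂ : ℕ) (ys : List ℕ) (hpos : ∀ v ∈ y₁ :: y₂ :: ys, 0 < v)
    (heq : y₂ = y₁ + ys.sum) :
    PAinv (y₁ :: y₂ :: ys) ((y₂ + 1) :: List.replicate (ys.length + 1) 1) := by
  have hy₁ : 1 ≤ y₁ := hpos y₁ (by simp)
  have hy₂ : 1 ≤ y₂ := hpos y₂ (by simp)
  have hyspos : ∀ ℓ ∈ ys, 1 ≤ ℓ := fun ℓ hℓ => hpos ℓ (by simp [hℓ])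
  intro x' hp
  obtain ⟨i, j, hij, hx'⟩ := perm_char (by omega) hp.symm
  have hlen : i + j + 1 = (y₁ :: y₂ :: ys).length := by simp; omega
  have hsum : (y₁ :: y₂ :: ys).sum = y₁ + y₂ + ys.sum := by simp; omega
  refine PA_parts _ _ (y₂ + 1) i j hx' hlen (by omega) (by omega) (by omega) ?_
  rw [hx']
  match i, hij with
  | 0, hij =>
    have hj : j = ys.length + 1 := by omega
    subst hj
    simp only [List.replicate, List.nil_append]
    rw [List.zip_cons_cons, List.zip_cons_cons, zip_replicate_map]
    refine Park.cons _ _ _ _ (y₂ + 1) ?_ ?_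
    · rw [show (∅ : Finset ℕ) = Finset.Ico 1 1 by simp]
      exact parksAt_w_free (by omega) (by omega)
    · refine Park.cons _ _ _ _ 1 ?_ ?_
      · rw [show (∅ : Finset ℕ) ∪ Finset.Ico (y₂ + 1) (y₂ + 1 + y₁)
            = Finset.Ico 1 1 ∪ Finset.Ico (1 + y₂) (y₂ + 1 + y₁) by
          rw [Finset.Ico_self, show 1 + y₂ = y₂ + 1 by omega]]
        exact parksAt_left hy₂ le_rfl (by omega) (by omega) (by omega)
      · rw [show (∅ ∪ Finset.Ico (y₂ + 1) (y₂ + 1 + y₁)) ∪ Finset.Ico 1 (1 + y₂)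
            = Finset.Ico 1 (y₂ + 1 + y₁) by
          rw [Finset.empty_union, Finset.union_comm,
            show y₂ + 1 = 1 + y₂ by omega,
            Finset.Ico_union_Ico_eq_Ico (by omega) (by omega)]]
        have := pack_pref1 (y₁ :: y₂ :: ys).sum ys (y₂ + 1 + y₁) [] (by omega)
          (by omega) hyspos
          (by rw [show y₂ + 1 + y₁ + ys.sum = (y₁ :: y₂ :: ys).sum + 1 by omega]
              exact Park.nil _)
        simpa using this
  | 1, hij =>
    have hj : j = ys.length := by omega
    subst hj
    simp only [List.replicate, List.nil_append, List.cons_append]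
    rw [List.zip_cons_cons, List.zip_cons_cons, zip_replicate_map]
    refine Park.cons _ _ _ _ 1 ?_ ?_
    · rw [show (∅ : Finset ℕ) = Finset.Ico 1 1 by simp]
      exact parksAt_prefix hy₁ le_rfl (by omega)
    · rw [show (∅ : Finset ℕ) ∪ Finset.Ico 1 (1 + y₁) = Finset.Ico 1 (1 + y₁) by
        rw [Finset.empty_union]]
      rcases le_or_gt y₂ y₁ with hcmp | hcmp
      · refine Park.cons _ _ _ _ (1 + y₁) (parksAt_w_blocked hy₂ (by omega) (by omega)
          (by omega)) ?_
        rw [Finset.Ico_union_Ico_eq_Ico (by omega) (by omega)]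
        have := pack_pref1 (y₁ :: y₂ :: ys).sum ys (1 + y₁ + y₂) [] (by omega)
          (by omega) hyspos
          (by rw [show 1 + y₁ + y₂ + ys.sum = (y₁ :: y₂ :: ys).sum + 1 by omega]
              exact Park.nil _)
        simpa using this
      · refine Park.cons _ _ _ _ (y₂ + 1) (parksAt_w_free (by omega) (by omega)) ?_
        exact park_exactFill _ ys (1 + y₁) (y₂ + 1) (y₂ + 1 + y₂) (by omega) (by omega)
          (by omega) (by omega) hyspos
  | (i'' + 2), hij =>
    apply park_blocked_perm _ _ _ _ hlen hpos (by omega)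
    have h2 : y₂ ∈ (y₁ :: y₂ :: ys).take (i'' + 2) := by simp [List.take_cons]
    have := List.single_le_sum (fun (x : ℕ) _ => Nat.zero_le x) y₂ h2
    omega

lemma getD_mem_of_lt (l : List ℕ) (k : ℕ) (h : k < l.length) : l.getD k 0 ∈ l := by
  rw [List.getD_eq_getElem l 0 h]
  exact List.getElem_mem h

/-- If `y` is minimally invariant then `y₁ < min(y₂,…,yₙ)` and
`y₂ ≠ Σ_{j ≠ 2} y_j`. -/
theorem stmt0 (n : ℕ) (hn : 2 ≤ n) (y : List ℕ) (hylen : y.length = n)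
    (hypos : ∀ v ∈ y, 0 < v)
    (hminimal : {x : List ℕ | PAinv y x} = {List.replicate n 1}) :
    (∀ j, 1 ≤ j → j < n → y.getD 0 0 < y.getD j 0) ∧
      y.getD 1 0 ≠ (y.eraseIdx 1).sum := by
  have key : ∀ x, PAinv y x → x = List.replicate n 1 := by
    intro x hx
    have := Set.ext_iff.1 hminimal x
    simp only [Set.mem_setOf_eq, Set.mem_singleton_iff] at this
    exact this.1 hx
  obtain ⟨y₁, y₂, ys, rfl⟩ : ∃ a b l, y = a :: b :: l := by
    match y, hylen with
    | a :: b :: l, _ => exact ⟨a, b, l, rfl⟩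
    | [], h => simp at h; omega
    | [a], h => simp at h; omega
  have hlens : ys.length + 2 = n := by simpa using hylen
  constructor
  · intro j hj1 hjn
    by_contra hle
    push_neg at hle
    obtain ⟨μ, hμt, hμmin⟩ := exists_min (y₂ :: ys) (by simp)
    have hμpos : 0 < μ := hypos μ (by simp [hμt])
    have hjmem : (y₁ :: y₂ :: ys).getD j 0 ∈ y₂ :: ys := by
      obtain ⟨k, rfl⟩ := Nat.exists_eq_add_of_le hj1
      rw [show 1 + k = k + 1 by omega, List.getD_cons_succ]
      exact getD_mem_of_lt _ k (by simp; omega)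
    have hμy : μ ≤ y₁ := le_trans (hμmin _ hjmem) hle
    have hinv := PAinv_A y₁ (y₂ :: ys) μ hypos hμt hμmin hμy
    have := key _ hinv
    have h2 := congrArg (fun l => l.getD 0 0) this
    rw [show List.replicate n 1 = 1 :: List.replicate (n-1) 1 by
      rw [← List.replicate_succ]; congr 1; omega] at h2
    simp at h2
    omega
  · intro heq
    have heq' : y₂ = y₁ + ys.sum := by simpa using heq
    have hinv := PAinv_B y₁ y₂ ys hypos heq'
    have := key _ hinv
    have h2 := congrArg (fun l => l.getD 0 0) this
    have h3 : 0 < y₂ := hypos y₂ (by simp)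
    rw [show List.replicate n 1 = 1 :: List.replicate (n-1) 1 by
      rw [← List.replicate_succ]; congr 1; omega] at h2
    simp at h2
    omega
end

section
/- Let y = (y_1, y_2, ..., y_n) be a vector of n positive integer car lengths with n ≥ 2. The characteristic χ(y) equals n−1 if and only if y_1 ≥ y_2 and y_2 = y_3 = ... = y_n. -/
/-- key coverage lemma -/
lemma park_cover {m : ℕ} :
    ∀ (l : List (ℕ × ℕ)) (occ : Finset ℕ), Park m occ l →
    occ ⊆ Finset.Ico 1 (m+1) →
    (∀ pr ∈ l, 1 ≤ pr.1) →
    occ.card + (l.map Prod.snd).sum = m →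
    ∀ t, 1 ≤ t → t ≤ m →
    t ∈ occ ∨ ∃ l₁ pr l₂, l = l₁ ++ pr :: l₂ ∧ ∃ occ' s, occ ⊆ occ' ∧
      ParksAt occ' m pr.1 pr.2 s ∧ s ≤ t ∧ t < s + pr.2 ∧
      (∀ u ∈ occ', u ∈ occ ∨ ∃ pr' ∈ l₁, ∃ s', pr'.1 ≤ s' ∧ s' ≤ u ∧ u < s' + pr'.2) := by
  intro l
  induction l with
  | nil =>
    intro occ h hsub hp hsum t ht1 htm
    left
    have : occ = Finset.Ico 1 (m+1) := by
      apply Finset.eq_of_subset_of_card_le hsub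
      simp only [Nat.card_Ico] at *
      simp at hsum; omega
    rw [this]; simp [Finset.mem_Ico]; omega
  | cons pr rest ih =>
    intro occ h hsub hp hsum t ht1 htm
    obtain ⟨p, ℓ⟩ := pr
    cases h with
    | cons _ _ _ _ s hps hrest =>
      by_cases hcov : s ≤ t ∧ t < s + ℓ
      · right
        exact ⟨[], (p, ℓ), rest, rfl, occ, s, le_refl _, hps, hcov.1, hcov.2,
          fun u hu => Or.inl hu⟩
      · have hdisj : Disjoint occ (Finset.Ico s (s+ℓ)) := by
          rw [Finset.disjoint_right]
          intro a ha; exact hps.1.2.2 a ha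
        have hple : 1 ≤ p := hp (p,ℓ) (List.mem_cons_self)
        have hsub2 : occ ∪ Finset.Ico s (s+ℓ) ⊆ Finset.Ico 1 (m+1) := by
          apply Finset.union_subset hsub
          intro a ha
          rw [Finset.mem_Ico] at ha ⊢
          have h1 := hps.1.1
          have h2 := hps.1.2.1
          omega
        have hcard : (occ ∪ Finset.Ico s (s+ℓ)).card = occ.card + ℓ := by
          rw [Finset.card_union_of_disjoint hdisj, Nat.card_Ico]
          omega
        have hsum2 : (occ ∪ Finset.Ico s (s+ℓ)).card + (rest.map Prod.snd).sum = m := by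
          rw [hcard]; simp at hsum; omega
        have := ih (occ ∪ Finset.Ico s (s+ℓ)) hrest hsub2
          (fun q hq => hp q (List.mem_cons_of_mem _ hq)) hsum2 t ht1 htm
        rcases this with hin | ⟨l₁, q, l₂, hdec, occ', s', hss, hpk, hst, hts, hocc'⟩
        · rw [Finset.mem_union] at hin
          rcases hin with h1 | h2
          · exact Or.inl h1
          · rw [Finset.mem_Ico] at h2; exact absurd ⟨h2.1, h2.2⟩ hcov
        · right
          refine ⟨(p,ℓ) :: l₁, q, l₂, by rw [hdec]; rfl, occ', s',
            le_trans (Finset.subset_union_left) hss, hpk, hst, hts, ?_⟩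
          intro u hu
          rcases hocc' u hu with hin | ⟨q', hq', s'', hw⟩
          · rw [Finset.mem_union] at hin
            rcases hin with h1 | h2
            · exact Or.inl h1
            · rw [Finset.mem_Ico] at h2
              exact Or.inr ⟨(p,ℓ), List.mem_cons_self, s, hps.1.1, h2.1, h2.2⟩
          · exact Or.inr ⟨q', List.mem_cons_of_mem _ hq', s'', hw⟩

/-- greedy parking from a full initial segment -/
lemma park_greedy {m : ℕ} :
    ∀ (l : List (ℕ × ℕ)) (c : ℕ),
    (∀ pr ∈ l, 1 ≤ pr.1 ∧ pr.1 ≤ c + 1 ∧ 1 ≤ pr.2) →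
    c + (l.map Prod.snd).sum ≤ m →
    Park m (Finset.Ico 1 (c+1)) l := by
  intro l
  induction l with
  | nil => intro c _ _; exact Park.nil _
  | cons pr rest ih =>
    intro c hpr hsum
    obtain ⟨p, ℓ⟩ := pr
    obtain ⟨hp1, hpc, hl1⟩ := hpr (p,ℓ) (List.mem_cons_self)
    simp only [List.map_cons, List.sum_cons] at hsum
    apply Park.cons _ _ _ _ (c+1)
    · constructor
      · refine ⟨hpc, by omega, ?_⟩
        intro u hu
        rw [Finset.mem_Ico] at hu ⊢
        omega
      · intro s' hs' hfit
        obtain ⟨h1, h2, h3⟩ := hfit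
        by_cases hc : s' < p
        · omega
        · exact h3 s' (by rw [Finset.mem_Ico]; omega) (by rw [Finset.mem_Ico]; omega)
    · rw [Finset.Ico_union_Ico_eq_Ico (by omega) (by omega)]
      have : c + 1 + ℓ = (c + ℓ) + 1 := by omega
      rw [this]
      apply ih
      · intro q hq
        obtain ⟨a, b, d⟩ := hpr q (List.mem_cons_of_mem _ hq)
        exact ⟨a, by omega, d⟩
      · omega

/-- splitting a list at the unique element violating `P` -/
lemma split_unique {α : Type*} {P : α → Prop} :
    ∀ (front : List α) {back l₁ l₂ : List α} {a b : α},
    front ++ a :: back = l₁ ++ b :: l₂ →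
    (∀ x ∈ front, P x) → (∀ x ∈ back, P x) → ¬ P a → ¬ P b →
    l₁ = front ∧ b = a ∧ l₂ = back := by
  intro front
  induction front with
  | nil =>
    intro back l₁ l₂ a b h _ hback ha hb
    cases l₁ with
    | nil =>
      simp only [List.nil_append, List.cons.injEq] at h
      exact ⟨rfl, h.1.symm, h.2.symm⟩
    | cons c l₁' =>
      simp at h
      exfalso
      exact hb (hback b (by rw [h.2]; exact List.mem_append_right _ (List.mem_cons_self)))
  | cons x front' ih =>
    intro back l₁ l₂ a b h hfront hback ha hb
    cases l₁ with
    | nil =>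
      simp at h
      exact absurd (h.1 ▸ hfront x (List.mem_cons_self)) hb
    | cons c l₁' =>
      simp at h
      obtain ⟨h1, h2, h3⟩ := ih h.2 (fun u hu => hfront u (List.mem_cons_of_mem _ hu)) hback ha hb
      exact ⟨by rw [h.1, h1], h2, h3⟩

lemma first_park_empty {m p ℓ s : ℕ} (h : ParksAt ∅ m p ℓ s) : s = p := by
  obtain ⟨⟨h1, h2, _⟩, hmin⟩ := h
  by_contra hne
  have hlt : p < s := by omega
  exact hmin p hlt ⟨le_refl _, by omega, by simp⟩

lemma park_greedy' {m b : ℕ} (hb : 1 ≤ b) :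
    ∀ (j : ℕ) (c q : ℕ), b ≤ c →
    c + (j + 1 + q) * b ≤ m + b →
    Park m (Finset.Ico (b+1) (c+1))
      (List.replicate j (b+1, b) ++ (1, b) :: List.replicate q (b+1, b)) := by
  intro j
  induction j with
  | zero =>
    intro c q hbc hsum
    have hkey : (0 + 1 + q) * b = b + q * b := by ring
    rw [hkey] at hsum
    simp only [List.replicate_zero, List.nil_append]
    apply Park.cons _ _ _ _ 1
    · constructor
      · refine ⟨le_refl _, by omega, ?_⟩
        intro u hu
        rw [Finset.mem_Ico] at hu ⊢
        omega
      · intro s' hs' hfit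
        have := hfit.1
        omega
    · have e1 : (1 : ℕ) + b = b + 1 := by omega
      rw [Finset.union_comm, e1, Finset.Ico_union_Ico_eq_Ico (by omega) (by omega)]
      apply park_greedy
      · intro pr hpr
        have := List.eq_of_mem_replicate hpr
        rw [this]
        exact ⟨by omega, by omega, hb⟩
      · rw [List.map_replicate, List.sum_replicate, smul_eq_mul]
        have e2 : ((b+1, b) : ℕ × ℕ).2 = b := rfl
        rw [e2]
        omega
  | succ j ih =>
    intro c q hbc hsum
    have hkey : (j + 1 + 1 + q) * b = b + (j + 1 + q) * b := by ring
    rw [hkey] at hsum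
    have hb2 : b ≤ (j + 1 + q) * b := Nat.le_mul_of_pos_left b (by omega)
    simp only [List.replicate_succ, List.cons_append]
    apply Park.cons _ _ _ _ (c+1)
    · constructor
      · refine ⟨by omega, by omega, ?_⟩
        intro u hu
        rw [Finset.mem_Ico] at hu ⊢
        omega
      · intro s' hs' hfit
        obtain ⟨h1, h2, h3⟩ := hfit
        exact h3 s' (by rw [Finset.mem_Ico]; omega) (by rw [Finset.mem_Ico]; omega)
    · rw [Finset.Ico_union_Ico_eq_Ico (by omega) (by omega)]
      have e2 : c + 1 + b = (c + b) + 1 := by omega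
      rw [e2]
      exact ih (c+b) q (by omega) (by omega)

/-- no invariant assortment avoids preference 1 -/
lemma no_all_big {m : ℕ} {l : List (ℕ × ℕ)} (h : Park m ∅ l)
    (hp : ∀ pr ∈ l, 2 ≤ pr.1) (hsum : (l.map Prod.snd).sum = m) (hm : 1 ≤ m) :
    False := by
  have := park_cover l ∅ h (by simp) (fun pr hpr => by have := hp pr hpr; omega)
    (by simpa using hsum) 1 (le_refl _) hm
  rcases this with h1 | ⟨l₁, pr, l₂, hdec, occ', s, _, hpk, hst, _, _⟩
  · simp at h1
  · have h2 : 2 ≤ pr.1 := hp pr (by rw [hdec]; exact List.mem_append_right _ (List.mem_cons_self))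
    have := hpk.1.1
    omega

/-- S1 : with a big-pref car first and the 1-pref car last, first pref exceeds last length -/
lemma scenario1 {m w y1 yl : ℕ} {mid : List (ℕ × ℕ)}
    (h : Park m ∅ ((w, y1) :: (mid ++ [(1, yl)])))
    (hw : 2 ≤ w) (hmid : ∀ pr ∈ mid, 2 ≤ pr.1)
    (hsum : y1 + ((mid.map Prod.snd).sum + yl) = m)
    (hy1 : 1 ≤ y1) (hyl : 1 ≤ yl) :
    yl + 1 ≤ w := by
  cases h with
  | cons _ _ _ _ s hps hrest =>
    have hs : s = w := by
      obtain ⟨⟨h1, h2, _⟩, hmin⟩ := hps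
      by_contra hne
      exact hmin w (by omega) ⟨le_refl _, by omega, by simp⟩
    subst hs
    rw [Finset.empty_union] at hrest
    have hbd := hps.1.2.1
    have hcov := park_cover _ _ hrest
      (by intro u hu; rw [Finset.mem_Ico] at hu ⊢; omega)
      (by intro pr hpr
          rcases List.mem_append.1 hpr with h1 | h2
          · have := hmid pr h1; omega
          · rw [List.mem_singleton] at h2; rw [h2])
      (by simp [Nat.card_Ico]; omega)
      1 (le_refl _) (by omega)
    rcases hcov with h1 | ⟨l₁, pr, l₂, hdec, occ', s', hss, hpk, hst, hts, _⟩
    · rw [Finset.mem_Ico] at h1; omega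
    · have hprmem : pr ∈ mid ++ [(1, yl)] := by
        rw [hdec]; exact List.mem_append_right _ (List.mem_cons_self)
      have hprle : pr.1 ≤ 1 := le_trans hpk.1.1 hst
      have hpryl : pr = (1, yl) := by
        rcases List.mem_append.1 hprmem with h1 | h2
        · have := hmid pr h1; omega
        · exact List.mem_singleton.1 h2
      have hpa : pr.1 = 1 := by rw [hpryl]
      have hpb : pr.2 = yl := by rw [hpryl]
      -- the 1-car parks at s' ≤ 1 covering [1, 1+yl); disjoint from occ ∋ w
      by_contra hcon
      have hwin : s ∈ occ' := hss (by rw [Finset.mem_Ico]; omega)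
      have hs'ge : 1 ≤ s' := hpa ▸ hpk.1.1
      exact hpk.1.2.2 s (by rw [Finset.mem_Ico, hpb]; omega) hwin

lemma scenario3 {m c y1 ℓ : ℕ} {mid back : List (ℕ × ℕ)}
    (h : Park m ∅ ((c+1, y1) :: (mid ++ (1, ℓ) :: back)))
    (hmid : ∀ pr ∈ mid, c+1 ≤ pr.1) (hback : ∀ pr ∈ back, c+1 ≤ pr.1)
    (hsum : y1 + (((mid ++ (1, ℓ) :: back).map Prod.snd).sum) = m)
    (hy1 : 1 ≤ y1) (hc : 1 ≤ c) :
    ℓ ≤ c := by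
  cases h with
  | cons _ _ _ _ s hps hrest =>
    have hs : s = c+1 := first_park_empty hps
    subst hs
    rw [Finset.empty_union] at hrest
    have hbd := hps.1.2.1
    have hcov := park_cover _ _ hrest
      (by intro u hu; rw [Finset.mem_Ico] at hu ⊢; omega)
      (by intro pr hpr
          rcases List.mem_append.1 hpr with h1 | h2
          · have := hmid pr h1; omega
          · rcases List.mem_cons.1 h2 with h3 | h4
            · rw [h3]
            · have := hback pr h4; omega)
      (by simp [Nat.card_Ico] at hsum ⊢; omega)
      1 (le_refl _) (by omega)
    rcases hcov with h1 | ⟨l₁, pr, l₂, hdec, occ', s', hss, hpk, hst, hts, _⟩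
    · rw [Finset.mem_Ico] at h1; omega
    · have hprmem : pr ∈ mid ++ (1, ℓ) :: back := by
        rw [hdec]; exact List.mem_append_right _ (List.mem_cons_self)
      have hprle : pr.1 ≤ 1 := le_trans hpk.1.1 hst
      have hpryl : pr = (1, ℓ) := by
        rcases List.mem_append.1 hprmem with h1 | h2
        · have := hmid pr h1; omega
        · rcases List.mem_cons.1 h2 with h3 | h4
          · exact h3
          · have := hback pr h4; omega
      have hpa : pr.1 = 1 := by rw [hpryl]
      have hpb : pr.2 = ℓ := by rw [hpryl]
      by_contra hcon
      have hwin : c+1 ∈ occ' := hss (by rw [Finset.mem_Ico]; omega)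
      have hs'ge : 1 ≤ s' := hpa ▸ hpk.1.1
      exact hpk.1.2.2 (c+1) (by rw [Finset.mem_Ico, hpb]; omega) hwin

lemma scenario4 {m c ℓ : ℕ} {front back : List (ℕ × ℕ)}
    (h : Park m ∅ (front ++ (1, ℓ) :: back))
    (hf : ∀ pr ∈ front, c+1 ≤ pr.1) (hb : ∀ pr ∈ back, c+1 ≤ pr.1)
    (hsum : ((front ++ (1, ℓ) :: back).map Prod.snd).sum = m)
    (hl : 1 ≤ ℓ) (hc : 1 ≤ c) (hcm : c ≤ m) :
    c ≤ ℓ := by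
  by_contra hcon
  have hcov := park_cover _ _ h (by simp)
    (by intro pr hpr
        rcases List.mem_append.1 hpr with h1 | h2
        · have := hf pr h1; omega
        · rcases List.mem_cons.1 h2 with h3 | h4
          · rw [h3]
          · have := hb pr h4; omega)
    (by simpa using hsum)
    (ℓ+1) (by omega) (by omega)
  rcases hcov with h1 | ⟨l₁, pr, l₂, hdec, occ', s, hss, hpk, hst, hts, hocc'⟩
  · simp at h1
  · have hnP : ¬ (c+1 ≤ pr.1) := by
      intro hP
      have := hpk.1.1
      omega
    obtain ⟨hl₁, hpreq, hl₂⟩ := split_unique front hdec hf hb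
      (by simp; omega) hnP
    have hpa : pr.1 = 1 := by rw [hpreq]
    have hpb : pr.2 = ℓ := by rw [hpreq]
    have hs2 : 2 ≤ s := by omega
    have hnfit := hpk.2 1 (by omega)
    rw [hpa, hpb] at hnfit
    have hexu : ¬ (∀ u ∈ Finset.Ico 1 (1 + ℓ), u ∉ occ') := by
      intro hdis
      exact hnfit ⟨le_refl _, by omega, hdis⟩
    push_neg at hexu
    obtain ⟨u, hu, huocc⟩ := hexu
    rw [Finset.mem_Ico] at hu
    rcases hocc' u huocc with h0 | ⟨pr', hpr', s'', h1, h2, h3⟩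
    · simp at h0
    · rw [hl₁] at hpr'
      have := hf pr' hpr'
      omega

lemma scenario2 {m ℓ : ℕ} {ws : List (ℕ × ℕ)}
    (h : Park m ∅ (ws ++ [(1, ℓ)]))
    (hws : ∀ pr ∈ ws, ℓ+1 ≤ pr.1)
    (hsum : ((ws ++ [(1, ℓ)]).map Prod.snd).sum = m)
    (hl : 1 ≤ ℓ) (hm : ℓ+1 ≤ m) :
    ∃ pr ∈ ws, pr.1 = ℓ+1 := by
  have hcov := park_cover _ _ h (by simp)
    (by intro pr hpr
        rcases List.mem_append.1 hpr with h1 | h2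
        · have := hws pr h1; omega
        · rw [List.mem_singleton] at h2; rw [h2])
    (by simpa using hsum)
    (ℓ+1) (by omega) hm
  rcases hcov with h1 | ⟨l₁, pr, l₂, hdec, occ', s, hss, hpk, hst, hts, hocc'⟩
  · simp at h1
  · by_cases hP : ℓ+1 ≤ pr.1
    · have hpreq : pr.1 = ℓ+1 := by have := hpk.1.1; omega
      have hprmem : pr ∈ ws ++ [(1, ℓ)] := by
        rw [hdec]; exact List.mem_append_right _ (List.mem_cons_self)
      rcases List.mem_append.1 hprmem with h1 | h2
      · exact ⟨pr, h1, hpreq⟩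
      · rw [List.mem_singleton] at h2
        rw [h2] at hpreq
        simp at hpreq
        omega
    · exfalso
      obtain ⟨hl₁, hpreq, hl₂⟩ := split_unique ws hdec hws (by simp) (by simp; omega) hP
      have hpa : pr.1 = 1 := by rw [hpreq]
      have hpb : pr.2 = ℓ := by rw [hpreq]
      have hs2 : 2 ≤ s := by omega
      have hnfit := hpk.2 1 (by omega)
      rw [hpa, hpb] at hnfit
      apply hnfit
      refine ⟨le_refl _, by omega, ?_⟩
      intro u hu huocc
      rw [Finset.mem_Ico] at hu
      rcases hocc' u huocc with h0 | ⟨pr', hpr', s'', h1, h2, h3⟩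
      · simp at h0
      · rw [hl₁] at hpr'
        have := hws pr' hpr'
        omega

lemma zip_rep {α β : Type*} (a : α) (c : β) (k : ℕ) :
    (List.replicate k a).zip (List.replicate k c) = List.replicate k (a, c) := by
  rw [List.zip_replicate, min_self]

lemma construct0 {m y₀ b k : ℕ} (hb : 1 ≤ b) (hby : b ≤ y₀) (hm : y₀ + k * b = m) :
    Park m ∅ ((1, y₀) :: List.replicate k (b+1, b)) := by
  have hkb : k * b ≥ 0 := Nat.zero_le _
  apply Park.cons _ _ _ _ 1
  · constructor
    · exact ⟨le_refl _, by omega, by simp⟩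
    · intro s' hs' hfit; have := hfit.1; omega
  · rw [Finset.empty_union]
    have e : 1 + y₀ = y₀ + 1 := by omega
    rw [e]
    apply park_greedy
    · intro pr hpr
      have := List.eq_of_mem_replicate hpr
      rw [this]
      exact ⟨by omega, by omega, hb⟩
    · rw [List.map_replicate, List.sum_replicate, smul_eq_mul]
      have e2 : ((b+1, b) : ℕ × ℕ).2 = b := rfl
      rw [e2]; omega

lemma construct1 {m y₀ b p q : ℕ} (hb : 1 ≤ b) (hy₀ : 1 ≤ y₀) (hm : y₀ + (p+1+q) * b = m) :
    Park m ∅ ((b+1, y₀) :: (List.replicate p (b+1, b) ++ (1, b) :: List.replicate q (b+1, b))) := by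
  have hble : b ≤ (p+1+q) * b := Nat.le_mul_of_pos_left b (by omega)
  apply Park.cons _ _ _ _ (b+1)
  · constructor
    · exact ⟨le_refl _, by omega, by simp⟩
    · intro s' hs' hfit; have := hfit.1; omega
  · rw [Finset.empty_union]
    have e : b + 1 + y₀ = (b + y₀) + 1 := by omega
    rw [e]
    exact park_greedy' hb p (b + y₀) q (by omega) (by omega)

/-- canonical form of a list with a unique 1 among copies of c -/
lemma one_rep_form {c : ℕ} (hc : c ≠ 1) :
    ∀ (x : List ℕ), (∀ v ∈ x, v = 1 ∨ v = c) → x.count 1 = 1 →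
    ∃ p q, x = List.replicate p c ++ 1 :: List.replicate q c := by
  intro x
  induction x with
  | nil => intro _ h; simp at h
  | cons v t ih =>
    intro hall hcount
    rcases hall v (List.mem_cons_self) with hv | hv
    · subst hv
      rw [List.count_cons_self] at hcount
      have ht0 : t.count 1 = 0 := by omega
      have htall : ∀ u ∈ t, u = c := by
        intro u hu
        rcases hall u (List.mem_cons_of_mem _ hu) with h1 | h1
        · exfalso
          rw [List.count_eq_zero] at ht0
          exact ht0 (h1 ▸ hu)
        · exact h1
      refine ⟨0, t.length, ?_⟩
      rw [List.eq_replicate_iff.2 ⟨rfl, htall⟩]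
      simp
    · subst hv
      have hcount' : t.count 1 = 1 := by
        rwa [List.count_cons_of_ne (by omega)] at hcount
      obtain ⟨p, q, hpq⟩ := ih (fun u hu => hall u (List.mem_cons_of_mem _ hu)) hcount'
      exact ⟨p+1, q, by rw [List.replicate_succ, List.cons_append, hpq]⟩

lemma one_mem_of_PA {y x : List ℕ} (h : PA y x) (hy1 : 1 ≤ y.sum) : 1 ∈ x := by
  by_contra hno
  obtain ⟨hlen, hbd, hpark⟩ := h
  apply no_all_big hpark _ _ hy1
  · intro pr hpr
    have hm := List.of_mem_zip hpr
    have h1 := (hbd pr.1 hm.1).1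
    have : pr.1 ≠ 1 := by
      intro he; exact hno (he ▸ hm.1)
    omega
  · rw [List.map_snd_zip (le_of_eq hlen.symm)]

lemma deg_le_of_PA {y x : List ℕ} (h : PA y x) (hy1 : 1 ≤ y.sum) :
    deg x ≤ y.length - 1 := by
  have h1 : 1 ∈ x := one_mem_of_PA h hy1
  have hsplit := List.filter_append_perm (fun v => v ≠ 1) x
  have hlen := hsplit.length_eq
  rw [List.length_append] at hlen
  have h1f : 1 ∈ x.filter (fun v => !(decide (v ≠ 1))) :=
    List.mem_filter.2 ⟨h1, by simp⟩
  have hpos : 1 ≤ (x.filter (fun v => !(decide (v ≠ 1)))).length :=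
    List.length_pos_iff.2 (List.ne_nil_of_mem h1f)
  have hxy : x.length = y.length := h.1
  unfold deg
  omega

lemma sum_pos_of {y : List ℕ} (hpos : ∀ v ∈ y, 0 < v) (hy : 1 ≤ y.length) :
    1 ≤ y.sum := by
  cases y with
  | nil => simp at hy
  | cons w t =>
    have := hpos w (List.mem_cons_self)
    simp only [List.sum_cons]
    omega

lemma PA_ones {y : List ℕ} (hpos : ∀ v ∈ y, 0 < v) (hy : 1 ≤ y.length) :
    PA y (List.replicate y.length 1) := by
  refine ⟨by simp, ?_, ?_⟩
  · intro v hv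
    rw [List.eq_of_mem_replicate hv]
    exact ⟨le_refl _, sum_pos_of hpos hy⟩
  · have e : (∅ : Finset ℕ) = Finset.Ico 1 (0+1) := by simp
    rw [e]
    apply park_greedy
    · intro pr hpr
      obtain ⟨p, l⟩ := pr
      obtain ⟨h1, h2⟩ := List.of_mem_zip hpr
      rw [List.eq_of_mem_replicate h1]
      exact ⟨le_refl _, le_refl _, hpos l h2⟩
    · rw [List.map_snd_zip (by simp)]
      omega

lemma PAinv_ones {y : List ℕ} (hpos : ∀ v ∈ y, 0 < v) (hy : 1 ≤ y.length) :
    PAinv y (List.replicate y.length 1) := by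
  intro x' hp
  rw [List.perm_replicate.1 hp.symm]
  exact PA_ones hpos hy

/-- `χ(y) = n − 1` iff `y₁ ≥ y₂` and `y₂ = y₃ = ⋯ = yₙ`. -/
theorem stmt1 (n : ℕ) (hn : 2 ≤ n) (y : List ℕ) (hylen : y.length = n)
    (hypos : ∀ v ∈ y, 0 < v) :
    chi y = n - 1 ↔
      (y.getD 1 0 ≤ y.getD 0 0 ∧
        ∀ i j, 1 ≤ i → i < n → 1 ≤ j → j < n → y.getD i 0 = y.getD j 0) := by
  obtain ⟨y₀, ytail, rfl⟩ : ∃ a t, y = a :: t := by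
    cases y with
    | nil => simp at hylen; omega
    | cons a t => exact ⟨a, t, rfl⟩
  have hm1 : 1 ≤ (y₀ :: ytail).sum := sum_pos_of hypos (by omega)
  have hyt : ytail.length = n - 1 := by simp at hylen; omega
  have hy₀1 : 1 ≤ y₀ := hypos y₀ (List.mem_cons_self)
  have hub : ∀ d ∈ {d | ∃ x, PAinv (y₀ :: ytail) x ∧ deg x = d}, d ≤ n - 1 := by
    rintro d ⟨x, hinv, hd⟩
    have := deg_le_of_PA (hinv x (List.Perm.refl x)) hm1
    rw [hd] at this
    simp at this
    omega
  have hD0 : 0 ∈ {d | ∃ x, PAinv (y₀ :: ytail) x ∧ deg x = d} := by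
    refine ⟨List.replicate (y₀ :: ytail).length 1, PAinv_ones hypos (by simp), ?_⟩
    simp [deg]
  constructor
  · intro hchi
    have hmemS : n - 1 ∈ {d | ∃ x, PAinv (y₀ :: ytail) x ∧ deg x = d} := by
      have h2 : chi (y₀ :: ytail) ∈ {d | ∃ x, PAinv (y₀ :: ytail) x ∧ deg x = d} := by
        unfold chi
        exact Nat.sSup_mem ⟨0, hD0⟩ ⟨n-1, hub⟩
      rwa [hchi] at h2
    obtain ⟨x, hxinv, hxdeg⟩ := hmemS
    have hPAx := hxinv x (List.Perm.refl x)
    have hxlen : x.length = n := by rw [hPAx.1]; simpa using hylen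
    have hbd := hPAx.2.1
    have h1x : 1 ∈ x := one_mem_of_PA hPAx hm1
    set ws := x.erase 1 with hwsdef
    have hxw : x.Perm (1 :: ws) := List.perm_cons_erase h1x
    have hwslen : ws.length = n - 1 := by
      rw [hwsdef, List.length_erase_of_mem h1x, hxlen]
    have hdegx' : (x.filter (fun v => v ≠ 1)).length = n - 1 := hxdeg
    have h1notws : 1 ∉ ws := by
      intro h1ws
      have hperm2 : x.Perm (1 :: 1 :: (ws.erase 1)) :=
        hxw.trans ((List.perm_cons_erase h1ws).cons 1)
      have helen : (ws.erase 1).length = n - 2 := by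
        rw [List.length_erase_of_mem h1ws, hwslen]
        omega
      have hfl := (hperm2.filter (fun v => v ≠ 1)).length_eq
      have hdeg2 := hdegx'
      have hle2 := List.length_filter_le (fun v => v ≠ 1) (ws.erase 1)
      simp only [ne_eq, List.filter_cons, decide_not, decide_true, Bool.not_true,
        Bool.false_eq_true, if_false] at hfl hdeg2 hle2
      omega
    have hinv1 : ∀ x', (1 :: ws).Perm x' → PA (y₀ :: ytail) x' :=
      fun x' h' => hxinv x' (hxw.trans h')
    have hws2 : ∀ w ∈ ws, 2 ≤ w := by
      intro w hw
      have h3 := (hbd w (List.erase_subset hw)).1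
      have h4 : w ≠ 1 := fun he => h1notws (he ▸ hw)
      omega
    -- decompose ytail
    rcases List.eq_nil_or_concat ytail with hnil | ⟨yinit, ylast, hcat⟩
    · rw [hnil] at hyt; simp at hyt; omega
    have hcat' : ytail = yinit ++ [ylast] := by rw [hcat]; exact List.concat_eq_append
    have hyinitlen : yinit.length = n - 2 := by rw [hcat'] at hyt; simp at hyt; omega
    have hylastmem : ylast ∈ y₀ :: ytail := by rw [hcat']; simp
    have hylast1 : 1 ≤ ylast := hypos ylast hylastmem
    have hylastm : ylast ≤ (y₀ :: ytail).sum :=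
      List.single_le_sum (fun _ _ => Nat.zero_le _) _ hylastmem
    have hsum_split : (y₀ :: ytail).sum = y₀ + (yinit.sum + ylast) := by
      rw [hcat']; simp
    -- Step A : every non-1 preference exceeds ylast
    have hA : ∀ w ∈ ws, ylast + 1 ≤ w := by
      intro w hw
      have hperm : (1 :: ws).Perm (w :: (ws.erase w ++ [1])) := by
        refine ((List.perm_cons_erase hw).cons 1).trans ?_
        refine (List.Perm.swap w 1 _).trans ?_
        exact ((List.perm_append_singleton 1 _).symm).cons w
      have hpark := (hinv1 _ hperm).2.2
      have helen : (ws.erase w).length = n - 2 := by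
        rw [List.length_erase_of_mem hw, hwslen]
        omega
      have hzip : (w :: (ws.erase w ++ [1])).zip (y₀ :: ytail)
          = (w, y₀) :: (((ws.erase w).zip yinit) ++ [(1, ylast)]) := by
        conv_lhs => rw [hcat']
        rw [List.zip_cons_cons, List.zip_append (by omega)]
        rfl
      rw [hzip] at hpark
      refine scenario1 hpark (hws2 w hw) ?_ ?_ hy₀1 hylast1
      · intro pr hpr
        obtain ⟨a, c⟩ := pr
        exact hws2 a (List.erase_subset (List.of_mem_zip hpr).1)
      · rw [List.map_snd_zip (by omega)]
        omega
    -- Step B : some preference equals ylast + 1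
    have hwstar : ylast + 1 ∈ ws := by
      have hperm : (1 :: ws).Perm (ws ++ [1]) := (List.perm_append_singleton 1 ws).symm
      have hpark := (hinv1 _ hperm).2.2
      have hzip : (ws ++ [1]).zip (y₀ :: ytail) = (ws.zip (y₀ :: yinit)) ++ [(1, ylast)] := by
        have h5 : y₀ :: ytail = (y₀ :: yinit) ++ [ylast] := by rw [hcat']; rfl
        conv_lhs => rw [h5]
        rw [List.zip_append (by simp; omega)]
        rfl
      rw [hzip] at hpark
      have hws_pref : ∀ pr ∈ ws.zip (y₀ :: yinit), ylast + 1 ≤ pr.1 := by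
        intro pr hpr
        obtain ⟨a, c⟩ := pr
        exact hA a (List.of_mem_zip hpr).1
      have hsum2 : ((ws.zip (y₀ :: yinit) ++ [(1, ylast)]).map Prod.snd).sum = (y₀ :: ytail).sum := by
        rw [List.map_append, List.map_snd_zip (by simp; omega), List.sum_append]
        simp [hcat']
        omega
      obtain ⟨⟨a, c⟩, hprmem, hpreq⟩ := scenario2 hpark hws_pref hsum2 hylast1 (by omega)
      have ha : a ∈ ws := (List.of_mem_zip hprmem).1
      have haeq : a = ylast + 1 := hpreq
      rwa [haeq] at ha
    -- Step C≥ : every length is at least ylast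
    have hCge : ∀ k, k < n → ylast ≤ (y₀ :: ytail).getD k 0 := by
      intro k hk
      have hperm : (1 :: ws).Perm (ws.take k ++ 1 :: ws.drop k) := by
        have h6 := List.perm_middle (a := 1) (l₁ := ws.take k) (l₂ := ws.drop k)
        rw [List.take_append_drop] at h6
        exact h6.symm
      have hpark := (hinv1 _ hperm).2.2
      have hklen : k < (y₀ :: ytail).length := by simp; omega
      have hzip : (ws.take k ++ 1 :: ws.drop k).zip (y₀ :: ytail)
          = ((ws.take k).zip ((y₀ :: ytail).take k))
            ++ (1, (y₀ :: ytail)[k]) :: ((ws.drop k).zip ((y₀ :: ytail).drop (k+1))) := by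
        conv_lhs => rw [← List.take_append_drop k (y₀ :: ytail), List.drop_eq_getElem_cons hklen]
        rw [List.zip_append (by rw [List.length_take, List.length_take]; simp; omega)]
        rfl
      rw [hzip] at hpark
      have h7 : ylast ≤ (y₀ :: ytail)[k] := by
        refine scenario4 hpark ?_ ?_ ?_ (hypos _ (List.getElem_mem hklen)) hylast1 hylastm
        · intro pr hpr
          obtain ⟨a, c⟩ := pr
          exact hA a (List.take_subset _ _ (List.of_mem_zip hpr).1)
        · intro pr hpr
          obtain ⟨a, c⟩ := pr
          exact hA a (List.drop_subset _ _ (List.of_mem_zip hpr).1)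
        · rw [← hzip, List.map_snd_zip (by simp; omega)]
      rwa [List.getD_eq_getElem _ _ hklen]
    -- Step C≤ : tail lengths are at most ylast
    have hCle : ∀ k, 1 ≤ k → k < n → (y₀ :: ytail).getD k 0 ≤ ylast := by
      intro k hk1 hkn
      obtain ⟨k', rfl⟩ : ∃ k', k = k' + 1 := ⟨k - 1, by omega⟩
      have hws'len : (ws.erase (ylast+1)).length = n - 2 := by
        rw [List.length_erase_of_mem hwstar, hwslen]
        omega
      have hperm : (1 :: ws).Perm
          ((ylast+1) :: ((ws.erase (ylast+1)).take k' ++ 1 :: (ws.erase (ylast+1)).drop k')) := by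
        refine ((List.perm_cons_erase hwstar).cons 1).trans ?_
        refine (List.Perm.swap _ _ _).trans ?_
        apply List.Perm.cons
        have h6 := List.perm_middle (a := 1) (l₁ := (ws.erase (ylast+1)).take k')
          (l₂ := (ws.erase (ylast+1)).drop k')
        rw [List.take_append_drop] at h6
        exact h6.symm
      have hpark := (hinv1 _ hperm).2.2
      have hk't : k' < ytail.length := by omega
      have hzipin : ((ws.erase (ylast+1)).take k' ++ 1 :: (ws.erase (ylast+1)).drop k').zip ytail
          = (((ws.erase (ylast+1)).take k').zip (ytail.take k'))
            ++ (1, ytail[k']) :: (((ws.erase (ylast+1)).drop k').zip (ytail.drop (k'+1))) := by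
        conv_lhs => rw [← List.take_append_drop k' ytail, List.drop_eq_getElem_cons hk't]
        rw [List.zip_append (by rw [List.length_take, List.length_take]; omega)]
        rfl
      rw [List.zip_cons_cons, hzipin] at hpark
      have h7 : ytail[k'] ≤ ylast := by
        refine scenario3 hpark ?_ ?_ ?_ hy₀1 hylast1
        · intro pr hpr
          obtain ⟨a, c⟩ := pr
          exact hA a (List.erase_subset (List.take_subset _ _ (List.of_mem_zip hpr).1))
        · intro pr hpr
          obtain ⟨a, c⟩ := pr
          exact hA a (List.erase_subset (List.drop_subset _ _ (List.of_mem_zip hpr).1))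
        · rw [← hzipin, List.map_snd_zip (by simp; omega)]
          simp
      rw [List.getD_cons_succ, List.getD_eq_getElem _ _ hk't]
      exact h7
    have hlasteq : ∀ i, 1 ≤ i → i < n → (y₀ :: ytail).getD i 0 = ylast :=
      fun i hi1 hi2 => le_antisymm (hCle i hi1 hi2) (hCge i hi2)
    constructor
    · rw [hlasteq 1 (le_refl 1) (by omega), List.getD_cons_zero]
      have h8 := hCge 0 (by omega)
      rwa [List.getD_cons_zero] at h8
    · intro i j hi hin hj hjn
      rw [hlasteq i hi hin, hlasteq j hj hjn]
  · rintro ⟨hle, heq⟩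
    have h1lt : 1 < (y₀ :: ytail).length := by simp; omega
    set b := (y₀ :: ytail).getD 1 0 with hbdef
    have hytrep : ytail = List.replicate (n-1) b := by
      rw [List.eq_replicate_iff]
      refine ⟨hyt, ?_⟩
      intro v hv
      obtain ⟨i, hi, hvi⟩ := List.mem_iff_getElem.1 hv
      have h := heq (i+1) 1 (by omega) (by omega) (by omega) (by omega)
      rw [List.getD_cons_succ, List.getD_eq_getElem _ _ hi] at h
      rw [← hvi, h]
    have hbmem : b ∈ y₀ :: ytail := by
      rw [hbdef, List.getD_eq_getElem _ _ h1lt]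
      exact List.getElem_mem _
    have hb1 : 1 ≤ b := hypos b hbmem
    have hy₀b : b ≤ y₀ := by
      have := hle
      rw [List.getD_cons_zero] at this
      exact this
    have hmval : (y₀ :: ytail).sum = y₀ + (n-1) * b := by
      rw [List.sum_cons, hytrep, List.sum_replicate, smul_eq_mul]
    have hbm : b + 1 ≤ (y₀ :: ytail).sum := by
      have : b ≤ (n-1) * b := Nat.le_mul_of_pos_left b (by omega)
      omega
    set x := 1 :: List.replicate (n-1) (b+1) with hxdef
    have hxinv : PAinv (y₀ :: ytail) x := by
      intro x' hp
      have hall : ∀ v ∈ x', v = 1 ∨ v = b + 1 := by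
        intro v hv
        have hv' : v ∈ x := hp.mem_iff.2 hv
        rcases List.mem_cons.1 hv' with h | h
        · exact Or.inl h
        · exact Or.inr (List.eq_of_mem_replicate h)
      have hcount : x'.count 1 = 1 := by
        rw [← hp.count_eq]
        rw [hxdef, List.count_cons_self, List.count_replicate]
        simp
        omega
      obtain ⟨p, q, hx'⟩ := one_rep_form (by omega) x' hall hcount
      have hx'len : x'.length = n := by
        rw [← hp.length_eq, hxdef]
        simp
        omega
      have hpq : p + q = n - 1 := by
        rw [hx'] at hx'len
        simp at hx'len
        omega
      refine ⟨by simp [hx'len]; omega, ?_, ?_⟩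
      · intro v hv
        rcases hall v hv with h | h
        · rw [h]; exact ⟨le_refl _, hm1⟩
        · rw [h]; exact ⟨by omega, hbm⟩
      · rw [hx']
        cases p with
        | zero =>
          have hq : q = n - 1 := by omega
          have hz : (List.replicate 0 (b+1) ++ 1 :: List.replicate q (b+1)).zip (y₀ :: ytail)
              = (1, y₀) :: List.replicate (n-1) (b+1, b) := by
            rw [hytrep, hq]
            simp [zip_rep]
          rw [hz]
          exact construct0 hb1 hy₀b hmval.symm
        | succ p' =>
          have hz : (List.replicate (p'+1) (b+1) ++ 1 :: List.replicate q (b+1)).zip (y₀ :: ytail)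
              = (b+1, y₀) :: (List.replicate p' (b+1, b) ++ (1, b) :: List.replicate q (b+1, b)) := by
            have hyt2 : ytail = List.replicate p' b ++ b :: List.replicate q b := by
              rw [hytrep, show n - 1 = p' + (1 + q) by omega, List.replicate_add,
                show 1 + q = q + 1 by omega, List.replicate_succ]
            rw [hyt2, List.replicate_succ, List.cons_append, List.zip_cons_cons,
              List.zip_append (by simp), zip_rep, List.zip_cons_cons, zip_rep]
          rw [hz]
          refine construct1 hb1 hy₀1 ?_
          rw [show p' + 1 + q = n - 1 by omega]
          exact hmval.symm
    have hdegx : deg x = n - 1 := by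
      have hne : ¬ (b + 1 = 1) := by omega
      have hb0 : b ≠ 0 := by omega
      simp [deg, hxdef, List.filter_replicate, hne, hb0]
    have hmemD : n - 1 ∈ {d | ∃ x, PAinv (y₀ :: ytail) x ∧ deg x = d} := ⟨x, hxinv, hdegx⟩
    apply le_antisymm
    · exact csSup_le ⟨n-1, hmemD⟩ hub
    · exact le_csSup ⟨n-1, hub⟩ hmemD
end

section
/- Let y = (b, a, a, ..., a) ∈ ℕ^n with n ≥ 2 (first car has length b, the remaining n−1 cars have length a), and let x ∈ [m]^n where m = b + (n−1)a. If a divides b, then x ∈ PAinv_n(y) if and only if for every i ∈ [n], the i-th smallest entry x_{(i)} belongs to {1 + (k−1)a : k ∈ [i]}. -/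
namespace Stmt2Aux

def bs (a : ℕ) (F : Finset ℕ) : Finset ℕ :=
  F.biUnion fun j => Finset.Ico (1 + j*a) (1 + j*a + a)

lemma mem_bs {a : ℕ} {F : Finset ℕ} {t : ℕ} :
    t ∈ bs a F ↔ ∃ j ∈ F, 1 + j*a ≤ t ∧ t < 1 + j*a + a := by
  simp [bs, Finset.mem_biUnion, Finset.mem_Ico]

lemma mul_le_mul_iff {a u j : ℕ} (ha : 0 < a) : u*a ≤ j*a ↔ u ≤ j :=
  ⟨fun h => Nat.le_of_mul_le_mul_right h ha, fun h => Nat.mul_le_mul_right a h⟩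

lemma block_unique {a j j' t : ℕ} (ha : 0 < a)
    (h1 : 1 + j*a ≤ t) (h2 : t < 1 + j*a + a)
    (h3 : 1 + j'*a ≤ t) (h4 : t < 1 + j'*a + a) : j = j' := by
  rcases Nat.lt_trichotomy j j' with h | h | h
  · exfalso
    have : (j+1)*a ≤ j'*a := (mul_le_mul_iff ha).mpr h
    have : 1 + j*a + a ≤ 1 + j'*a := by rw [add_one_mul] at this; omega
    omega
  · exact h
  · exfalso
    have : (j'+1)*a ≤ j*a := (mul_le_mul_iff ha).mpr h
    have : 1 + j'*a + a ≤ 1 + j*a := by rw [add_one_mul] at this; omega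
    omega

lemma lt_div_add_one_mul (t a : ℕ) (ha : 0 < a) : t < (t/a+1)*a := by
  calc t = a*(t/a) + t%a := (Nat.div_add_mod t a).symm
  _ < a*(t/a) + a := by have := Nat.mod_lt t ha; omega
  _ = (t/a+1)*a := by ring

lemma bs_Ico {a : ℕ} (ha : 0 < a) (u w : ℕ) :
    bs a (Finset.Ico u w) = Finset.Ico (1 + u*a) (1 + w*a) := by
  ext t
  simp only [mem_bs, Finset.mem_Ico]
  constructor
  · rintro ⟨j, ⟨hu, hw⟩, h1, h2⟩
    have l1 : u*a ≤ j*a := (mul_le_mul_iff ha).mpr hu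
    have l2 : (j+1)*a ≤ w*a := (mul_le_mul_iff ha).mpr hw
    rw [add_one_mul] at l2
    omega
  · rintro ⟨h1, h2⟩
    refine ⟨(t-1)/a, ⟨?_, ?_⟩, ?_, ?_⟩
    · exact (Nat.le_div_iff_mul_le ha).mpr (by omega)
    · exact (Nat.div_lt_iff_lt_mul ha).mpr (by omega)
    · have := Nat.div_mul_le_self (t-1) a
      omega
    · have := lt_div_add_one_mul (t-1) a ha
      rw [add_one_mul] at this
      omega

lemma bs_sdiff {a : ℕ} (ha : 0 < a) (S T : Finset ℕ) :
    bs a (S \ T) = bs a S \ bs a T := by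
  ext t
  simp only [mem_bs, Finset.mem_sdiff]
  constructor
  · rintro ⟨j, ⟨hS, hT⟩, h1, h2⟩
    refine ⟨⟨j, hS, h1, h2⟩, ?_⟩
    rintro ⟨j', hT', h1', h2'⟩
    exact hT (block_unique ha h1 h2 h1' h2' ▸ hT')
  · rintro ⟨⟨j, hS, h1, h2⟩, hn⟩
    exact ⟨j, ⟨hS, fun hT => hn ⟨j, hT, h1, h2⟩⟩, h1, h2⟩

lemma bs_range {a : ℕ} (ha : 0 < a) (C : ℕ) :
    bs a (Finset.range C) = Finset.Icc 1 (C*a) := by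
  rw [Finset.range_eq_Ico, bs_Ico ha, ← Finset.Ico_add_one_right_eq_Icc]
  congr 1
  · omega
  · omega

lemma occ_compl {a : ℕ} (ha : 0 < a) (C q c : ℕ) (hqc : q + c ≤ C) :
    Finset.Icc 1 (C*a) \ bs a (Finset.range C \ Finset.Ico q (q+c))
      = Finset.Ico (1 + q*a) (1 + (q+c)*a) := by
  rw [← bs_range ha, ← bs_sdiff ha, Finset.sdiff_sdiff_self_left, ← bs_Ico ha]
  congr 1
  rw [Finset.range_eq_Ico]
  ext j
  simp only [Finset.mem_inter, Finset.mem_Ico]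
  omega

lemma block_subset_Icc {a : ℕ} {C j : ℕ} (hj : j < C) :
    Finset.Ico (1 + j*a) (1 + j*a + a) ⊆ Finset.Icc 1 (C*a) := by
  intro t ht
  simp only [Finset.mem_Ico] at ht
  have : (j+1)*a ≤ C*a := Nat.mul_le_mul_right a hj
  rw [add_one_mul] at this
  simp only [Finset.mem_Icc]
  omega

lemma sdiff_union_block {a C : ℕ} {F : Finset ℕ} {j : ℕ} (ha : 0 < a)
    (hF : F ⊆ Finset.range C) (hj : j ∈ F) :
    (Finset.Icc 1 (C*a) \ bs a F) ∪ Finset.Ico (1 + j*a) (1 + j*a + a)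
      = Finset.Icc 1 (C*a) \ bs a (F.erase j) := by
  have hjC : j < C := Finset.mem_range.mp (hF hj)
  have hsub : Finset.Ico (1 + j*a) (1 + j*a + a) ⊆ Finset.Icc 1 (C*a) :=
    block_subset_Icc hjC
  ext t
  simp only [Finset.mem_union, Finset.mem_sdiff, mem_bs, Finset.mem_Ico]
  constructor
  · rintro (⟨h1, h2⟩ | h)
    · refine ⟨h1, ?_⟩
      rintro ⟨j', hj', hb1, hb2⟩
      exact h2 ⟨j', Finset.mem_of_mem_erase hj', hb1, hb2⟩
    · have ht : t ∈ Finset.Icc 1 (C*a) := hsub (Finset.mem_Ico.mpr h)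
      refine ⟨ht, ?_⟩
      rintro ⟨j', hj', hb1, hb2⟩
      have : j = j' := block_unique ha h.1 h.2 hb1 hb2
      exact (Finset.ne_of_mem_erase hj') this.symm
  · rintro ⟨h1, h2⟩
    by_cases hcase : 1 + j*a ≤ t ∧ t < 1 + j*a + a
    · exact Or.inr hcase
    · refine Or.inl ⟨h1, ?_⟩
      rintro ⟨j', hj', hb1, hb2⟩
      by_cases hjj : j' = j
      · exact hcase (hjj ▸ ⟨hb1, hb2⟩)
      · exact h2 ⟨j', Finset.mem_erase.mpr ⟨hjj, hj'⟩, hb1, hb2⟩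


lemma small_step {a C : ℕ} {F : Finset ℕ} {q j : ℕ} (ha : 0 < a)
    (hF : F ⊆ Finset.range C) (hj : j ∈ F) (hqj : q ≤ j)
    (hmin : ∀ i ∈ F, q ≤ i → j ≤ i) :
    ParksAt (Finset.Icc 1 (C*a) \ bs a F) (C*a) (1 + q*a) a (1 + j*a) := by
  have hjC : j < C := Finset.mem_range.mp (hF hj)
  have hjCa : (j+1)*a ≤ C*a := Nat.mul_le_mul_right a hjC
  rw [add_one_mul] at hjCa
  constructor
  · refine ⟨by have := Nat.mul_le_mul_right a hqj; omega, by omega, ?_⟩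
    intro t ht
    simp only [Finset.mem_Ico] at ht
    simp only [Finset.mem_sdiff, not_and, not_not]
    intro _
    exact mem_bs.mpr ⟨j, hj, by omega, by omega⟩
  · intro s' hs' hfit
    obtain ⟨hpref, hlen, hfree⟩ := hfit
    have hs'occ := hfree s' (by simp only [Finset.mem_Ico]; omega)
    simp only [Finset.mem_sdiff, not_and, not_not] at hs'occ
    have hs'Icc : s' ∈ Finset.Icc 1 (C*a) := by
      simp only [Finset.mem_Icc]; omega
    obtain ⟨j', hj'F, hb1, hb2⟩ := mem_bs.mp (hs'occ hs'Icc)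
    have hqj' : q ≤ j' := by
      by_contra hcon
      have : (j'+1)*a ≤ q*a := Nat.mul_le_mul_right a (by omega)
      rw [add_one_mul] at this
      omega
    have := Nat.mul_le_mul_right a (hmin j' hj'F hqj')
    omega

lemma unit_park (a C : ℕ) (ha : 0 < a) :
    ∀ (P : List ℕ) (F : Finset ℕ), F ⊆ Finset.range C →
    (∀ v ∈ P, ∃ q, v = 1 + q*a) →
    (∀ t, P.countP (fun v => decide (1 + t*a ≤ v)) ≤ (F.filter (fun e => t ≤ e)).card) →
    Park (C*a) (Finset.Icc 1 (C*a) \ bs a F) (P.map (fun v => (v, a)))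
  | [], F, _, _, _ => by simpa using Park.nil _
  | v :: P, F, hF, halign, hall => by
    obtain ⟨q, rfl⟩ := halign v (List.mem_cons_self)
    have hne : (F.filter (fun e => q ≤ e)).Nonempty := by
      rw [← Finset.card_pos]
      have h1 := hall q
      rw [List.countP_cons] at h1
      simp at h1
      omega
    set j := (F.filter (fun e => q ≤ e)).min' hne with hjdef
    have hjmem := (F.filter (fun e => q ≤ e)).min'_mem hne
    simp only [Finset.mem_filter] at hjmem
    obtain ⟨hjF, hqj⟩ := hjmem
    have hmin : ∀ i ∈ F, q ≤ i → j ≤ i := fun i hi hqi =>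
      Finset.min'_le _ i (Finset.mem_filter.mpr ⟨hi, hqi⟩)
    refine Park.cons _ _ _ _ (1 + j*a) (small_step ha hF hjF hqj hmin) ?_
    have hocc : (Finset.Icc 1 (C*a) \ bs a F) ∪ Finset.Ico (1+j*a) (1+j*a+a)
        = Finset.Icc 1 (C*a) \ bs a (F.erase j) := sdiff_union_block ha hF hjF
    rw [show 1 + j*a + a = 1 + j*a + a from rfl, hocc]
    apply unit_park a C ha P (F.erase j)
      ((F.erase_subset j).trans hF)
      (fun w hw => halign w (List.mem_cons_of_mem _ hw))
    intro t
    have hfe : (F.erase j).filter (fun e => t ≤ e) = (F.filter (fun e => t ≤ e)).erase j := by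
      ext e
      simp only [Finset.mem_filter, Finset.mem_erase]
      tauto
    rcases le_or_gt t q with htq | hqt
    · -- t ≤ q
      have hjfil : j ∈ F.filter (fun e => t ≤ e) :=
        Finset.mem_filter.mpr ⟨hjF, le_trans htq hqj⟩
      have hcard : ((F.erase j).filter (fun e => t ≤ e)).card
          = (F.filter (fun e => t ≤ e)).card - 1 := by
        rw [hfe, Finset.card_erase_of_mem hjfil]
      have h1 := hall t
      rw [List.countP_cons] at h1
      have hpv : (1 + t*a ≤ 1 + q*a) := by
        have := Nat.mul_le_mul_right a htq; omega
      simp [hpv] at h1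
      have hpos : 0 < (F.filter (fun e => t ≤ e)).card :=
        Finset.card_pos.mpr ⟨j, hjfil⟩
      omega
    · rcases le_or_gt t j with htj | hjt
      · -- q < t ≤ j
        have hfilters : F.filter (fun e => q ≤ e) = F.filter (fun e => t ≤ e) := by
          ext e
          simp only [Finset.mem_filter]
          constructor
          · rintro ⟨he, hqe⟩
            exact ⟨he, le_trans htj (hmin e he hqe)⟩
          · rintro ⟨he, hte⟩
            exact ⟨he, le_trans (le_of_lt hqt) hte⟩
        have hmono : P.countP (fun v => decide (1 + t*a ≤ v))
            ≤ P.countP (fun v => decide (1 + q*a ≤ v)) := by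
          apply List.countP_mono_left
          intro w _ hw
          simp only [decide_eq_true_eq] at hw ⊢
          have := Nat.mul_le_mul_right a (le_of_lt hqt)
          omega
        have h1 := hall q
        rw [List.countP_cons] at h1
        simp at h1
        have hjfil : j ∈ F.filter (fun e => t ≤ e) :=
          Finset.mem_filter.mpr ⟨hjF, htj⟩
        have hcard : ((F.erase j).filter (fun e => t ≤ e)).card
            = (F.filter (fun e => t ≤ e)).card - 1 := by
          rw [hfe, Finset.card_erase_of_mem hjfil]
        rw [hcard, ← hfilters]
        omega
      · -- j < t
        have hcard : ((F.erase j).filter (fun e => t ≤ e)).card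
            = (F.filter (fun e => t ≤ e)).card := by
          rw [hfe, Finset.erase_eq_of_notMem]
          simp only [Finset.mem_filter, not_and, not_le]
          intro _; exact hjt
        have h1 := hall t
        rw [List.countP_cons] at h1
        have hpv : ¬ (1 + t*a ≤ 1 + q*a) := by
          have : (q+1)*a ≤ t*a := Nat.mul_le_mul_right a (by omega)
          rw [add_one_mul] at this
          omega
        simp [hpv] at h1
        rw [hcard]
        omega


lemma Ico_inter_Ico {s e u w : ℕ} : Finset.Ico s e ∩ Finset.Ico u w
    = Finset.Ico (max s u) (min e w) := Finset.Ico_inter_Ico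

lemma park_dvd (a v m : ℕ) : ∀ (occ : Finset ℕ) (l : List (ℕ × ℕ)),
    Park m occ l → (∀ pl ∈ l, pl.2 = a ∧ 1 ≤ pl.1) →
    occ ⊆ Finset.Icc 1 m → v ∈ occ →
    a ∣ (occ ∩ Finset.Ico 1 v).card →
    occ.card + (l.map Prod.snd).sum = m →
    a ∣ (v - 1)
  | occ, [], hpark, _, hocc, hv, hdvd, hcard => by
    simp at hcard
    have heq : occ = Finset.Icc 1 m := by
      apply Finset.eq_of_subset_of_card_le hocc
      rw [Nat.card_Icc]
      omega
    subst heq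
    have hvm : v ≤ m := (Finset.mem_Icc.mp hv).2
    have : Finset.Icc 1 m ∩ Finset.Ico 1 v = Finset.Ico 1 v := by
      apply Finset.inter_eq_right.mpr
      intro t ht
      simp only [Finset.mem_Ico] at ht
      simp only [Finset.mem_Icc]
      omega
    rw [this, Nat.card_Ico] at hdvd
    exact hdvd
  | occ, (p, len) :: rest, hpark, hl, hocc, hv, hdvd, hcard => by
    obtain ⟨hlen, hp1⟩ := hl (p, len) (List.mem_cons_self)
    simp only at hlen
    cases hpark with
    | cons _ _ _ _ s hps hrest =>
      rw [hlen] at hps hrest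
      obtain ⟨⟨hpref, hsm, hfree⟩, _⟩ := hps
      have hdis : Disjoint occ (Finset.Ico s (s + a)) :=
        Finset.disjoint_right.mpr hfree
      have hIsub : Finset.Ico s (s + a) ⊆ Finset.Icc 1 m := by
        intro t ht
        simp only [Finset.mem_Ico] at ht
        simp only [Finset.mem_Icc]
        omega
      have hcard' : (occ ∪ Finset.Ico s (s + a)).card = occ.card + a := by
        rw [Finset.card_union_of_disjoint hdis, Nat.card_Ico]
        omega
      have hvI : v ∉ Finset.Ico s (s + a) := fun h => hfree v h hv
      simp only [Finset.mem_Ico, not_and, not_lt] at hvI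
      have hinter : ((occ ∪ Finset.Ico s (s + a)) ∩ Finset.Ico 1 v).card
          = (occ ∩ Finset.Ico 1 v).card + (Finset.Ico s (s+a) ∩ Finset.Ico 1 v).card := by
        rw [Finset.union_inter_distrib_right]
        apply Finset.card_union_of_disjoint
        exact Finset.disjoint_of_subset_left Finset.inter_subset_left
          (Finset.disjoint_of_subset_right Finset.inter_subset_left hdis)
      have hIJ : a ∣ (Finset.Ico s (s+a) ∩ Finset.Ico 1 v).card := by
        rw [Ico_inter_Ico]
        rcases le_or_gt v s with hvs | hsv
        · rw [Nat.card_Ico]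
          have hz : (s+a) ⊓ v - s ⊔ 1 = 0 := by omega
          rw [hz]
          exact dvd_zero a
        · have hsav : s + a ≤ v := hvI (le_of_lt hsv)
          rw [Nat.card_Ico]
          have h1 : max s 1 = s := by omega
          have h2 : min (s+a) v = s + a := by omega
          rw [h1, h2]
          simp
      refine park_dvd a v m _ rest hrest
        (fun pl hpl => hl pl (List.mem_cons_of_mem _ hpl))
        (Finset.union_subset hocc hIsub)
        (Finset.mem_union_left _ hv) ?_ ?_
      · rw [hinter]
        exact Nat.dvd_add hdvd hIJ
      · rw [hcard']
        simp only [List.map_cons, List.sum_cons] at hcard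
        omega

lemma park_low (t m : ℕ) : ∀ (occ : Finset ℕ) (l : List (ℕ × ℕ)),
    Park m occ l → (∀ pl ∈ l, 1 ≤ pl.1) →
    occ ⊆ Finset.Icc 1 m →
    occ.card + (l.map Prod.snd).sum = m →
    t ≤ m →
    t ≤ (occ ∩ Finset.Icc 1 t).card
        + ((l.filter (fun pl => decide (pl.1 ≤ t))).map Prod.snd).sum
  | occ, [], hpark, _, hocc, hcard, htm => by
    simp only [List.map_nil, List.sum_nil, add_zero] at hcard
    have heq : occ = Finset.Icc 1 m := by
      apply Finset.eq_of_subset_of_card_le hocc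
      rw [Nat.card_Icc]
      omega
    subst heq
    have : Finset.Icc 1 m ∩ Finset.Icc 1 t = Finset.Icc 1 t := by
      apply Finset.inter_eq_right.mpr
      intro u hu
      simp only [Finset.mem_Icc] at hu ⊢
      omega
    rw [this, Nat.card_Icc]
    simp
  | occ, (p, len) :: rest, hpark, hl, hocc, hcard, htm => by
    have hp1 : 1 ≤ p := hl (p, len) (List.mem_cons_self)
    cases hpark with
    | cons _ _ _ _ s hps hrest =>
      obtain ⟨⟨hpref, hsm, hfree⟩, _⟩ := hps
      have hdis : Disjoint occ (Finset.Ico s (s + len)) :=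
        Finset.disjoint_right.mpr hfree
      have hIsub : Finset.Ico s (s + len) ⊆ Finset.Icc 1 m := by
        intro u hu
        simp only [Finset.mem_Ico] at hu
        simp only [Finset.mem_Icc]
        omega
      have hcard' : (occ ∪ Finset.Ico s (s + len)).card = occ.card + len := by
        rw [Finset.card_union_of_disjoint hdis, Nat.card_Ico]
        omega
      have IH := park_low t m _ rest hrest
        (fun pl hpl => hl pl (List.mem_cons_of_mem _ hpl))
        (Finset.union_subset hocc hIsub)
        (by rw [hcard']
            simp only [List.map_cons, List.sum_cons] at hcard
            omega) htm
      have hsplit : ((occ ∪ Finset.Ico s (s+len)) ∩ Finset.Icc 1 t).card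
          ≤ (occ ∩ Finset.Icc 1 t).card + (Finset.Ico s (s+len) ∩ Finset.Icc 1 t).card := by
        rw [Finset.union_inter_distrib_right]
        exact Finset.card_union_le _ _
      rcases le_or_gt p t with hpt | htp
      · have hfil : ((p, len) :: rest).filter (fun pl => decide (pl.1 ≤ t))
            = (p, len) :: rest.filter (fun pl => decide (pl.1 ≤ t)) := by
          simp [List.filter_cons, hpt]
        rw [hfil]
        simp only [List.map_cons, List.sum_cons]
        have hIle : (Finset.Ico s (s+len) ∩ Finset.Icc 1 t).card ≤ len := by
          calc (Finset.Ico s (s+len) ∩ Finset.Icc 1 t).card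
              ≤ (Finset.Ico s (s+len)).card := Finset.card_le_card Finset.inter_subset_left
          _ = len := by rw [Nat.card_Ico]; omega
        omega
      · have hfil : ((p, len) :: rest).filter (fun pl => decide (pl.1 ≤ t))
            = rest.filter (fun pl => decide (pl.1 ≤ t)) := by
          simp [List.filter_cons]
          omega
        rw [hfil]
        have hIempty : Finset.Ico s (s+len) ∩ Finset.Icc 1 t = ∅ := by
          ext u
          simp only [Finset.mem_inter, Finset.mem_Ico, Finset.mem_Icc,
            Finset.notMem_empty, iff_false]
          omega
        rw [hIempty] at hsplit
        simp only [Finset.card_empty, add_zero] at hsplit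
        omega

lemma zip_replicate {α β : Type} (c : β) : ∀ (l : List α) (k : ℕ), l.length = k →
    l.zip (List.replicate k c) = l.map (fun v => (v, c))
  | [], k, _ => by simp
  | v :: l, k, h => by
    cases k with
    | zero => simp at h
    | succ k =>
      simp only [List.replicate_succ, List.zip_cons_cons, List.map_cons]
      rw [zip_replicate c l k (by simpa using h)]

lemma sum_map_const {α : Type} (l : List α) (c : ℕ) :
    (l.map (fun _ => c)).sum = l.length * c := by
  induction l with
  | nil => simp
  | cons v l ih => simp [ih, Nat.succ_mul]; omega

end Stmt2Aux

open Stmt2Aux in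
/-- for `y = (b, a^{n−1})` with `a ∣ b`, `x ∈ PAinv_n(y)` iff for all
`i ∈ [n]` the `i`-th smallest entry of `x` is of the form `1 + (k−1)a` with `k ∈ [i]`.
Here `xs` is the nondecreasing rearrangement of `x`, and indices are 0-based, so
`xs.getD i 0` is the `(i+1)`-th smallest entry. -/
theorem stmt2 (n a b : ℕ) (hn : 2 ≤ n) (ha : 0 < a) (hb : 0 < b)
    (y : List ℕ) (hy : y = b :: List.replicate (n - 1) a)
    (x : List ℕ) (hxlen : x.length = n)
    (hxm : ∀ v ∈ x, 1 ≤ v ∧ v ≤ b + (n - 1) * a)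
    (xs : List ℕ) (hperm : xs.Perm x) (hsort : xs.Pairwise (· ≤ ·))
    (hdvd : a ∣ b) :
    PAinv y x ↔
      ∀ i < n, ∃ k, 1 ≤ k ∧ k ≤ i + 1 ∧ xs.getD i 0 = 1 + (k - 1) * a := by
  subst hy
  obtain ⟨c, hc⟩ := hdvd
  have hcpos : 0 < c := by
    rcases Nat.eq_zero_or_pos c with h | h
    · subst h; simp at hc; omega
    · exact h
  have hylen : (b :: List.replicate (n - 1) a).length = n := by
    simp [List.length_replicate]; omega
  have hysum : (b :: List.replicate (n - 1) a).sum = b + (n - 1) * a := by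
    simp [List.sum_replicate, smul_eq_mul, mul_comm]
  have hxslen : xs.length = n := by rw [hperm.length_eq, hxlen]
  constructor
  · -- necessity
    intro hinv
    have step1 : ∀ v ∈ x, a ∣ (v - 1) := by
      intro v hv
      have hperm' : x.Perm (v :: x.erase v) := List.perm_cons_erase hv
      obtain ⟨hlen', hbound', hpark'⟩ := hinv _ hperm'
      have herlen : (x.erase v).length = n - 1 := by
        rw [List.length_erase_of_mem hv, hxlen]
      rw [List.zip_cons_cons, zip_replicate a _ (n-1) herlen] at hpark'
      cases hpark' with
      | cons _ _ _ _ s hps hrest =>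
        obtain ⟨⟨hpref, hsm, _⟩, hminp⟩ := hps
        have hv1 : 1 ≤ v := (hxm v hv).1
        have hsv : s = v := by
          by_contra hne
          have hlt : v < s := lt_of_le_of_ne hpref (Ne.symm hne)
          exact hminp v hlt ⟨le_refl v, by omega, by simp⟩
        rw [hsv, Finset.empty_union] at hrest
        refine park_dvd a v ((b :: List.replicate (n-1) a).sum) _ _ hrest ?_ ?_ ?_ ?_ ?_
        · intro pl hpl
          simp only [List.mem_map] at hpl
          obtain ⟨w, hw, rfl⟩ := hpl
          exact ⟨rfl, (hxm w (List.mem_of_mem_erase hw)).1⟩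
        · intro u hu
          simp only [Finset.mem_Ico] at hu
          simp only [Finset.mem_Icc]
          omega
        · simp only [Finset.mem_Ico]
          omega
        · have hem : Finset.Ico v (v+b) ∩ Finset.Ico 1 v = ∅ := by
            ext u
            simp only [Finset.mem_inter, Finset.mem_Ico, Finset.notMem_empty, iff_false]
            omega
          rw [hem]
          simp
        · rw [Nat.card_Ico, List.map_map]
          have : (Prod.snd ∘ fun w => (w, a)) = fun (_ : ℕ) => a := rfl
          rw [this, sum_map_const, herlen, hysum]
          omega
    have step2 : ∀ i, i < n → xs.getD i 0 ≤ 1 + i * a := by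
      intro i hi
      by_contra hcon
      push_neg at hcon
      have hilen : i < xs.length := by omega
      have hn1len : n - 1 < xs.length := by omega
      have hMge : xs.getD i 0 ≤ xs.getD (n-1) 0 := by
        rw [List.getD_eq_getElem xs 0 hilen, List.getD_eq_getElem xs 0 hn1len]
        have := hsort.rel_get_of_le (a := ⟨i, hilen⟩) (b := ⟨n-1, hn1len⟩)
          (by simp only [Fin.mk_le_mk]; omega)
        simpa using this
      set M := xs.getD (n-1) 0 with hMdef
      have hMmem : M ∈ x := by
        rw [← hperm.mem_iff]
        rw [hMdef, List.getD_eq_getElem xs 0 hn1len]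
        exact List.getElem_mem _
      have htM : 1 + i * a < M := by omega
      have hperm' : x.Perm (M :: x.erase M) := List.perm_cons_erase hMmem
      obtain ⟨_, _, hpark'⟩ := hinv _ hperm'
      have herlen : (x.erase M).length = n - 1 := by
        rw [List.length_erase_of_mem hMmem, hxlen]
      rw [List.zip_cons_cons, zip_replicate a _ (n-1) herlen] at hpark'
      have hsum2 : ((((M, b) :: (x.erase M).map (fun w => (w, a))).map Prod.snd)).sum
          = b + (n-1)*a := by
        simp only [List.map_cons, List.sum_cons, List.map_map]
        have : (Prod.snd ∘ fun w => (w, a)) = fun (_ : ℕ) => a := rfl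
        rw [this, sum_map_const, herlen]
      have hian : i * a ≤ (n-1) * a := Nat.mul_le_mul_right a (by omega)
      have hlow := park_low (1 + i*a) ((b :: List.replicate (n-1) a).sum) ∅ _ hpark'
        ?_ (Finset.empty_subset _) ?_ ?_
      rotate_left
      · intro pl hpl
        simp only [List.mem_cons, List.mem_map] at hpl
        rcases hpl with rfl | ⟨w, hw, rfl⟩
        · exact (hxm M hMmem).1
        · exact (hxm w (List.mem_of_mem_erase hw)).1
      · rw [Finset.card_empty, hsum2, hysum]
        omega
      · rw [hysum]; omega
      rw [Finset.empty_inter, Finset.card_empty] at hlow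
      rw [List.filter_cons] at hlow
      have hhead : (decide ((M, b).1 ≤ 1 + i*a)) = false := by
        simp only [decide_eq_false_iff_not, not_le]
        exact htM
      rw [hhead] at hlow
      simp only [Bool.false_eq_true, if_false, List.filter_map] at hlow
      rw [List.map_map] at hlow
      have hcomp : (Prod.snd ∘ fun w => (w, a)) = fun (_ : ℕ) => a := rfl
      rw [hcomp, sum_map_const] at hlow
      have hcount : ((x.erase M).filter
          ((fun pl => decide (pl.1 ≤ 1 + i*a)) ∘ fun w => (w, a))).length ≤ i := by
        rw [← List.countP_eq_length_filter]
        have hsub : List.countP ((fun pl => decide (pl.1 ≤ 1 + i*a)) ∘ fun w => (w, a)) (x.erase M)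
            ≤ List.countP ((fun pl => decide (pl.1 ≤ 1 + i*a)) ∘ fun w => (w, a)) x :=
          List.Sublist.countP_le (p := _) (List.erase_sublist (a := M) (l := x))
        have hxxs : List.countP ((fun pl => decide (pl.1 ≤ 1 + i*a)) ∘ fun w => (w, a)) x
            = List.countP ((fun pl => decide (pl.1 ≤ 1 + i*a)) ∘ fun w => (w, a)) xs :=
          (hperm.countP_eq _).symm
        have hxsb : List.countP ((fun pl => decide (pl.1 ≤ 1 + i*a)) ∘ fun w => (w, a)) xs ≤ i := by
          conv_lhs => rw [← List.take_append_drop i xs]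
          rw [List.countP_append]
          have h1 : List.countP ((fun pl => decide (pl.1 ≤ 1 + i*a)) ∘ fun w => (w, a))
              (xs.drop i) = 0 := by
            rw [List.countP_eq_zero]
            intro w hw
            obtain ⟨j, hj, hwj⟩ := List.mem_iff_getElem.mp hw
            rw [List.getElem_drop] at hwj
            have hij : i ≤ i + j := Nat.le_add_right i j
            have hijlen : i + j < xs.length := by
              rw [List.length_drop] at hj; omega
            have : xs[i]'hilen ≤ xs[i+j]'hijlen := by
              have := hsort.rel_get_of_le (a := ⟨i, hilen⟩) (b := ⟨i+j, hijlen⟩)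
                (by simp only [Fin.mk_le_mk]; omega)
              simpa using this
            have hgi : xs.getD i 0 = xs[i]'hilen := List.getD_eq_getElem xs 0 hilen
            simp only [Function.comp_apply, decide_eq_true_eq, not_le]
            omega
          have h2 : List.countP ((fun pl => decide (pl.1 ≤ 1 + i*a)) ∘ fun w => (w, a))
              (xs.take i) ≤ i := by
            refine le_trans (List.countP_le_length) ?_
            rw [List.length_take]
            omega
          omega
        omega
      have hfin : ((x.erase M).filter
          ((fun pl => decide (pl.1 ≤ 1 + i*a)) ∘ fun w => (w, a))).length * a ≤ i * a :=
        Nat.mul_le_mul_right a hcount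
      omega
    intro i hi
    have hilen : i < xs.length := by omega
    have hgi : xs.getD i 0 = xs[i]'hilen := List.getD_eq_getElem xs 0 hilen
    have hvmem : xs.getD i 0 ∈ x := by
      rw [← hperm.mem_iff, hgi]
      exact List.getElem_mem _
    obtain ⟨q, hq⟩ := step1 _ hvmem
    have h1v : 1 ≤ xs.getD i 0 := (hxm _ hvmem).1
    have hveq : xs.getD i 0 = 1 + a * q := by omega
    have hb2 := step2 i hi
    have hqi : q ≤ i := by
      rw [hveq] at hb2
      have h' : q * a ≤ i * a := by rw [mul_comm q a]; omega
      exact Nat.le_of_mul_le_mul_right h' ha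
    exact ⟨q + 1, by omega, by omega, by rw [hveq, Nat.add_sub_cancel, mul_comm]⟩
  · -- sufficiency
    intro hcond
    have halignx : ∀ v ∈ x, ∃ q, q ≤ n - 1 ∧ v = 1 + q * a := by
      intro v hv
      have hvxs : v ∈ xs := hperm.mem_iff.mpr hv
      obtain ⟨i, hilt, hvi⟩ := List.mem_iff_getElem.mp hvxs
      have hilt' : i < n := by omega
      obtain ⟨k, hk1, hk2, hk3⟩ := hcond i hilt'
      rw [List.getD_eq_getElem xs 0 hilt, hvi] at hk3
      exact ⟨k - 1, by omega, hk3⟩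
    have hcountB : ∀ t, List.countP (fun v => decide (1 + t * a ≤ v)) x ≤ n - t := by
      intro t
      rw [← hperm.countP_eq]
      conv_lhs => rw [← List.take_append_drop t xs]
      rw [List.countP_append]
      have h1 : List.countP (fun v => decide (1 + t * a ≤ v)) (xs.take t) = 0 := by
        rw [List.countP_eq_zero]
        intro v hvt
        obtain ⟨j, hj, hvj⟩ := List.mem_iff_getElem.mp hvt
        rw [List.getElem_take] at hvj
        have hjt : j < t := by rw [List.length_take] at hj; omega
        have hjn : j < n := by rw [List.length_take] at hj; omega
        obtain ⟨k, hk1, hk2, hk3⟩ := hcond j hjn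
        have hjlen : j < xs.length := by omega
        rw [List.getD_eq_getElem xs 0 hjlen, hvj] at hk3
        have hka : (k - 1 + 1) * a ≤ t * a := Nat.mul_le_mul_right a (by omega)
        rw [add_one_mul] at hka
        simp only [decide_eq_true_eq, not_le]
        omega
      have h2 : List.countP (fun v => decide (1 + t * a ≤ v)) (xs.drop t) ≤ n - t := by
        refine le_trans (List.countP_le_length) ?_
        rw [List.length_drop]
        omega
      omega
    intro x' hpermx'
    have hlen' : x'.length = n := by rw [← hpermx'.length_eq, hxlen]
    refine ⟨by rw [hlen', hylen], ?_, ?_⟩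
    · intro v hv
      rw [hysum]
      exact hxm v (hpermx'.mem_iff.mpr hv)
    · cases x' with
      | nil => simp at hlen'; omega
      | cons v₀ vs =>
        have hvs : vs.length = n - 1 := by
          simp only [List.length_cons] at hlen'; omega
        rw [List.zip_cons_cons, zip_replicate a vs (n-1) hvs]
        have hv₀x : v₀ ∈ x := hpermx'.mem_iff.mpr (List.mem_cons_self)
        obtain ⟨q₀, hq₀n, hv₀⟩ := halignx v₀ hv₀x
        subst hv₀
        have hq₀a : q₀ * a ≤ (n-1) * a := Nat.mul_le_mul_right a hq₀n
        refine Park.cons _ _ _ _ (1 + q₀ * a) ⟨⟨le_refl _, by rw [hysum]; omega, by simp⟩,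
          fun s' hs' hf => absurd hf.1 (by omega)⟩ ?_
        rw [Finset.empty_union]
        have hqcC : q₀ + c ≤ c + (n - 1) := by omega
        have hms : (b :: List.replicate (n - 1) a).sum = (c + (n-1)) * a := by
          rw [hysum, hc]; ring
        rw [hms]
        have hocc : Finset.Ico (1 + q₀*a) (1 + q₀*a + b)
            = Finset.Icc 1 ((c + (n-1))*a)
              \ bs a (Finset.range (c + (n-1)) \ Finset.Ico q₀ (q₀ + c)) := by
          rw [occ_compl ha (c + (n-1)) q₀ c hqcC]
          congr 1
          rw [hc]; ring
        rw [hocc]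
        refine unit_park a (c + (n-1)) ha vs _ Finset.sdiff_subset ?_ ?_
        · intro w hw
          obtain ⟨q, _, hq⟩ := halignx w (hpermx'.mem_iff.mpr (List.mem_cons_of_mem _ hw))
          exact ⟨q, hq⟩
        · intro t
          have hsetEq : (Finset.range (c + (n-1)) \ Finset.Ico q₀ (q₀ + c)).filter
              (fun e => t ≤ e) = Finset.Ico t (c + (n-1)) \ Finset.Ico q₀ (q₀ + c) := by
            ext e
            simp only [Finset.mem_filter, Finset.mem_sdiff, Finset.mem_range, Finset.mem_Ico]
            omega
          rw [hsetEq]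
          have hcx' : ∀ u, List.countP (fun v => decide (1 + u * a ≤ v)) ((1 + q₀*a) :: vs)
              ≤ n - u := fun u => by
            rw [← hpermx'.countP_eq]
            exact hcountB u
          rcases le_or_gt t q₀ with h1 | h1
          · have hsub : Finset.Ico q₀ (q₀ + c) ⊆ Finset.Ico t (c + (n-1)) := by
              intro e he
              simp only [Finset.mem_Ico] at he ⊢
              omega
            rw [Finset.card_sdiff_of_subset hsub, Nat.card_Ico, Nat.card_Ico]
            have hcxp := hcx' t
            rw [List.countP_cons] at hcxp
            have hta : t * a ≤ q₀ * a := Nat.mul_le_mul_right a h1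
            have hd : (decide (1 + t*a ≤ 1 + q₀*a)) = true := by
              simp only [decide_eq_true_eq]; omega
            rw [hd] at hcxp
            simp only [if_true] at hcxp
            omega
          · rcases le_or_gt t (q₀ + c) with h2 | h2
            · have hem : Finset.Ico t (c + (n-1)) \ Finset.Ico q₀ (q₀ + c)
                  = Finset.Ico t (c + (n-1)) \ Finset.Ico t (q₀ + c) := by
                ext e
                simp only [Finset.mem_sdiff, Finset.mem_Ico]
                omega
              have hsub : Finset.Ico t (q₀ + c) ⊆ Finset.Ico t (c + (n-1)) := by
                intro e he
                simp only [Finset.mem_Ico] at he ⊢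
                omega
              rw [hem, Finset.card_sdiff_of_subset hsub, Nat.card_Ico, Nat.card_Ico]
              have hmono2 : List.countP (fun v => decide (1 + t * a ≤ v)) vs
                  ≤ List.countP (fun v => decide (1 + (q₀+1) * a ≤ v)) vs := by
                apply List.countP_mono_left
                intro w _ hw
                simp only [decide_eq_true_eq] at hw ⊢
                have : (q₀+1) * a ≤ t * a := Nat.mul_le_mul_right a h1
                omega
              have hcxp := hcx' (q₀ + 1)
              rw [List.countP_cons] at hcxp
              have hd : (decide (1 + (q₀+1)*a ≤ 1 + q₀*a)) = false := by
                simp only [decide_eq_false_iff_not, not_le, add_one_mul]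
                omega
              rw [hd] at hcxp
              simp only [Bool.false_eq_true, if_false, add_zero] at hcxp
              omega
            · have hem : Finset.Ico t (c + (n-1)) \ Finset.Ico q₀ (q₀ + c)
                  = Finset.Ico t (c + (n-1)) := by
                ext e
                simp only [Finset.mem_sdiff, Finset.mem_Ico]
                omega
              rw [hem, Nat.card_Ico]
              have hcxp := hcx' t
              have hvsle : List.countP (fun v => decide (1 + t * a ≤ v)) vs
                  ≤ List.countP (fun v => decide (1 + t * a ≤ v)) ((1 + q₀*a) :: vs) := by
                rw [List.countP_cons]
                omega
              omega
end

section
/- Let y = (b, a, a, ..., a) ∈ ℕ^n with n ≥ 2 (first car has length b, the remaining n−1 cars have length a), and let x ∈ [m]^n where m = b + (n−1)a. If b > (n−1)a, then x ∈ PAinv_n(y) if and only if for every i ∈ [n], the i-th smallest entry x_{(i)} belongs to {1 + (k−1)a : k ∈ [i]}. -/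
theorem park_prefix {m : ℕ} : ∀ (l1 l2 : List (ℕ × ℕ)) (occ : Finset ℕ),
    Park m occ (l1 ++ l2) → Park m occ l1 := by
  intro l1
  induction l1 with
  | nil => intro _ occ _; exact Park.nil occ
  | cons c l ih =>
    intro l2 occ h
    obtain ⟨pref, len⟩ := c
    cases h with
    | cons _ _ _ _ s hp hrest =>
      exact Park.cons occ pref len l s hp (ih l2 _ hrest)

theorem park_card_le {m p : ℕ} : ∀ (l : List (ℕ × ℕ)) (occ : Finset ℕ),
    Park m occ l → (∀ c ∈ l, p ≤ c.1) → occ ⊆ Finset.Icc p m →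
    occ.card + (l.map Prod.snd).sum ≤ m + 1 - p := by
  intro l
  induction l with
  | nil =>
    intro occ _ _ hsub
    simpa using (Finset.card_le_card hsub).trans (by simp [Nat.card_Icc])
  | cons c l ih =>
    intro occ hpark hpref hsub
    obtain ⟨pref, len⟩ := c
    cases hpark with
    | cons _ _ _ _ s hp hrest =>
      obtain ⟨⟨hps, hsm, hdisj⟩, _⟩ := hp
      have hple : p ≤ s := le_trans (hpref (pref, len) (List.mem_cons_self)) hps
      have hsub' : occ ∪ Finset.Ico s (s + len) ⊆ Finset.Icc p m := by
        intro t ht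
        rcases Finset.mem_union.1 ht with h | h
        · exact hsub h
        · rw [Finset.mem_Ico] at h
          rw [Finset.mem_Icc]
          exact ⟨le_trans hple h.1, by omega⟩
      have hcard : (occ ∪ Finset.Ico s (s + len)).card = occ.card + len := by
        rw [Finset.card_union_of_disjoint, Nat.card_Ico]
        · omega
        · rw [Finset.disjoint_right]
          intro t ht
          exact hdisj t ht
      have := ih _ hrest (fun c hc => hpref c (by simp [hc])) hsub'
      rw [hcard] at this
      simp only [List.map_cons, List.sum_cons]
      omega
theorem park_final {m a v : ℕ} (ha : 0 < a) : ∀ (l : List (ℕ × ℕ)) (occ : Finset ℕ),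
    Park m occ l → (∀ c ∈ l, c.2 = a ∧ 1 ≤ c.1) → occ ⊆ Finset.Icc 1 m → v ∈ occ →
    ∃ occ' : Finset ℕ, occ ⊆ occ' ∧ occ' ⊆ Finset.Icc 1 m ∧
      occ'.card = occ.card + (l.map Prod.snd).sum ∧
      (occ' ∩ Finset.Icc 1 (v-1)).card ≡ (occ ∩ Finset.Icc 1 (v-1)).card [MOD a] := by
  intro l
  induction l with
  | nil =>
    intro occ _ _ hsub _
    exact ⟨occ, subset_rfl, hsub, by simp, Nat.ModEq.refl _⟩
  | cons c l ih =>
    intro occ hpark hlen hsub hv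
    obtain ⟨pref, len⟩ := c
    obtain ⟨hla, hp1⟩ := hlen (pref, len) (List.mem_cons_self)
    simp only at hla hp1
    subst hla
    cases hpark with
    | cons _ _ _ _ s hp hrest =>
      obtain ⟨⟨hps, hsm, hdisj⟩, _⟩ := hp
      have hs1 : 1 ≤ s := le_trans hp1 hps
      set I := Finset.Ico s (s + len) with hI
      have hsubI : occ ∪ I ⊆ Finset.Icc 1 m := by
        intro t ht
        rcases Finset.mem_union.1 ht with h | h
        · exact hsub h
        · rw [Finset.mem_Ico] at h; rw [Finset.mem_Icc]; omega
      have hvmem : v ∈ occ ∪ I := Finset.mem_union_left _ hv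
      obtain ⟨occ', h1, h2, h3, h4⟩ := ih _ hrest
        (fun c hc => hlen c (List.mem_cons_of_mem _ hc)) hsubI hvmem
      refine ⟨occ', le_trans (Finset.subset_union_left) h1, h2, ?_, ?_⟩
      · have hcard : (occ ∪ I).card = occ.card + len := by
          rw [Finset.card_union_of_disjoint, Nat.card_Ico]
          · omega
          · rw [Finset.disjoint_right]; intro t ht; exact hdisj t ht
        rw [h3, hcard]
        simp only [List.map_cons, List.sum_cons]
        omega
      · -- mod step
        have hvnotI : v ∉ I := fun h => hdisj v h hv
        have hIL : I ∩ Finset.Icc 1 (v-1) = I ∨ I ∩ Finset.Icc 1 (v-1) = ∅ := by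
          by_cases hc : s + len ≤ v
          · left
            apply Finset.inter_eq_left.2
            intro t ht
            rw [Finset.mem_Ico] at ht; rw [Finset.mem_Icc]; omega
          · right
            have hvs : v < s := by
              by_contra hvs
              exact hvnotI (Finset.mem_Ico.2 ⟨by omega, by omega⟩)
            apply Finset.eq_empty_of_forall_notMem
            intro t ht
            rw [Finset.mem_inter, Finset.mem_Ico, Finset.mem_Icc] at ht
            omega
        have hdisjL : Disjoint (occ ∩ Finset.Icc 1 (v-1)) (I ∩ Finset.Icc 1 (v-1)) := by
          apply Finset.disjoint_of_subset_left (Finset.inter_subset_left)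
          apply Finset.disjoint_of_subset_right (Finset.inter_subset_left)
          rw [Finset.disjoint_right]; intro t ht; exact hdisj t ht
        have hunion : (occ ∪ I) ∩ Finset.Icc 1 (v-1)
            = (occ ∩ Finset.Icc 1 (v-1)) ∪ (I ∩ Finset.Icc 1 (v-1)) :=
          Finset.union_inter_distrib_right _ _ _
        have hcardI : (I ∩ Finset.Icc 1 (v-1)).card % len = 0 := by
          rcases hIL with h | h
          · rw [h, hI, Nat.card_Ico]; simp
          · rw [h]; simp
        have : ((occ ∪ I) ∩ Finset.Icc 1 (v-1)).card
            = (occ ∩ Finset.Icc 1 (v-1)).card + (I ∩ Finset.Icc 1 (v-1)).card := by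
          rw [hunion, Finset.card_union_of_disjoint hdisjL]
        calc (occ' ∩ Finset.Icc 1 (v-1)).card
            ≡ ((occ ∪ I) ∩ Finset.Icc 1 (v-1)).card [MOD len] := h4
          _ ≡ (occ ∩ Finset.Icc 1 (v-1)).card [MOD len] := by
              rw [this]
              have : (I ∩ Finset.Icc 1 (v-1)).card ≡ 0 [MOD len] := by
                unfold Nat.ModEq; simp [hcardI]
              simpa using (Nat.ModEq.refl (occ ∩ Finset.Icc 1 (v-1)).card).add this

theorem zip_replicate {a : ℕ} : ∀ (R : List ℕ) (k : ℕ), R.length = k →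
    R.zip (List.replicate k a) = R.map (fun q => (q, a)) := by
  intro R
  induction R with
  | nil => intro k _; simp
  | cons q R ih =>
    intro k hk
    cases k with
    | zero => simp at hk
    | succ k =>
      simp only [List.replicate_succ, List.zip_cons_cons, List.map_cons]
      rw [ih k (by simpa using hk)]
/-- cell `u` of the grid -/
def cellF (a u : ℕ) : Finset ℕ := Finset.Ico (1 + u * a) (1 + u * a + a)

/-- Occupied set: cells indexed by `S` plus a contiguous block starting at cell `j`. -/
def occSet (a b j : ℕ) (S : Finset ℕ) (r : ℕ) : Finset ℕ :=
  S.biUnion (cellF a) ∪ Finset.Ico (1 + j * a) (1 + j * a + b + r * a)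

lemma mem_occSet {a b j r t : ℕ} {S : Finset ℕ} :
    t ∈ occSet a b j S r ↔
      (∃ u ∈ S, 1 + u * a ≤ t ∧ t < 1 + u * a + a) ∨
        (1 + j * a ≤ t ∧ t < 1 + j * a + b + r * a) := by
  simp [occSet, cellF, Finset.mem_biUnion, Finset.mem_Ico]

lemma mem_occSet_of {a b j r t s' : ℕ} {S : Finset ℕ} (ha : 0 < a)
    (hcell : ∀ u, t ≤ u → u < j → u ∈ S)
    (h1 : 1 + t * a ≤ s') (h2 : s' < 1 + j * a + b + r * a) :
    s' ∈ occSet a b j S r := by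
  rw [mem_occSet]
  by_cases hjs : 1 + j * a ≤ s'
  · exact Or.inr ⟨hjs, h2⟩
  · push_neg at hjs
    left
    have e := Nat.div_add_mod (s' - 1) a
    have hr : (s' - 1) % a < a := Nat.mod_lt _ ha
    set u := (s' - 1) / a with hu
    have hta : t * a ≤ s' - 1 := by
      have hta' : 1 ≤ t * a + 1 := by omega
      omega
    have htu : t ≤ u := (Nat.le_div_iff_mul_le ha).2 hta
    have huj : u < j := by
      rw [hu, Nat.div_lt_iff_lt_mul ha]
      omega
    refine ⟨u, hcell u htu huj, ?_, ?_⟩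
    · have : a * u ≤ s' - 1 := by omega
      rw [mul_comm] at this ⊢
      omega
    · rw [mul_comm]
      omega

lemma filter_range_eq {S : Finset ℕ} {t u : ℕ} (htu : t ≤ u + 1)
    (h : ∀ w, t ≤ w → w ≤ u → w ∈ S) :
    (Finset.range (u + 1)).filter (fun w => w ∉ S)
      = (Finset.range t).filter (fun w => w ∉ S) := by
  ext w
  simp only [Finset.mem_filter, Finset.mem_range]
  constructor
  · rintro ⟨hw, hws⟩
    refine ⟨?_, hws⟩
    by_contra hwt
    exact hws (h w (by omega) (by omega))
  · rintro ⟨hw, hws⟩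
    exact ⟨by omega, hws⟩
lemma count_helper {S : Finset ℕ} {R : List ℕ} {a t u j : ℕ} (ha : 0 < a)
    (hinv : ∀ u < j, ((Finset.range (u + 1)).filter (fun w => w ∉ S)).card
      ≤ ((1 + t * a) :: R).countP (fun q => q ≤ 1 + u * a))
    (hu : u < j) (htu : t ≤ u)
    (hcell : ∀ w, t ≤ w → w ≤ u → w ∈ S) :
    ((Finset.range (u + 1)).filter (fun w => w ∉ S)).card
      ≤ R.countP (fun q => q ≤ 1 + u * a) := by
  rw [filter_range_eq (by omega) hcell]
  rcases Nat.eq_zero_or_pos t with ht0 | ht0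
  · subst ht0; simp
  · have h1 := hinv (t - 1) (by omega)
    rw [show t - 1 + 1 = t by omega] at h1
    have hlt : (t - 1) * a < t * a := Nat.mul_lt_mul_of_lt_of_le (by omega) le_rfl ha
    rw [List.countP_cons_of_neg] at h1
    · refine le_trans h1 (List.countP_mono_left ?_)
      intro x _ hx
      simp only [decide_eq_true_eq] at hx ⊢
      have : (t - 1) * a ≤ u * a := Nat.mul_le_mul_right a (by omega)
      omega
    · simp only [decide_eq_true_eq]
      omega

theorem sim (n a b : ℕ) (ha : 0 < a) (hbig : (n - 1) * a < b) :
    ∀ (R : List ℕ) (j : ℕ) (S : Finset ℕ) (r : ℕ), j ≤ n - 1 →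
    S ⊆ Finset.range j →
    S.card + r + R.length = n - 1 →
    (∀ q ∈ R, ∃ t, t ≤ n - 1 ∧ q = 1 + t * a) →
    (∀ u < j, ((Finset.range (u + 1)).filter (fun w => w ∉ S)).card
        ≤ R.countP (fun q => q ≤ 1 + u * a)) →
    Park (b + (n - 1) * a) (occSet a b j S r) (R.map (fun q => (q, a))) := by
  intro R
  induction R with
  | nil => intro j S r _ _ _ _ _; exact Park.nil _
  | cons q R ih =>
    intro j S r hj hS hcnt hgrid hinv
    obtain ⟨t, htn, rfl⟩ := hgrid _ (List.mem_cons_self)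
    have hgrid' : ∀ q ∈ R, ∃ t, t ≤ n - 1 ∧ q = 1 + t * a :=
      fun q hq => hgrid q (List.mem_cons_of_mem _ hq)
    have hjn : j * a ≤ (n - 1) * a := Nat.mul_le_mul_right a hj
    have htna : t * a ≤ (n - 1) * a := Nat.mul_le_mul_right a htn
    rw [List.map_cons]
    by_cases hex : ∃ u, (t ≤ u ∧ u < j) ∧ u ∉ S
    · -- park in the left region, at the first free cell u0 ≥ t
      set u0 := Nat.find hex with hu0
      obtain ⟨⟨hu0t, hu0j⟩, hu0S⟩ : (t ≤ u0 ∧ u0 < j) ∧ u0 ∉ S := Nat.find_spec hex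
      set s := 1 + u0 * a with hs
      have hta_le : t * a ≤ u0 * a := Nat.mul_le_mul_right a hu0t
      have hu1j : u0 * a + a ≤ j * a := by
        have := Nat.mul_le_mul_right a (show u0 + 1 ≤ j by omega)
        rw [Nat.add_mul] at this; omega
      have hfits : FitsAt (occSet a b j S r) (b + (n - 1) * a) (1 + t * a) a s := by
        refine ⟨by omega, by omega, ?_⟩
        intro t' ht'
        rw [Finset.mem_Ico] at ht'
        rw [mem_occSet]
        push_neg
        constructor
        · intro u huS hle
          have hne : u ≠ u0 := fun h => hu0S (h ▸ huS)
          have huj : u < j := Finset.mem_range.1 (hS huS)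
          rcases lt_or_gt_of_ne hne with h | h
          · have : (u + 1) * a ≤ u0 * a := Nat.mul_le_mul_right a (by omega)
            rw [Nat.add_mul] at this; omega
          · have : (u0 + 1) * a ≤ u * a := Nat.mul_le_mul_right a (by omega)
            rw [Nat.add_mul] at this; omega
        · intro h; omega
      have hparks : ParksAt (occSet a b j S r) (b + (n - 1) * a) (1 + t * a) a s := by
        refine ⟨hfits, ?_⟩
        intro s' hs' hfit'
        have hpref := hfit'.1
        have hs'mem : s' ∈ occSet a b j S r := by
          have e := Nat.div_add_mod (s' - 1) a
          have hrm : (s' - 1) % a < a := Nat.mod_lt _ ha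
          set u := (s' - 1) / a with hu
          have htu : t ≤ u := (Nat.le_div_iff_mul_le ha).2 (by omega)
          have huu0 : u < u0 := by
            rw [hu, Nat.div_lt_iff_lt_mul ha]
            have : s' < 1 + u0 * a := hs'
            rw [mul_comm u0 a] at this ⊢
            omega
          have huS : u ∈ S := by
            by_contra hnot
            exact Nat.find_min hex huu0 ⟨⟨htu, by omega⟩, hnot⟩
          rw [mem_occSet]
          exact Or.inl ⟨u, huS, by rw [mul_comm]; omega, by rw [mul_comm]; omega⟩
        exact hfit'.2.2 s' (Finset.mem_Ico.2 ⟨le_rfl, by omega⟩) hs'mem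
      refine Park.cons _ _ _ _ s hparks ?_
      have hocc : occSet a b j S r ∪ Finset.Ico s (s + a) = occSet a b j (insert u0 S) r := by
        rw [hs]
        ext w
        simp only [occSet, cellF, Finset.biUnion_insert, Finset.mem_union]
        tauto
      rw [hocc]
      apply ih j (insert u0 S) r hj
      · exact Finset.insert_subset (Finset.mem_range.2 hu0j) hS
      · rw [Finset.card_insert_of_notMem hu0S]
        simp only [List.length_cons] at hcnt
        omega
      · exact hgrid'
      · intro u hu
        by_cases hcase : u0 ≤ u
        · have hmem : u0 ∈ (Finset.range (u + 1)).filter (fun w => w ∉ S) := by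
            simp only [Finset.mem_filter, Finset.mem_range]
            exact ⟨by omega, hu0S⟩
          have hseteq : (Finset.range (u + 1)).filter (fun w => w ∉ insert u0 S)
              = ((Finset.range (u + 1)).filter (fun w => w ∉ S)).erase u0 := by
            ext w
            simp only [Finset.mem_filter, Finset.mem_range, Finset.mem_insert,
              Finset.mem_erase]
            tauto
          rw [hseteq, Finset.card_erase_of_mem hmem]
          have h1 := hinv u hu
          have hq : decide (1 + t * a ≤ 1 + u * a) = true := by
            simp only [decide_eq_true_eq]
            have : t * a ≤ u * a := Nat.mul_le_mul_right a (by omega)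
            omega
          rw [List.countP_cons_of_pos (p := fun q => decide (q ≤ 1 + u * a)) hq] at h1
          have hpos : 0 < ((Finset.range (u + 1)).filter (fun w => w ∉ S)).card :=
            Finset.card_pos.2 ⟨u0, hmem⟩
          omega
        · push_neg at hcase
          have hseteq : (Finset.range (u + 1)).filter (fun w => w ∉ insert u0 S)
              = (Finset.range (u + 1)).filter (fun w => w ∉ S) := by
            ext w
            simp only [Finset.mem_filter, Finset.mem_range, Finset.mem_insert]
            constructor
            · rintro ⟨h1, h2⟩; exact ⟨h1, fun hw => h2 (Or.inr hw)⟩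
            · rintro ⟨h1, h2⟩
              refine ⟨h1, ?_⟩
              rintro (rfl | hw)
              · omega
              · exact h2 hw
          rw [hseteq]
          by_cases htu : t ≤ u
          · refine count_helper ha hinv hu htu ?_
            intro w hw1 hw2
            by_contra hwS
            exact Nat.find_min hex (show w < u0 by omega) ⟨⟨hw1, by omega⟩, hwS⟩
          · push_neg at htu
            have h1 := hinv u hu
            have hq : ¬(decide (1 + t * a ≤ 1 + u * a) = true) := by
              simp only [decide_eq_true_eq]
              have : u * a < t * a := Nat.mul_lt_mul_of_lt_of_le htu le_rfl ha
              omega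
            rw [List.countP_cons_of_neg (p := fun q => decide (q ≤ 1 + u * a)) hq] at h1
            exact h1
    · -- park in the right region
      push_neg at hex
      have hcell : ∀ u, t ≤ u → u < j → u ∈ S := fun u h1 h2 => hex u ⟨h1, h2⟩
      have hcardS : S.card ≤ j := by
        have := Finset.card_le_card hS
        simpa using this
      have hfr : ((Finset.range j).filter (fun w => w ∉ S)).card = j - S.card := by
        rw [show (Finset.range j).filter (fun w => w ∉ S) = Finset.range j \ S by
          rw [Finset.sdiff_eq_filter]]
        rw [Finset.card_sdiff_of_subset hS, Finset.card_range]
      have hkey : j - S.card ≤ R.length := by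
        by_cases htj : j ≤ t
        · rcases Nat.eq_zero_or_pos j with hj0 | hj0
          · omega
          · have h1 := hinv (j - 1) (by omega)
            rw [show j - 1 + 1 = j by omega] at h1
            have hq : ¬(decide (1 + t * a ≤ 1 + (j - 1) * a) = true) := by
              simp only [decide_eq_true_eq]
              have : (j - 1) * a < t * a := Nat.mul_lt_mul_of_lt_of_le (by omega) le_rfl ha
              omega
            rw [List.countP_cons_of_neg (p := fun q => decide (q ≤ 1 + (j - 1) * a)) hq] at h1
            have := List.countP_le_length (l := R) (p := fun q => q ≤ 1 + (j - 1) * a)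
            omega
        · push_neg at htj
          have heq : (Finset.range j).filter (fun w => w ∉ S)
              = (Finset.range t).filter (fun w => w ∉ S) := by
            have := filter_range_eq (S := S) (t := t) (u := j - 1) (by omega)
              (fun w hw1 hw2 => hcell w hw1 (by omega))
            rwa [show j - 1 + 1 = j by omega] at this
          rcases Nat.eq_zero_or_pos t with ht0 | ht0
          · rw [heq, ht0] at hfr
            simp only [Finset.range_zero, Finset.filter_empty, Finset.card_empty] at hfr
            omega
          · have h1 := hinv (t - 1) (by omega)
            rw [show t - 1 + 1 = t by omega] at h1
            have hq : ¬(decide (1 + t * a ≤ 1 + (t - 1) * a) = true) := by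
              simp only [decide_eq_true_eq]
              have : (t - 1) * a < t * a := Nat.mul_lt_mul_of_lt_of_le (by omega) le_rfl ha
              omega
            rw [List.countP_cons_of_neg (p := fun q => decide (q ≤ 1 + (t - 1) * a)) hq] at h1
            have := List.countP_le_length (l := R) (p := fun q => q ≤ 1 + (t - 1) * a)
            rw [heq] at hfr
            omega
      have hroom : j + r + 1 ≤ n - 1 := by
        simp only [List.length_cons] at hcnt
        omega
      set s := 1 + j * a + b + r * a with hs
      have hra : (j + r + 1) * a ≤ (n - 1) * a := Nat.mul_le_mul_right a hroom
      have hra' : j * a + r * a + a ≤ (n - 1) * a := by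
        rw [Nat.add_mul, Nat.add_mul, Nat.one_mul] at hra
        omega
      have hfits : FitsAt (occSet a b j S r) (b + (n - 1) * a) (1 + t * a) a s := by
        refine ⟨by omega, by omega, ?_⟩
        intro t' ht'
        rw [Finset.mem_Ico] at ht'
        rw [mem_occSet]
        push_neg
        constructor
        · intro u huS hle
          have huj : u < j := Finset.mem_range.1 (hS huS)
          have : (u + 1) * a ≤ j * a := Nat.mul_le_mul_right a (by omega)
          rw [Nat.add_mul] at this
          omega
        · intro h; omega
      have hparks : ParksAt (occSet a b j S r) (b + (n - 1) * a) (1 + t * a) a s := by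
        refine ⟨hfits, ?_⟩
        intro s' hs' hfit'
        have hpref := hfit'.1
        have hs'mem : s' ∈ occSet a b j S r :=
          mem_occSet_of ha hcell (by omega) (by omega)
        exact hfit'.2.2 s' (Finset.mem_Ico.2 ⟨le_rfl, by omega⟩) hs'mem
      refine Park.cons _ _ _ _ s hparks ?_
      have hocc : occSet a b j S r ∪ Finset.Ico s (s + a) = occSet a b j S (r + 1) := by
        unfold occSet
        rw [Finset.union_assoc,
          Finset.Ico_union_Ico_eq_Ico (by omega) (by omega : s ≤ s + a)]
        have : 1 + j * a + b + (r + 1) * a = s + a := by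
          rw [Nat.succ_mul]; omega
        rw [this]
      rw [hocc]
      apply ih j S (r + 1) hj hS
      · simp only [List.length_cons] at hcnt
        omega
      · exact hgrid'
      · intro u hu
        by_cases htu : t ≤ u
        · exact count_helper ha hinv hu htu (fun w hw1 hw2 => hcell w hw1 (by omega))
        · push_neg at htu
          have h1 := hinv u hu
          have hq : ¬(decide (1 + t * a ≤ 1 + u * a) = true) := by
            simp only [decide_eq_true_eq]
            have : u * a < t * a := Nat.mul_lt_mul_of_lt_of_le htu le_rfl ha
            omega
          rw [List.countP_cons_of_neg (p := fun q => decide (q ≤ 1 + u * a)) hq] at h1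
          exact h1
lemma sorted_countP_le {xs : List ℕ} (hsort : xs.Pairwise (· ≤ ·)) {i c : ℕ}
    (hi : i < xs.length) (hc : xs.getD i 0 ≤ c) :
    i + 1 ≤ xs.countP (fun q => q ≤ c) := by
  have hlen : (xs.take (i + 1)).length = i + 1 := by rw [List.length_take]; omega
  have hgd : xs.getD i 0 = xs.get ⟨i, hi⟩ := by
    rw [List.getD_eq_getElem?_getD, List.getElem?_eq_getElem hi]; rfl
  have hall : ∀ v ∈ xs.take (i + 1), v ≤ c := by
    intro v hv
    obtain ⟨k, hk, hkv⟩ := List.mem_iff_getElem.1 hv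
    have hki : k ≤ i := by rw [hlen] at hk; omega
    have hkx : k < xs.length := by omega
    have hkv' : xs.get ⟨k, hkx⟩ = v := by
      rw [← hkv, List.getElem_take]; rfl
    have hrel : xs.get ⟨k, hkx⟩ ≤ xs.get ⟨i, hi⟩ :=
      hsort.rel_get_of_le (by simpa using hki)
    omega
  have h1 : (xs.take (i + 1)).countP (fun q => decide (q ≤ c)) = i + 1 := by
    rw [List.countP_eq_length.2 (fun v hv => by simpa using hall v hv), hlen]
  have h2 : xs.countP (fun q => decide (q ≤ c))
      = (xs.take (i + 1)).countP (fun q => decide (q ≤ c))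
        + (xs.drop (i + 1)).countP (fun q => decide (q ≤ c)) := by
    conv_lhs => rw [← List.take_append_drop (i + 1) xs]
    rw [List.countP_append]
  omega

lemma sorted_countP_ge {xs : List ℕ} (hsort : xs.Pairwise (· ≤ ·)) {i c : ℕ}
    (hi : i < xs.length) (hc : c ≤ xs.getD i 0) :
    xs.length - i ≤ xs.countP (fun q => c ≤ q) := by
  have hlen : (xs.drop i).length = xs.length - i := by rw [List.length_drop]
  have hgd : xs.getD i 0 = xs.get ⟨i, hi⟩ := by
    rw [List.getD_eq_getElem?_getD, List.getElem?_eq_getElem hi]; rfl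
  have hall : ∀ v ∈ xs.drop i, c ≤ v := by
    intro v hv
    obtain ⟨k, hk, hkv⟩ := List.mem_iff_getElem.1 hv
    have hkx : i + k < xs.length := by rw [hlen] at hk; omega
    have hkv' : xs.get ⟨i + k, hkx⟩ = v := by
      rw [← hkv, List.getElem_drop]; rfl
    have hrel : xs.get ⟨i, hi⟩ ≤ xs.get ⟨i + k, hkx⟩ :=
      hsort.rel_get_of_le (by simp)
    omega
  have h1 : (xs.drop i).countP (fun q => decide (c ≤ q)) = xs.length - i := by
    rw [List.countP_eq_length.2 (fun v hv => by simpa using hall v hv), hlen]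
  have h2 : xs.countP (fun q => decide (c ≤ q))
      = (xs.take i).countP (fun q => decide (c ≤ q))
        + (xs.drop i).countP (fun q => decide (c ≤ q)) := by
    conv_lhs => rw [← List.take_append_drop i xs]
    rw [List.countP_append]
  omega

/-- for `y = (b, a^{n−1})` with `b > (n−1)a`, `x ∈ PAinv_n(y)` iff for all
`i ∈ [n]` the `i`-th smallest entry of `x` is of the form `1 + (k−1)a` with `k ∈ [i]`.
Here `xs` is the nondecreasing rearrangement of `x` (0-based indexing). -/
theorem stmt3 (n a b : ℕ) (hn : 2 ≤ n) (ha : 0 < a) (hb : 0 < b)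
    (y : List ℕ) (hy : y = b :: List.replicate (n - 1) a)
    (x : List ℕ) (hxlen : x.length = n)
    (hxm : ∀ v ∈ x, 1 ≤ v ∧ v ≤ b + (n - 1) * a)
    (xs : List ℕ) (hperm : xs.Perm x) (hsort : xs.Pairwise (· ≤ ·))
    (hbig : (n - 1) * a < b) :
    PAinv y x ↔
      ∀ i < n, ∃ k, 1 ≤ k ∧ k ≤ i + 1 ∧ xs.getD i 0 = 1 + (k - 1) * a := by
  have hxslen : xs.length = n := hperm.length_eq.trans hxlen
  have hsum' : (b :: List.replicate (n - 1) a).sum = b + (n - 1) * a := by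
    simp [List.sum_replicate, smul_eq_mul]
  have hsum : y.sum = b + (n - 1) * a := by rw [hy]; exact hsum'
  have hylen : y.length = n := by rw [hy]; simp; omega
  have hgetd : ∀ i (hi : i < n), xs.getD i 0 = xs.get ⟨i, lt_of_lt_of_eq hi hxslen.symm⟩ := by
    intro i hi
    rw [List.getD_eq_getElem?_getD, List.getElem?_eq_getElem (by omega)]; rfl
  constructor
  · intro hinv
    have hub : ∀ v ∈ x, v ≤ (n - 1) * a + 1 := by
      intro v hv
      obtain ⟨_, _, hpark⟩ := hinv (v :: x.erase v) (List.perm_cons_erase hv)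
      rw [hy, hsum', List.zip_cons_cons] at hpark
      cases hpark with
      | cons _ _ _ _ s hps _ =>
        obtain ⟨⟨h1, h2, _⟩, _⟩ := hps
        omega
    have hdvd : ∀ v ∈ x, a ∣ (v - 1) := by
      intro v hv
      have hv1 : 1 ≤ v := (hxm v hv).1
      have hvu : v ≤ (n - 1) * a + 1 := hub v hv
      obtain ⟨_, _, hpark⟩ := hinv (v :: x.erase v) (List.perm_cons_erase hv)
      rw [hy, hsum', List.zip_cons_cons] at hpark
      cases hpark with
      | cons _ _ _ _ s hps hrest =>
        obtain ⟨⟨h1, h2, _⟩, hmin⟩ := hps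
        have hsv : s = v := by
          by_contra hne
          exact hmin v (by omega) ⟨le_rfl, by omega, by simp⟩
        rw [Finset.empty_union, hsv] at hrest
        have herlen : (x.erase v).length = n - 1 := by
          rw [List.length_erase_of_mem hv, hxlen]
        have hprop : ∀ c ∈ (x.erase v).zip (List.replicate (n - 1) a),
            c.2 = a ∧ 1 ≤ c.1 := by
          intro c hc
          obtain ⟨c1, c2⟩ := c
          obtain ⟨hc1, hc2⟩ := List.of_mem_zip hc
          exact ⟨List.eq_of_mem_replicate hc2, (hxm c1 (List.mem_of_mem_erase hc1)).1⟩
        have hocc_sub : Finset.Ico v (v + b) ⊆ Finset.Icc 1 (b + (n - 1) * a) := by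
          intro t ht; rw [Finset.mem_Ico] at ht; rw [Finset.mem_Icc]; omega
        obtain ⟨occ', hsub1, hsub2, hcard, hmod⟩ :=
          park_final ha _ _ hrest hprop hocc_sub (Finset.mem_Ico.2 ⟨le_rfl, by omega⟩)
        have hmapsum : (((x.erase v).zip (List.replicate (n - 1) a)).map Prod.snd).sum
            = (n - 1) * a := by
          rw [List.map_snd_zip (by simp [herlen])]
          simp [List.sum_replicate, smul_eq_mul]
        have hcard' : occ'.card = b + (n - 1) * a := by
          rw [hcard, hmapsum, Nat.card_Ico]; omega
        have hocc' : occ' = Finset.Icc 1 (b + (n - 1) * a) := by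
          apply Finset.eq_of_subset_of_card_le hsub2
          rw [hcard', Nat.card_Icc]
          omega
        have hL : occ' ∩ Finset.Icc 1 (v - 1) = Finset.Icc 1 (v - 1) := by
          rw [hocc']
          apply Finset.inter_eq_right.2
          intro t ht; rw [Finset.mem_Icc] at ht ⊢; omega
        have hR : Finset.Ico v (v + b) ∩ Finset.Icc 1 (v - 1) = ∅ := by
          apply Finset.eq_empty_of_forall_notMem
          intro t ht
          rw [Finset.mem_inter, Finset.mem_Ico, Finset.mem_Icc] at ht
          omega
        rw [hL, hR] at hmod
        simp only [Finset.card_empty, Nat.card_Icc] at hmod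
        rw [show v - 1 + 1 - 1 = v - 1 by omega] at hmod
        exact (Nat.modEq_zero_iff_dvd).1 hmod
    have hbnd : ∀ i, i < n → xs.getD i 0 ≤ 1 + i * a := by
      intro i hi
      by_contra hgt
      push_neg at hgt
      set v := xs.getD i 0 with hvdef
      have hvi : v ∈ xs := by
        rw [hvdef, hgetd i hi]
        exact List.get_mem _ _
      have hvx : v ∈ x := hperm.subset hvi
      have hv1 : 1 ≤ v := (hxm v hvx).1
      obtain ⟨k', hk'⟩ := hdvd v hvx
      have hik : i < k' := by
        have h0 : a * i < a * k' := by rw [mul_comm a i]; omega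
        exact lt_of_mul_lt_mul_left h0 (Nat.zero_le a)
      have hvge : 1 + (i + 1) * a ≤ v := by
        have h0 : (i + 1) * a ≤ k' * a := Nat.mul_le_mul_right a (by omega)
        rw [mul_comm k' a] at h0; omega
      have hin1 : i + 1 ≤ n - 1 := by
        have hvu := hub v hvx
        by_contra hcon
        have : (n - 1) * a < (i + 1) * a := Nat.mul_lt_mul_of_lt_of_le (by omega) le_rfl ha
        omega
      set p := 1 + (i + 1) * a with hpdef
      set P : ℕ → Bool := fun q => decide (p ≤ q) with hPdef
      have hsplit := List.filter_append_perm P x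
      obtain ⟨_, _, hpark⟩ := hinv _ hsplit.symm
      have hHle : (x.filter P).length ≤ n := by
        rw [← hxlen]; exact List.length_filter_le _ _
      have hHge : n - i ≤ (x.filter P).length := by
        have h1 : xs.length - i ≤ xs.countP P :=
          sorted_countP_ge hsort (by omega) (by rw [← hvdef]; exact hvge)
        have h2 : xs.countP P = x.countP P := hperm.countP_eq _
        rw [← List.countP_eq_length_filter]
        omega
      set H := (x.filter P).length with hHdef
      rw [hy, hsum'] at hpark
      have hxflen : (x.filter P).length
          = (List.take H (b :: List.replicate (n - 1) a)).length := by
        rw [List.length_take]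
        simp only [List.length_cons, List.length_replicate]
        omega
      rw [← List.take_append_drop H (b :: List.replicate (n - 1) a),
        List.zip_append hxflen] at hpark
      have hpre := park_prefix _ _ _ hpark
      have hytake : List.take H (b :: List.replicate (n - 1) a)
          = b :: List.replicate (H - 1) a := by
        rw [show H = H - 1 + 1 by omega, List.take_succ_cons, List.take_replicate]
        congr 2
        omega
      have hcount := park_card_le (m := b + (n - 1) * a) (p := p) _ _ hpre
        (by
          intro c hc
          obtain ⟨c1, c2⟩ := c
          obtain ⟨hc1, _⟩ := List.of_mem_zip hc
          have := List.of_mem_filter hc1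
          simpa [hPdef] using this)
        (Finset.empty_subset _)
      have hmapsum : (((x.filter P).zip
          (List.take H (b :: List.replicate (n - 1) a))).map Prod.snd).sum
          = b + (H - 1) * a := by
        rw [List.map_snd_zip (le_of_eq hxflen.symm), hytake]
        simp [List.sum_replicate, smul_eq_mul]
      rw [hmapsum] at hcount
      have e1 : (i + 1) * a + (n - i - 2) * a = (n - 1) * a := by
        rw [← Nat.add_mul]; congr 1; omega
      have e2 : (n - i - 2) * a + a = (n - i - 1) * a := by
        rw [← Nat.succ_mul]; congr 1; omega
      have e3 : (n - i - 1) * a ≤ (H - 1) * a := Nat.mul_le_mul_right a (by omega)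
      simp only [Finset.card_empty] at hcount
      omega
    intro i hi
    set v := xs.getD i 0 with hvdef
    have hvi : v ∈ xs := by
      rw [hvdef, hgetd i hi]
      exact List.get_mem _ _
    have hvx : v ∈ x := hperm.subset hvi
    have hv1 : 1 ≤ v := (hxm v hvx).1
    obtain ⟨k', hk'⟩ := hdvd v hvx
    have hvb := hbnd i hi
    refine ⟨k' + 1, by omega, ?_, ?_⟩
    · have h0 : a * k' ≤ a * i := by rw [mul_comm a i]; omega
      have : k' ≤ i := le_of_mul_le_mul_left h0 ha
      omega
    · simp only [Nat.add_sub_cancel]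
      rw [mul_comm k' a]
      omega
  · intro hcond x' hpx
    have hx'len : x'.length = n := hpx.length_eq.symm.trans hxlen
    refine ⟨by rw [hx'len, hylen], ?_, ?_⟩
    · intro v hv
      rw [hsum]
      exact hxm v (hpx.mem_iff.2 hv)
    · have hgridx : ∀ v ∈ x, ∃ t, t ≤ n - 1 ∧ v = 1 + t * a := by
        intro v hv
        have hvxs : v ∈ xs := hperm.mem_iff.2 hv
        obtain ⟨i, hi, hiv⟩ := List.mem_iff_getElem.1 hvxs
        rw [hxslen] at hi
        obtain ⟨k, hk1, hk2, hk3⟩ := hcond i hi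
        refine ⟨k - 1, by omega, ?_⟩
        rw [← hiv, show xs[i] = xs.getD i 0 by
          rw [hgetd i hi]; rfl, hk3]
      have hcnt : ∀ u, u < n → u + 1 ≤ x.countP (fun q => q ≤ 1 + u * a) := by
        intro u hu
        obtain ⟨k, hk1, hk2, hk3⟩ := hcond u hu
        have hle : xs.getD u 0 ≤ 1 + u * a := by
          rw [hk3]
          have : (k - 1) * a ≤ u * a := Nat.mul_le_mul_right a (by omega)
          omega
        have h1 := sorted_countP_le hsort (show u < xs.length by omega) hle
        rwa [hperm.countP_eq] at h1
      rcases x' with _ | ⟨q0, R⟩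
      · simp at hx'len; omega
      · have hq0x : q0 ∈ x := hpx.mem_iff.2 (List.mem_cons_self)
        obtain ⟨j, hj, hq0⟩ := hgridx q0 hq0x
        subst hq0
        have hRlen : R.length = n - 1 := by
          simp only [List.length_cons] at hx'len; omega
        rw [hsum, hy, List.zip_cons_cons]
        have hja : j * a ≤ (n - 1) * a := Nat.mul_le_mul_right a hj
        refine Park.cons _ _ _ _ (1 + j * a) ⟨⟨le_rfl, by omega, by simp⟩, ?_⟩ ?_
        · intro s' hs' hfit'
          exact absurd hfit'.1 (by omega)
        · rw [zip_replicate R (n - 1) hRlen]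
          have hocc0 : ∅ ∪ Finset.Ico (1 + j * a) (1 + j * a + b)
              = occSet a b j ∅ 0 := by
            rw [Finset.empty_union]
            unfold occSet
            simp
          rw [hocc0]
          apply sim n a b ha hbig R j ∅ 0 hj (Finset.empty_subset _)
          · simp [hRlen]
          · intro q hq
            exact hgridx q (hpx.mem_iff.2 (List.mem_cons_of_mem _ hq))
          · intro u hu
            have h1 := hcnt u (by omega)
            have h2 : x.countP (fun q => decide (q ≤ 1 + u * a))
                = ((1 + j * a) :: R).countP (fun q => decide (q ≤ 1 + u * a)) :=
              hpx.countP_eq _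
            have hq : ¬(decide (1 + j * a ≤ 1 + u * a) = true) := by
              simp only [decide_eq_true_eq]
              have : u * a < j * a := Nat.mul_lt_mul_of_lt_of_le hu le_rfl ha
              omega
            rw [List.countP_cons_of_neg (p := fun q => decide (q ≤ 1 + u * a)) hq] at h2
            have hfil : ((Finset.range (u + 1)).filter
                (fun w => w ∉ (∅ : Finset ℕ))).card = u + 1 := by
              simp
            rw [hfil]
            omega
end

section
/- Let y = (b, a, a, ..., a) ∈ ℕ^n with n ≥ 2 (first car has length b, the remaining n−1 cars have length a), and let x ∈ [m]^n where m = b + (n−1)a. If a does not divide b and b < (n−1)a, then x ∈ PAinv_n(y) if and only if: for every i ∈ [⌊b/a⌋ + 1], the i-th smallest entry x_{(i)} belongs to {1 + (k−1)a : k ∈ [i]}, and for every i with ⌊b/a⌋ + 1 < i ≤ n, x_{(i)} belongs to {1 + (k−1)a : k ∈ [⌊b/a⌋ + 1]}. -/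
-- helpers chunk, to be compiled together with defs
open Finset in
lemma parksAt_of {occ : Finset ℕ} {m p len s : ℕ} (hlen : 0 < len)
    (hfit : FitsAt occ m p len s) (hocc : ∀ s', p ≤ s' → s' < s → s' ∈ occ) :
    ParksAt occ m p len s := by
  refine ⟨hfit, fun s' hs' hf => ?_⟩
  have h1 : p ≤ s' := hf.1
  have := hf.2.2 s' (by simp [Finset.mem_Ico]; omega)
  exact this (hocc s' h1 hs')

lemma park_cons_elim {m : ℕ} {occ : Finset ℕ} {p len : ℕ} {rest : List (ℕ × ℕ)}
    (h : Park m occ ((p, len) :: rest)) :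
    ∃ s, ParksAt occ m p len s ∧ Park m (occ ∪ Finset.Ico s (s + len)) rest := by
  cases h with
  | cons _ _ _ _ s hs hrest => exact ⟨s, hs, hrest⟩

lemma parksAt_eq {occ : Finset ℕ} {m p len s s' : ℕ}
    (h1 : ParksAt occ m p len s) (h2 : ParksAt occ m p len s') : s = s' := by
  rcases lt_trichotomy s s' with h | h | h
  · exact absurd h1.1 (h2.2 s h)
  · exact h
  · exact absurd h2.1 (h1.2 s' h)

lemma park_determined {m : ℕ} {occ : Finset ℕ} {p len s₀ : ℕ} {rest : List (ℕ × ℕ)}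
    (h : Park m occ ((p, len) :: rest)) (h0 : ParksAt occ m p len s₀) :
    Park m (occ ∪ Finset.Ico s₀ (s₀ + len)) rest := by
  obtain ⟨s, hs, hrest⟩ := park_cons_elim h
  rwa [parksAt_eq h0 hs]

lemma park_no_fit {m : ℕ} {occ : Finset ℕ} {p len : ℕ} {rest : List (ℕ × ℕ)}
    (hno : ∀ s, ¬ FitsAt occ m p len s) (h : Park m occ ((p, len) :: rest)) : False := by
  obtain ⟨s, hs, -⟩ := park_cons_elim h
  exact hno s hs.1
open Finset in
lemma fail_region {m a u v : ℕ} (ha : 0 < a) :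
    ∀ (l : List (ℕ × ℕ)) (occ : Finset ℕ), Park m occ l →
    (∀ pr ∈ l, 1 ≤ pr.1 ∧ pr.2 = a) →
    occ ⊆ Finset.Icc 1 m →
    (Finset.Icc 1 m \ occ).card = a * l.length →
    1 ≤ u → v ≤ m →
    (u = 1 ∨ u - 1 ∈ occ) → (v = m ∨ v + 1 ∈ occ) →
    ¬ a ∣ (Finset.Icc u v \ occ).card → False := by
  intro l
  induction l with
  | nil =>
    intro occ _ _ _ htot hu hv _ _ hdvd
    have hsub : Finset.Icc u v \ occ ⊆ Finset.Icc 1 m \ occ :=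
      Finset.sdiff_subset_sdiff (Finset.Icc_subset_Icc hu hv) le_rfl
    simp only [List.length_nil, Nat.mul_zero] at htot
    have : (Finset.Icc u v \ occ).card = 0 := by
      have := Finset.card_le_card hsub
      omega
    rw [this] at hdvd
    exact hdvd (dvd_zero a)
  | cons pr l ih =>
    intro occ hpark hl hocc htot hu hv hbl hbr hdvd
    obtain ⟨p, len⟩ := pr
    obtain ⟨hp1, hpa⟩ := hl (p, len) (List.mem_cons_self)
    simp only at hp1 hpa
    subst len
    obtain ⟨s, hs, hrest⟩ := park_cons_elim hpark
    obtain ⟨⟨hps, hsm, hfree⟩, -⟩ := hs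
    set I := Finset.Ico s (s + a) with hI
    have hIcard : I.card = a := by simp [hI]
    have hIsub : I ⊆ Finset.Icc 1 m := by
      intro t ht
      simp only [hI, Finset.mem_Ico] at ht
      simp only [Finset.mem_Icc]
      omega
    have hIfree : ∀ t ∈ I, t ∉ occ := hfree
    have hocc' : occ ∪ I ⊆ Finset.Icc 1 m := Finset.union_subset hocc hIsub
    have hsdiff : Finset.Icc 1 m \ (occ ∪ I) = (Finset.Icc 1 m \ occ) \ I := by
      ext t; simp only [Finset.mem_sdiff, Finset.mem_union]; tauto
    have hIsub2 : I ⊆ Finset.Icc 1 m \ occ := by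
      intro t ht; simp only [Finset.mem_sdiff]; exact ⟨hIsub ht, hIfree t ht⟩
    have htot' : (Finset.Icc 1 m \ (occ ∪ I)).card = a * l.length := by
      rw [hsdiff, Finset.card_sdiff_of_subset hIsub2, hIcard, htot]
      simp [Nat.mul_succ]
    have hl' : ∀ pr ∈ l, 1 ≤ pr.1 ∧ pr.2 = a := fun pr hpr => hl pr (List.mem_cons_of_mem _ hpr)
    by_cases hdisj : s + a - 1 < u ∨ v < s
    · -- window disjoint from region
      have hreg : Finset.Icc u v \ (occ ∪ I) = Finset.Icc u v \ occ := by
        ext t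
        simp only [Finset.mem_sdiff, Finset.mem_union, Finset.mem_Icc, hI, Finset.mem_Ico]
        constructor
        · rintro ⟨h1, h2⟩; exact ⟨h1, fun h => h2 (Or.inl h)⟩
        · rintro ⟨h1, h2⟩; exact ⟨h1, by rintro (h | h); exact h2 h; omega⟩
      exact ih (occ ∪ I) hrest hl' hocc' htot' hu hv
        (hbl.imp id fun h => Finset.mem_union_left _ h)
        (hbr.imp id fun h => Finset.mem_union_left _ h)
        (by rw [hreg]; exact hdvd)
    · push_neg at hdisj
      obtain ⟨hd1, hd2⟩ := hdisj
      -- window intersects region; show it is contained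
      have hus : u ≤ s := by
        by_contra hc
        push_neg at hc
        have hu1 : u ≠ 1 := by omega
        have hum : u - 1 ∈ occ := by rcases hbl with h | h; omega; exact h
        have : u - 1 ∈ I := by simp only [hI, Finset.mem_Ico]; omega
        exact hIfree _ this hum
      have hsv : s + a - 1 ≤ v := by
        by_contra hc
        push_neg at hc
        have : v + 1 ∈ I := by simp only [hI, Finset.mem_Ico]; omega
        rcases hbr with h | h
        · have := hIsub this; simp only [Finset.mem_Icc] at this; omega
        · exact hIfree _ this h
      have hIreg : I ⊆ Finset.Icc u v \ occ := by
        intro t ht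
        have ht' := ht
        simp only [hI, Finset.mem_Ico] at ht'
        simp only [Finset.mem_sdiff, Finset.mem_Icc]
        exact ⟨⟨by omega, by omega⟩, hIfree t ht⟩
      have hreg : Finset.Icc u v \ (occ ∪ I) = (Finset.Icc u v \ occ) \ I := by
        ext t; simp only [Finset.mem_sdiff, Finset.mem_union]; tauto
      have hcard : (Finset.Icc u v \ (occ ∪ I)).card = (Finset.Icc u v \ occ).card - a := by
        rw [hreg, Finset.card_sdiff_of_subset hIreg, hIcard]
      have hge : a ≤ (Finset.Icc u v \ occ).card := by
        have := Finset.card_le_card hIreg; omega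
      refine ih (occ ∪ I) hrest hl' hocc' htot' hu hv
        (hbl.imp id fun h => Finset.mem_union_left _ h)
        (hbr.imp id fun h => Finset.mem_union_left _ h) ?_
      rw [hcard]
      intro hdv
      exact hdvd (by
        have : (Finset.Icc u v \ occ).card = ((Finset.Icc u v \ occ).card - a) + a := by omega
        rw [this]
        exact Nat.dvd_add hdv ⟨1, by ring⟩)
open Finset in
lemma fail_count {m a E : ℕ} :
    ∀ (l : List (ℕ × ℕ)) (occ : Finset ℕ), Park m occ l →
    (∀ pr ∈ l, 1 ≤ pr.1 ∧ pr.2 = a) →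
    occ ⊆ Finset.Icc 1 m →
    (Finset.Icc 1 m \ occ).card = a * l.length →
    E ≤ m →
    a * (l.countP (fun pr => pr.1 ≤ E)) + 1 ≤ (Finset.Icc 1 E \ occ).card → False := by
  intro l
  induction l with
  | nil =>
    intro occ _ _ _ htot _ hcnt
    simp only [List.length_nil, Nat.mul_zero] at htot
    simp only [List.countP_nil, Nat.mul_zero] at hcnt
    have hsub : Finset.Icc 1 E \ occ ⊆ Finset.Icc 1 m \ occ :=
      Finset.sdiff_subset_sdiff (Finset.Icc_subset_Icc le_rfl ‹E ≤ m›) le_rfl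
    have := Finset.card_le_card hsub
    omega
  | cons pr l ih =>
    intro occ hpark hl hocc htot hEm hcnt
    obtain ⟨p, len⟩ := pr
    obtain ⟨hp1, hpa⟩ := hl (p, len) (List.mem_cons_self)
    simp only at hp1 hpa
    subst len
    obtain ⟨s, hs, hrest⟩ := park_cons_elim hpark
    obtain ⟨⟨hps, hsm, hfree⟩, -⟩ := hs
    set I := Finset.Ico s (s + a) with hI
    have hIcard : I.card = a := by simp [hI]
    have hIsub : I ⊆ Finset.Icc 1 m := by
      intro t ht
      simp only [hI, Finset.mem_Ico] at ht
      simp only [Finset.mem_Icc]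
      omega
    have hIsub2 : I ⊆ Finset.Icc 1 m \ occ := by
      intro t ht; simp only [Finset.mem_sdiff]; exact ⟨hIsub ht, hfree t ht⟩
    have hocc' : occ ∪ I ⊆ Finset.Icc 1 m := Finset.union_subset hocc hIsub
    have hsdiff : ∀ X : Finset ℕ, X \ (occ ∪ I) = (X \ occ) \ I := by
      intro X; ext t; simp only [Finset.mem_sdiff, Finset.mem_union]; tauto
    have htot' : (Finset.Icc 1 m \ (occ ∪ I)).card = a * l.length := by
      rw [hsdiff, Finset.card_sdiff_of_subset hIsub2, hIcard, htot]
      simp [Nat.mul_succ]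
    have hl' : ∀ pr ∈ l, 1 ≤ pr.1 ∧ pr.2 = a := fun pr hpr => hl pr (List.mem_cons_of_mem _ hpr)
    refine ih (occ ∪ I) hrest hl' hocc' htot' hEm ?_
    by_cases hsE : E < s
    · -- window above region
      have hreg : Finset.Icc 1 E \ (occ ∪ I) = Finset.Icc 1 E \ occ := by
        ext t
        simp only [Finset.mem_sdiff, Finset.mem_union, Finset.mem_Icc, hI, Finset.mem_Ico]
        constructor
        · rintro ⟨h1, h2⟩; exact ⟨h1, fun h => h2 (Or.inl h)⟩
        · rintro ⟨h1, h2⟩; exact ⟨h1, by rintro (h | h); exact h2 h; omega⟩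
      rw [hreg]
      have : l.countP (fun pr => pr.1 ≤ E) ≤ ((p, a) :: l).countP (fun pr => pr.1 ≤ E) := by
        simp [List.countP_cons]
      calc a * l.countP (fun pr => pr.1 ≤ E) + 1
          ≤ a * ((p, a) :: l).countP (fun pr => pr.1 ≤ E) + 1 := by
            have := Nat.mul_le_mul_left a this; omega
        _ ≤ _ := hcnt
    · push_neg at hsE
      have hpE : p ≤ E := le_trans hps hsE
      have hcount : ((p, a) :: l).countP (fun pr => pr.1 ≤ E)
          = l.countP (fun pr => pr.1 ≤ E) + 1 := by
        simp [List.countP_cons, hpE]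
      rw [hsdiff]
      have h1 : (Finset.Icc 1 E \ occ).card - I.card ≤ ((Finset.Icc 1 E \ occ) \ I).card :=
        Finset.le_card_sdiff _ _
      rw [hIcard] at h1
      rw [hcount, Nat.mul_add, Nat.mul_one] at hcnt
      omega
lemma block_bounds {a u : ℕ} (ha : 0 < a) (hu : 1 ≤ u) :
    ((u-1)/a)*a + 1 ≤ u ∧ u ≤ ((u-1)/a)*a + a := by
  have h := Nat.div_add_mod (u-1) a
  have h2 : (u-1) % a < a := Nat.mod_lt _ ha
  have e : ((u-1)/a)*a = a * ((u-1)/a) := by ring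
  omega

lemma bdiv_eq {a u i : ℕ} (ha : 0 < a) (h1 : i*a + 1 ≤ u) (h2 : u ≤ i*a + a) : (u-1)/a = i := by
  apply Nat.div_eq_of_lt_le <;> [skip; rw [Nat.succ_mul]] <;> omega

lemma idx_le_of_mul {a s t : ℕ} (ha : 0 < a) (h : t*a < s*a + a) : t ≤ s := by
  have : t*a < (s+1)*a := by rw [Nat.succ_mul]; omega
  have := Nat.lt_of_mul_lt_mul_right this
  omega

/-- Occupancy set: blocks `0..k-1` of size `a` (those not in `F` are occupied),
the big car on `(k*a, k*a+b]`, and `c` tail cars on `(k*a+b, k*a+b+c*a]`. -/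
def occS (a b k m : ℕ) (F : Finset ℕ) (c : ℕ) : Finset ℕ :=
  (Finset.Icc 1 m).filter (fun u =>
    (u ≤ k*a ∧ (u-1)/a ∉ F) ∨ (k*a < u ∧ u ≤ k*a + b) ∨ (k*a + b < u ∧ u ≤ k*a + b + c*a))

lemma mem_occS {a b k m : ℕ} {F : Finset ℕ} {c u : ℕ} :
    u ∈ occS a b k m F c ↔ (1 ≤ u ∧ u ≤ m) ∧
      ((u ≤ k*a ∧ (u-1)/a ∉ F) ∨ (k*a < u ∧ u ≤ k*a + b) ∨ (k*a + b < u ∧ u ≤ k*a + b + c*a)) := by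
  simp [occS, Finset.mem_filter, Finset.mem_Icc]
lemma parkS {a b q n m k : ℕ} (ha : 0 < a) (hb : 0 < b) (hq1 : q*a < b) (hq2 : b < q*a + a)
    (hm : m = b + (n-1)*a) (hk : k ≤ q) (hqn : q + 1 ≤ n - 1) :
    ∀ (l : List (ℕ × ℕ)) (F : Finset ℕ) (c : ℕ),
    (∀ i ∈ F, i < k) → c ≤ n-1-k →
    l.length + c = F.card + (n-1-k) →
    (∀ pr ∈ l, pr.2 = a ∧ ∃ t, t ≤ q ∧ pr.1 = 1 + t*a) →
    (∀ j, j ≤ k → (F.filter (· < j)).card ≤ l.countP (fun pr => pr.1 < 1 + j*a)) →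
    Park m (occS a b k m F c) l := by
  have hkn : k + 1 ≤ n - 1 := by omega
  have hkna : k*a ≤ (n-1)*a := Nat.mul_le_mul_right a (by omega)
  intro l
  induction l with
  | nil => intro F c _ _ _ _ _; exact Park.nil _
  | cons pr l ih =>
    intro F c hF hc hlen hl hcnt
    obtain ⟨p, len⟩ := pr
    obtain ⟨hpa, t, htq, hpt⟩ := hl (p, len) (List.mem_cons_self)
    simp only at hpa hpt
    subst len
    subst p
    have htqa : t*a ≤ q*a := Nat.mul_le_mul_right a htq
    have hl' : ∀ pr ∈ l, pr.2 = a ∧ ∃ t, t ≤ q ∧ pr.1 = 1 + t*a :=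
      fun pr hpr => hl pr (List.mem_cons_of_mem _ hpr)
    by_cases hne : (F.filter (fun i => t ≤ i)).Nonempty
    · -- parks in prefix block i₀
      set i₀ := (F.filter (fun i => t ≤ i)).min' hne with hi₀def
      have hi₀ : i₀ ∈ F ∧ t ≤ i₀ := by
        have h := Finset.mem_filter.mp (Finset.min'_mem (F.filter (fun i => t ≤ i)) hne)
        exact h
      have hi₀min : ∀ i ∈ F, t ≤ i → i₀ ≤ i := fun i h1 h2 =>
        Finset.min'_le _ _ (by simp [Finset.mem_filter]; exact ⟨h1, h2⟩)
      have hi₀k : i₀ < k := hF _ hi₀.1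
      have hti₀a : t*a ≤ i₀*a := Nat.mul_le_mul_right a hi₀.2
      have hi₀ka : i₀*a + a ≤ k*a := by
        have := Nat.mul_le_mul_right a (show i₀ + 1 ≤ k by omega)
        rw [Nat.succ_mul] at this; exact this
      set s := i₀*a + 1 with hsdef
      have hfit : FitsAt (occS a b k m F c) m (1 + t*a) a s := by
        refine ⟨by omega, by omega, ?_⟩
        intro u hu
        simp only [Finset.mem_Ico] at hu
        rw [mem_occS]
        rintro ⟨hr, hp⟩
        rcases hp with ⟨h1, h2⟩ | h | h
        · exact h2 (by rw [bdiv_eq ha (show i₀*a+1 ≤ u by omega) (by omega)]; exact hi₀.1)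
        · omega
        · omega
      have hparks : ParksAt (occS a b k m F c) m (1 + t*a) a s := by
        refine parksAt_of ha hfit ?_
        intro s' hps' hs's
        rw [mem_occS]
        have hs'1 : 1 ≤ s' := by omega
        obtain ⟨hbb1, hbb2⟩ := block_bounds ha hs'1 (u := s')
        set β := (s'-1)/a with hβdef
        have htβ : t ≤ β := idx_le_of_mul ha (by omega)
        have hβi₀ : β < i₀ := by
          have : β*a < i₀*a := by omega
          exact lt_of_mul_lt_mul_right this (Nat.zero_le a)
        have hβF : β ∉ F := fun hmem => by have := hi₀min β hmem htβ; omega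
        exact ⟨⟨by omega, by omega⟩, Or.inl ⟨by omega, hβF⟩⟩
      refine Park.cons _ _ _ _ s hparks ?_
      have hocc_eq : occS a b k m F c ∪ Finset.Ico s (s + a) = occS a b k m (F.erase i₀) c := by
        ext u
        simp only [Finset.mem_union, mem_occS, Finset.mem_Ico, Finset.mem_erase]
        constructor
        · rintro (⟨hr, hp⟩ | hw)
          · refine ⟨hr, ?_⟩
            rcases hp with ⟨h1, h2⟩ | h | h
            · exact Or.inl ⟨h1, fun hmem => h2 hmem.2⟩
            · exact Or.inr (Or.inl h)
            · exact Or.inr (Or.inr h)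
          · have hβ : (u-1)/a = i₀ := bdiv_eq ha (by omega) (by omega)
            refine ⟨⟨by omega, by omega⟩, Or.inl ⟨by omega, ?_⟩⟩
            rw [hβ]
            simp
        · rintro ⟨hr, hp⟩
          rcases hp with ⟨h1, h2⟩ | h | h
          · by_cases hqq : (u-1)/a = i₀
            · right
              obtain ⟨hbb1, hbb2⟩ := block_bounds ha (by omega) (u := u)
              rw [hqq] at hbb1 hbb2
              omega
            · exact Or.inl ⟨hr, Or.inl ⟨h1, fun hmem => h2 ⟨hqq, hmem⟩⟩⟩
          · exact Or.inl ⟨hr, Or.inr (Or.inl h)⟩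
          · exact Or.inl ⟨hr, Or.inr (Or.inr h)⟩
      rw [hocc_eq]
      have hFcard : 0 < F.card := Finset.card_pos.mpr ⟨i₀, hi₀.1⟩
      refine ih (F.erase i₀) c (fun i hi => hF i (Finset.mem_of_mem_erase hi)) hc ?_ hl' ?_
      · rw [Finset.card_erase_of_mem hi₀.1]
        simp only [List.length_cons] at hlen
        omega
      · intro j hj
        by_cases hj₀ : i₀ < j
        · have herase : (F.erase i₀).filter (· < j) = (F.filter (· < j)).erase i₀ := by
            ext i
            simp only [Finset.mem_filter, Finset.mem_erase]
            tauto
          have hi₀mem : i₀ ∈ F.filter (· < j) := by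
            simp only [Finset.mem_filter]
            exact ⟨hi₀.1, hj₀⟩
          have hcard : ((F.erase i₀).filter (· < j)).card = (F.filter (· < j)).card - 1 := by
            rw [herase, Finset.card_erase_of_mem hi₀mem]
          have hcrd0 : 0 < (F.filter (· < j)).card := Finset.card_pos.mpr ⟨i₀, hi₀mem⟩
          have hhead : t*a < j*a := by
            have := Nat.mul_le_mul_right a (show t + 1 ≤ j by omega)
            rw [Nat.succ_mul] at this; omega
          have hcount : ((1 + t*a, a) :: l).countP (fun pr => pr.1 < 1 + j*a)
              = l.countP (fun pr => pr.1 < 1 + j*a) + 1 := by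
            simp [List.countP_cons, show 1 + t*a < 1 + j*a by omega]
          have := hcnt j hj
          rw [hcount] at this
          omega
        · push_neg at hj₀
          have herase : (F.erase i₀).filter (· < j) = F.filter (· < j) := by
            ext i
            simp only [Finset.mem_filter, Finset.mem_erase]
            constructor
            · rintro ⟨⟨-, h2⟩, h3⟩; exact ⟨h2, h3⟩
            · rintro ⟨h1, h2⟩; exact ⟨⟨by omega, h1⟩, h2⟩
          rw [herase]
          by_cases htj : t < j
          · have hsub : F.filter (· < j) = F.filter (· < t) := by
              ext i
              simp only [Finset.mem_filter]
              constructor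
              · rintro ⟨h1, h2⟩
                refine ⟨h1, ?_⟩
                by_contra hc'
                push_neg at hc'
                have := hi₀min i h1 hc'
                omega
              · rintro ⟨h1, h2⟩; exact ⟨h1, by omega⟩
            rw [hsub]
            have h1 := hcnt t (by omega)
            have hcount : ((1 + t*a, a) :: l).countP (fun pr => pr.1 < 1 + t*a)
                = l.countP (fun pr => pr.1 < 1 + t*a) := by
              simp [List.countP_cons]
            rw [hcount] at h1
            refine le_trans h1 (List.countP_mono_left ?_)
            intro pr _ hpr
            simp only [decide_eq_true_eq] at hpr ⊢
            have : t*a ≤ j*a := Nat.mul_le_mul_right a (by omega)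
            omega
          · push_neg at htj
            have hja : j*a ≤ t*a := Nat.mul_le_mul_right a htj
            have hcount : ((1 + t*a, a) :: l).countP (fun pr => pr.1 < 1 + j*a)
                = l.countP (fun pr => pr.1 < 1 + j*a) := by
              simp [List.countP_cons, show ¬(1 + t*a < 1 + j*a) by omega]
            have := hcnt j hj
            rw [hcount] at this
            exact this
    · -- parks in the tail
      have hFt : ∀ i ∈ F, i < t := by
        intro i hi
        by_contra hcon
        push_neg at hcon
        exact hne ⟨i, by simp [Finset.mem_filter]; exact ⟨hi, hcon⟩⟩
      have hcc : c < n - 1 - k := by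
        by_contra hcon
        push_neg at hcon
        have hFcard : F.card = l.length + 1 := by
          simp only [List.length_cons] at hlen
          omega
        have hFk : F.filter (· < k) = F := Finset.filter_true_of_mem (fun i hi => hF i hi)
        have h1 := hcnt k le_rfl
        rw [hFk] at h1
        have h2 : ((1 + t*a, a) :: l).countP (fun pr => pr.1 < 1 + k*a) ≤ l.length + 1 := by
          have := List.countP_le_length (l := (1 + t*a, a) :: l)
            (p := fun pr => decide (pr.1 < 1 + k*a))
          simpa using this
        have hall : ∀ pr ∈ (1 + t*a, a) :: l, pr.1 < 1 + k*a := by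
          have heq : ((1 + t*a, a) :: l).countP (fun pr => pr.1 < 1 + k*a)
              = ((1 + t*a, a) :: l).length := by
            simp only [List.length_cons]
            omega
          intro pr hpr
          have := List.countP_eq_length.mp heq pr hpr
          simpa using this
        have htk : t < k := by
          have := hall (1 + t*a, a) (List.mem_cons_self)
          simp only at this
          by_contra hcon2
          push_neg at hcon2
          have : k*a ≤ t*a := Nat.mul_le_mul_right a hcon2
          omega
        have hFne : F.Nonempty := Finset.card_pos.mp (by omega)
        obtain ⟨i₁, hi₁⟩ := hFne
        have ht1 : 1 ≤ t := by have := hFt i₁ hi₁; omega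
        have hFt' : F.filter (· < t) = F := Finset.filter_true_of_mem (fun i hi => hFt i hi)
        have h3 := hcnt t (by omega)
        rw [hFt'] at h3
        have hall2 : ∀ pr ∈ (1 + t*a, a) :: l, pr.1 < 1 + t*a := by
          have h4 : ((1 + t*a, a) :: l).countP (fun pr => pr.1 < 1 + t*a) ≤ l.length + 1 := by
            have := List.countP_le_length (l := (1 + t*a, a) :: l)
              (p := fun pr => decide (pr.1 < 1 + t*a))
            simpa using this
          have heq : ((1 + t*a, a) :: l).countP (fun pr => pr.1 < 1 + t*a)
              = ((1 + t*a, a) :: l).length := by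
            simp only [List.length_cons]
            omega
          intro pr hpr
          have := List.countP_eq_length.mp heq pr hpr
          simpa using this
        have := hall2 (1 + t*a, a) (List.mem_cons_self)
        simp only at this
        omega
      set s := k*a + b + c*a + 1 with hsdef
      have hsm : s + a ≤ m + 1 := by
        have h1 : (k + c + 1)*a ≤ (n-1)*a := Nat.mul_le_mul_right a (by omega)
        have h2 : (k + c + 1)*a = k*a + c*a + a := by ring
        omega
      have hfit : FitsAt (occS a b k m F c) m (1 + t*a) a s := by
        refine ⟨by omega, hsm, ?_⟩
        intro u hu
        simp only [Finset.mem_Ico] at hu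
        rw [mem_occS]
        rintro ⟨hr, hp⟩
        rcases hp with ⟨h1, h2⟩ | h | h <;> omega
      have hparks : ParksAt (occS a b k m F c) m (1 + t*a) a s := by
        refine parksAt_of ha hfit ?_
        intro s' hps' hs's
        rw [mem_occS]
        have hs'1 : 1 ≤ s' := by omega
        refine ⟨⟨by omega, by omega⟩, ?_⟩
        by_cases h1 : s' ≤ k*a
        · obtain ⟨hbb1, hbb2⟩ := block_bounds ha hs'1 (u := s')
          set β := (s'-1)/a with hβdef
          have htβ : t ≤ β := idx_le_of_mul ha (by omega)
          exact Or.inl ⟨h1, fun hmem => by have := hFt β hmem; omega⟩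
        · by_cases h2 : s' ≤ k*a + b
          · exact Or.inr (Or.inl ⟨by omega, h2⟩)
          · exact Or.inr (Or.inr ⟨by omega, by omega⟩)
      refine Park.cons _ _ _ _ s hparks ?_
      have hocc_eq : occS a b k m F c ∪ Finset.Ico s (s + a) = occS a b k m F (c+1) := by
        have e1 : (c+1)*a = c*a + a := by ring
        ext u
        simp only [Finset.mem_union, mem_occS, Finset.mem_Ico]
        constructor
        · rintro (⟨hr, hp⟩ | hw)
          · refine ⟨hr, ?_⟩
            rcases hp with h | h | h
            · exact Or.inl h
            · exact Or.inr (Or.inl h)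
            · exact Or.inr (Or.inr ⟨h.1, by omega⟩)
          · exact ⟨⟨by omega, by omega⟩, Or.inr (Or.inr ⟨by omega, by omega⟩)⟩
        · rintro ⟨hr, hp⟩
          rcases hp with h | h | h
          · exact Or.inl ⟨hr, Or.inl h⟩
          · exact Or.inl ⟨hr, Or.inr (Or.inl h)⟩
          · by_cases h3 : u ≤ k*a + b + c*a
            · exact Or.inl ⟨hr, Or.inr (Or.inr ⟨h.1, h3⟩)⟩
            · exact Or.inr (by omega)
      rw [hocc_eq]
      refine ih F (c+1) hF (by omega) ?_ hl' ?_
      · simp only [List.length_cons] at hlen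
        omega
      · intro j hj
        by_cases htj : t < j
        · have hFj : F.filter (· < j) = F := Finset.filter_true_of_mem (fun i hi => by
            have := hFt i hi; omega)
          have hFt' : F.filter (· < t) = F := Finset.filter_true_of_mem (fun i hi => hFt i hi)
          rw [hFj]
          have h1 := hcnt t (by omega)
          rw [hFt'] at h1
          have hcount : ((1 + t*a, a) :: l).countP (fun pr => pr.1 < 1 + t*a)
              = l.countP (fun pr => pr.1 < 1 + t*a) := by
            simp [List.countP_cons]
          rw [hcount] at h1
          refine le_trans h1 (List.countP_mono_left ?_)
          intro pr _ hpr
          simp only [decide_eq_true_eq] at hpr ⊢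
          have : t*a ≤ j*a := Nat.mul_le_mul_right a (by omega)
          omega
        · push_neg at htj
          have hja : j*a ≤ t*a := Nat.mul_le_mul_right a htj
          have hcount : ((1 + t*a, a) :: l).countP (fun pr => pr.1 < 1 + j*a)
              = l.countP (fun pr => pr.1 < 1 + j*a) := by
            simp [List.countP_cons, show ¬(1 + t*a < 1 + j*a) by omega]
          have := hcnt j hj
          rw [hcount] at this
          exact this
lemma getD_mem {xs : List ℕ} {i : ℕ} (hi : i < xs.length) : xs.getD i 0 ∈ xs := by
  rw [List.getD_eq_getElem xs 0 hi]
  exact List.getElem_mem _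
lemma sorted_getD_mono {xs : List ℕ} (hs : xs.Pairwise (· ≤ ·)) {i j : ℕ}
    (hij : i ≤ j) (hj : j < xs.length) : xs.getD i 0 ≤ xs.getD j 0 := by
  rw [List.getD_eq_getElem xs 0 hj, List.getD_eq_getElem xs 0 (lt_of_le_of_lt hij hj)]
  rcases eq_or_lt_of_le hij with rfl | h
  · exact le_refl _
  · exact List.Pairwise.rel_get_of_lt hs (by exact h)

lemma sorted_count_of_getD {xs : List ℕ} (hs : xs.Pairwise (· ≤ ·)) {i B : ℕ}
    (hi : i < xs.length) (h : xs.getD i 0 ≤ B) :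
    i + 1 ≤ xs.countP (fun v => v ≤ B) := by
  have hsplit : xs.countP (fun v => decide (v ≤ B)) =
      (xs.take (i+1)).countP (fun v => decide (v ≤ B)) +
      (xs.drop (i+1)).countP (fun v => decide (v ≤ B)) := by
    rw [← List.countP_append, List.take_append_drop]
  have htake : (xs.take (i+1)).countP (fun v => decide (v ≤ B)) = (xs.take (i+1)).length := by
    rw [List.countP_eq_length]
    intro v hv
    obtain ⟨j, hj, hjv⟩ := List.mem_take_iff_getElem.mp hv
    simp only [decide_eq_true_eq]
    have hjx : j < xs.length := by
      have := hj; simp only [lt_min_iff] at this; exact this.2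
    have : xs.getD j 0 ≤ xs.getD i 0 := by
      apply sorted_getD_mono hs _ hi
      have := hj; simp only [lt_min_iff] at this; omega
    rw [List.getD_eq_getElem xs 0 hjx] at this
    omega
  have hlen : (xs.take (i+1)).length = i + 1 := by
    rw [List.length_take]; omega
  omega

lemma sorted_getD_of_count {xs : List ℕ} (hs : xs.Pairwise (· ≤ ·)) {i B : ℕ}
    (hi : i < xs.length) (h : i + 1 ≤ xs.countP (fun v => v ≤ B)) :
    xs.getD i 0 ≤ B := by
  by_contra hc
  push_neg at hc
  have hsplit : xs.countP (fun v => decide (v ≤ B)) =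
      (xs.take i).countP (fun v => decide (v ≤ B)) +
      (xs.drop i).countP (fun v => decide (v ≤ B)) := by
    rw [← List.countP_append, List.take_append_drop]
  have hdrop : (xs.drop i).countP (fun v => decide (v ≤ B)) = 0 := by
    rw [List.countP_eq_zero]
    intro v hv
    obtain ⟨j, hj, hjv⟩ := List.mem_iff_getElem.mp hv
    simp only [decide_eq_true_eq, not_le]
    rw [List.getElem_drop] at hjv
    have hij : i + j < xs.length := by
      rw [List.length_drop] at hj; omega
    have : xs.getD i 0 ≤ xs.getD (i+j) 0 := sorted_getD_mono hs (by omega) hij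
    rw [List.getD_eq_getElem xs 0 hij] at this
    omega
  have htake := List.countP_le_length (p := fun v => decide (v ≤ B)) (l := xs.take i)
  rw [List.length_take] at htake
  omega
lemma zip_replicate_eq_map {α β : Type*} (l : List α) (c : β) :
    l.zip (List.replicate l.length c) = l.map (fun p => (p, c)) := by
  induction l with
  | nil => simp
  | cons x l ih => simpa [List.replicate_succ] using ih

lemma stmt4_forward {n a b q : ℕ} (ha : 0 < a) (hb : 0 < b) (hq1 : q*a < b) (hq2 : b < q*a+a)
    (hqn : q+1 ≤ n-1) (hn : 2 ≤ n) (x : List ℕ) (hxlen : x.length = n)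
    (hal : ∀ v ∈ x, ∃ t, t ≤ q ∧ v = 1 + t*a)
    (hcnt : ∀ j, 1 ≤ j → j ≤ q+1 → j ≤ x.countP (fun v => v ≤ 1 + (j-1)*a)) :
    PAinv (b :: List.replicate (n-1) a) x := by
  have hsum : (b :: List.replicate (n-1) a).sum = b + (n-1)*a := by
    simp [List.sum_replicate, smul_eq_mul, Nat.mul_comm]
  intro x' hperm'
  have hxlen' : x'.length = n := by rw [← hperm'.length_eq, hxlen]
  refine ⟨by simp [hxlen']; omega, ?_, ?_⟩
  · intro v hv
    obtain ⟨t, htq, rfl⟩ := hal v (hperm'.mem_iff.mpr hv)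
    have htqa := Nat.mul_le_mul_right a htq
    rw [hsum]
    omega
  · rw [hsum]
    set m := b + (n-1)*a with hmdef
    rcases x' with _ | ⟨h, rest⟩
    · exfalso; simp at hxlen'; omega
    have hrestlen : rest.length = n - 1 := by simp at hxlen'; omega
    have hzip : (h :: rest).zip (b :: List.replicate (n-1) a)
        = (h, b) :: rest.map (fun p => (p, a)) := by
      rw [List.zip_cons_cons, ← hrestlen, zip_replicate_eq_map]
    rw [hzip]
    obtain ⟨k₀, hk₀q, rfl⟩ := hal h (hperm'.mem_iff.mpr (List.mem_cons_self))
    have hk₀a : k₀*a ≤ q*a := Nat.mul_le_mul_right a hk₀q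
    have hparks1 : ParksAt ∅ m (1 + k₀*a) b (1 + k₀*a) := by
      refine parksAt_of hb ⟨le_rfl, ?_, by simp⟩ ?_
      · have hna := Nat.mul_le_mul_right a (show q+1 ≤ n-1 from hqn)
        rw [Nat.succ_mul] at hna
        omega
      · intro s' h1 h2; omega
    refine Park.cons _ _ _ _ (1 + k₀*a) hparks1 ?_
    have hocc : (∅ : Finset ℕ) ∪ Finset.Ico (1 + k₀*a) (1 + k₀*a + b)
        = occS a b k₀ m (Finset.range k₀) 0 := by
      ext u
      simp only [Finset.mem_union, Finset.notMem_empty, false_or, Finset.mem_Ico, mem_occS,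
        Finset.mem_range]
      have hbm : k₀*a + b ≤ m := by
        have hna := Nat.mul_le_mul_right a (show q+1 ≤ n-1 from hqn)
        rw [Nat.succ_mul] at hna
        omega
      constructor
      · intro hu
        exact ⟨⟨by omega, by omega⟩, Or.inr (Or.inl ⟨by omega, by omega⟩)⟩
      · rintro ⟨⟨hu1, hu2⟩, hp⟩
        rcases hp with ⟨h1, h2⟩ | h3 | h3
        · exfalso
          obtain ⟨hbb1, hbb2⟩ := block_bounds ha hu1 (u := u)
          refine h2 ?_
          have : ((u-1)/a)*a < k₀*a := by omega
          exact lt_of_mul_lt_mul_right this (Nat.zero_le a)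
        · omega
        · omega
    rw [hocc]
    refine parkS ha hb hq1 hq2 rfl hk₀q hqn _ _ _ (fun i hi => Finset.mem_range.mp hi)
      (by omega) ?_ ?_ ?_
    · simp [hrestlen, Finset.card_range]
      omega
    · intro pr hpr
      simp only [List.mem_map] at hpr
      obtain ⟨v, hv, rfl⟩ := hpr
      exact ⟨rfl, hal v (hperm'.mem_iff.mpr (List.mem_cons_of_mem _ hv))⟩
    · intro j hj
      have hfil : (Finset.range k₀).filter (· < j) = Finset.range j := by
        ext i
        simp only [Finset.mem_filter, Finset.mem_range]
        omega
      rw [hfil, Finset.card_range, List.countP_map]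
      rcases Nat.eq_zero_or_pos j with rfl | hj1
      · simp
      · have h1 := hcnt j hj1 (by omega)
        have h2 : x.countP (fun v => v ≤ 1 + (j-1)*a) =
            ((1 + k₀*a) :: rest).countP (fun v => v ≤ 1 + (j-1)*a) := hperm'.countP_eq _
        have hja : (j-1)*a < k₀*a := by
          have := Nat.mul_le_mul_right a (show (j-1) + 1 ≤ k₀ by omega)
          rw [Nat.succ_mul] at this
          omega
        have h3 : ((1 + k₀*a) :: rest).countP (fun v => v ≤ 1 + (j-1)*a)
            = rest.countP (fun v => v ≤ 1 + (j-1)*a) := by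
          simp [List.countP_cons, show ¬(1 + k₀*a ≤ 1 + (j-1)*a) by omega]
        have h4 : j ≤ rest.countP (fun v => v ≤ 1 + (j-1)*a) := by
          rw [h2, h3] at h1
          exact h1
        refine le_trans h4 (List.countP_mono_left ?_)
        intro v hv hvle
        have hfact : (j-1)*a + a = j*a := by
          have h5 : (j-1+1)*a = (j-1)*a + a := by ring
          rw [show j-1+1 = j by omega] at h5
          omega
        simp only [Function.comp, decide_eq_true_eq] at hvle ⊢
        omega
lemma park_of_inv {n a b : ℕ} {x : List ℕ} (hn : 2 ≤ n)
    (hinv : PAinv (b :: List.replicate (n-1) a) x) (hx : x.length = n) {w : ℕ} (hw : w ∈ x) :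
    Park (b + (n-1)*a) ∅ ((w, b) :: (x.erase w).map (fun p => (p, a))) := by
  have hperm := List.perm_cons_erase hw
  have hPA := hinv _ hperm
  have hpark := hPA.2.2
  have hsum : (b :: List.replicate (n-1) a).sum = b + (n-1)*a := by
    simp [List.sum_replicate, smul_eq_mul, Nat.mul_comm]
  rw [hsum] at hpark
  have hlen : (x.erase w).length = n - 1 := by
    rw [List.length_erase_of_mem hw, hx]
  have hzip : (w :: x.erase w).zip (b :: List.replicate (n-1) a)
      = (w, b) :: (x.erase w).map (fun p => (p, a)) := by
    rw [List.zip_cons_cons, ← hlen, zip_replicate_eq_map]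
  rwa [hzip] at hpark

lemma map_pairs_prop {a : ℕ} {l : List ℕ} (h1 : ∀ v ∈ l, 1 ≤ v) :
    ∀ pr ∈ l.map (fun p => (p, a)), 1 ≤ pr.1 ∧ pr.2 = a := by
  intro pr hpr
  simp only [List.mem_map] at hpr
  obtain ⟨v, hv, rfl⟩ := hpr
  exact ⟨h1 v hv, rfl⟩

lemma stmt4_R1 {n a b : ℕ} {x : List ℕ} (ha : 0 < a) (hb : 0 < b) (hn : 2 ≤ n)
    (hinv : PAinv (b :: List.replicate (n-1) a) x) (hxlen : x.length = n)
    (hxm : ∀ v ∈ x, 1 ≤ v ∧ v ≤ b + (n-1)*a) :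
    ∀ v ∈ x, ∃ t, v = 1 + t*a := by
  intro v hv
  by_contra hc
  push_neg at hc
  have hv1 : 1 ≤ v := (hxm v hv).1
  have hnd : ¬ a ∣ (v - 1) := by
    rintro ⟨t, ht⟩
    exact hc t (by rw [Nat.mul_comm] at ht; omega)
  set m := b + (n-1)*a with hmdef
  have hpark := park_of_inv hn hinv hxlen hv
  by_cases hfit : v + b ≤ m + 1
  · have hparks : ParksAt ∅ m v b v :=
      parksAt_of hb ⟨le_rfl, hfit, by simp⟩ (fun s' h1 h2 => absurd h1 (by omega))
    have hrest := park_determined hpark hparks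
    rw [Finset.empty_union] at hrest
    have hoccsub : Finset.Ico v (v+b) ⊆ Finset.Icc 1 m := by
      intro u hu
      simp only [Finset.mem_Ico] at hu
      simp only [Finset.mem_Icc]
      omega
    refine fail_region (u := 1) (v := v - 1) ha _ _ hrest
      (map_pairs_prop (fun u hu => (hxm u (List.mem_of_mem_erase hu)).1))
      hoccsub ?_ le_rfl (by omega) (Or.inl rfl) ?_ ?_
    · rw [Finset.card_sdiff_of_subset hoccsub, Nat.card_Icc, Nat.card_Ico]
      simp only [List.length_map, List.length_erase_of_mem hv, hxlen]
      have : a * (n-1) = (n-1) * a := Nat.mul_comm _ _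
      omega
    · right
      simp only [Finset.mem_Ico]
      omega
    · have hreg : Finset.Icc 1 (v-1) \ Finset.Ico v (v+b) = Finset.Icc 1 (v-1) := by
        ext u
        simp only [Finset.mem_sdiff, Finset.mem_Icc, Finset.mem_Ico]
        omega
      rw [hreg, Nat.card_Icc]
      simpa using hnd
  · exact absurd hpark (fun hp => park_no_fit (fun s hf => by
      have h1 := hf.1
      have h2 := hf.2.1
      omega) hp)
lemma stmt4_R4 {n a b q : ℕ} {x : List ℕ} (ha : 0 < a) (hb : 0 < b) (hn : 2 ≤ n)
    (hq1 : q*a < b) (hq2 : b < q*a+a) (hqn : q+1 ≤ n-1)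
    (hinv : PAinv (b :: List.replicate (n-1) a) x) (hxlen : x.length = n)
    (hxm : ∀ v ∈ x, 1 ≤ v ∧ v ≤ b + (n-1)*a)
    (hal : ∀ v ∈ x, ∃ t, v = 1 + t*a) :
    ∀ j, 1 ≤ j → j ≤ q+1 → j ≤ x.countP (fun v => v ≤ 1 + (j-1)*a) := by
  intro j hj1 hjq
  by_contra hcount
  push_neg at hcount
  set m := b + (n-1)*a with hmdef
  -- find an entry above the bound
  have hex : ∃ v ∈ x, ¬ (v ≤ 1 + (j-1)*a) := by
    by_contra hc
    push_neg at hc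
    have : x.countP (fun v => v ≤ 1 + (j-1)*a) = x.length :=
      List.countP_eq_length.mpr (fun v hv => by simpa using hc v hv)
    omega
  obtain ⟨w, hw, hwgt⟩ := hex
  push_neg at hwgt
  obtain ⟨M, rfl⟩ := hal w hw
  have hjM : j ≤ M := by
    have h1 : (j-1)*a < M*a := by omega
    have := lt_of_mul_lt_mul_right h1 (Nat.zero_le a)
    omega
  have hjMa : j*a ≤ M*a := Nat.mul_le_mul_right a hjM
  have hja : (j-1)*a + a = j*a := by
    have h5 : (j-1+1)*a = (j-1)*a + a := by ring
    rw [show j-1+1 = j by omega] at h5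
    omega
  have hpark := park_of_inv hn hinv hxlen hw
  by_cases hfit : (1 + M*a) + b ≤ m + 1
  · have hparks : ParksAt ∅ m (1 + M*a) b (1 + M*a) :=
      parksAt_of hb ⟨le_rfl, hfit, by simp⟩ (fun s' h1 h2 => absurd h1 (by omega))
    have hrest := park_determined hpark hparks
    rw [Finset.empty_union] at hrest
    have hoccsub : Finset.Ico (1 + M*a) (1 + M*a + b) ⊆ Finset.Icc 1 m := by
      intro u hu
      simp only [Finset.mem_Ico] at hu
      simp only [Finset.mem_Icc]
      omega
    refine fail_count (E := j*a) _ _ hrest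
      (map_pairs_prop (fun u hu => (hxm u (List.mem_of_mem_erase hu)).1))
      hoccsub ?_ (by omega) ?_
    · rw [Finset.card_sdiff_of_subset hoccsub, Nat.card_Icc, Nat.card_Ico]
      simp only [List.length_map, List.length_erase_of_mem hw, hxlen]
      have : a * (n-1) = (n-1) * a := Nat.mul_comm _ _
      omega
    · have hreg : Finset.Icc 1 (j*a) \ Finset.Ico (1 + M*a) (1 + M*a + b)
          = Finset.Icc 1 (j*a) := by
        ext u
        simp only [Finset.mem_sdiff, Finset.mem_Icc, Finset.mem_Ico]
        omega
      rw [hreg, Nat.card_Icc]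
      have hcnt1 : ((x.erase (1 + M*a)).map (fun p => (p, a))).countP
          (fun pr => pr.1 ≤ j*a) ≤ x.countP (fun v => v ≤ 1 + (j-1)*a) := by
        rw [List.countP_map]
        calc (x.erase (1 + M*a)).countP ((fun pr => decide (pr.1 ≤ j*a)) ∘ (fun p => (p, a)))
            ≤ x.countP ((fun pr => decide (pr.1 ≤ j*a)) ∘ (fun p => (p, a))) :=
              (List.erase_sublist).countP_le
          _ ≤ x.countP (fun v => v ≤ 1 + (j-1)*a) := by
              refine List.countP_mono_left ?_
              intro v hv hvle
              obtain ⟨t, rfl⟩ := hal v hv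
              simp only [Function.comp, decide_eq_true_eq] at hvle ⊢
              have htj : t ≤ j - 1 := by
                have h1 : t*a < j*a := by omega
                have := lt_of_mul_lt_mul_right h1 (Nat.zero_le a)
                omega
              have := Nat.mul_le_mul_right a htj
              omega
      have hmul : a * ((x.erase (1 + M*a)).map (fun p => (p, a))).countP
          (fun pr => pr.1 ≤ j*a) ≤ a * (j-1) := Nat.mul_le_mul_left a (by omega)
      have : a * (j-1) = (j-1) * a := Nat.mul_comm _ _
      omega
  · exact absurd hpark (fun hp => park_no_fit (fun s hf => by
      have h1 := hf.1
      have h2 := hf.2.1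
      omega) hp)
lemma stmt4_R3 {n a b q : ℕ} {x : List ℕ} (ha : 0 < a) (hb : 0 < b) (hn : 2 ≤ n)
    (hq1 : q*a < b) (hq2 : b < q*a+a) (hqn : q+1 ≤ n-1) (hnd : ¬ a ∣ b)
    (hinv : PAinv (b :: List.replicate (n-1) a) x) (hxlen : x.length = n)
    (hxm : ∀ v ∈ x, 1 ≤ v ∧ v ≤ b + (n-1)*a)
    (hal : ∀ v ∈ x, ∃ t, v = 1 + t*a) (hone : (1:ℕ) ∈ x) :
    ∀ v ∈ x, v ≤ 1 + q*a := by
  intro v hv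
  by_contra hgt
  push_neg at hgt
  obtain ⟨M, rfl⟩ := hal v hv
  have hqM : q < M := by
    have h1 : q*a < M*a := by omega
    exact lt_of_mul_lt_mul_right h1 (Nat.zero_le a)
  have hq1M : (q+1)*a ≤ M*a := Nat.mul_le_mul_right a hqM
  have hq1a : (q+1)*a = q*a + a := by ring
  have hbM : b < M*a := by omega
  set m := b + (n-1)*a with hmdef
  have hv1 : (1 + M*a) ≠ 1 := by omega
  have hvmem : (1 + M*a) ∈ x.erase 1 := (List.mem_erase_of_ne hv1).mpr hv
  set rest := (x.erase 1).erase (1 + M*a) with hrestdef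
  have hperm : x.Perm (1 :: (1 + M*a) :: rest) :=
    (List.perm_cons_erase hone).trans ((List.perm_cons_erase hvmem).cons 1)
  have hPA := hinv _ hperm
  have hpark := hPA.2.2
  have hsum : (b :: List.replicate (n-1) a).sum = m := by
    rw [hmdef]; simp [List.sum_replicate, smul_eq_mul]
  rw [hsum] at hpark
  have hrestlen : rest.length = n - 2 := by
    rw [hrestdef, List.length_erase_of_mem hvmem, List.length_erase_of_mem hone, hxlen]
    omega
  have hzip : (1 :: (1 + M*a) :: rest).zip (b :: List.replicate (n-1) a)
      = (1, b) :: (1 + M*a, a) :: rest.map (fun p => (p, a)) := by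
    rw [show n - 1 = (n-2) + 1 by omega, List.replicate_succ, List.zip_cons_cons,
      List.zip_cons_cons, ← hrestlen, zip_replicate_eq_map]
  rw [hzip] at hpark
  -- car 1 parks on [1, b]
  have hparks1 : ParksAt ∅ m 1 b 1 :=
    parksAt_of hb ⟨le_rfl, by omega, by simp⟩ (fun s' h1 h2 => absurd h1 (by omega))
  have hpark2 := park_determined hpark hparks1
  rw [Finset.empty_union] at hpark2
  by_cases hfit : (1 + M*a) + a ≤ m + 1
  · -- car 2 parks on [1+Ma, Ma+a]
    have hparks2 : ParksAt (Finset.Ico 1 (1+b)) m (1 + M*a) a (1 + M*a) := by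
      refine parksAt_of ha ⟨le_rfl, hfit, ?_⟩ (fun s' h1 h2 => absurd h1 (by omega))
      intro u hu
      simp only [Finset.mem_Ico] at hu ⊢
      omega
    have hpark3 := park_determined hpark2 hparks2
    set occ2 := Finset.Ico 1 (1+b) ∪ Finset.Ico (1 + M*a) (1 + M*a + a) with hocc2
    have hoccsub : occ2 ⊆ Finset.Icc 1 m := by
      intro u hu
      simp only [hocc2, Finset.mem_union, Finset.mem_Ico] at hu
      simp only [Finset.mem_Icc]
      omega
    have hdisj : Disjoint (Finset.Ico 1 (1+b)) (Finset.Ico (1 + M*a) (1 + M*a + a)) := by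
      rw [Finset.disjoint_left]
      intro u hu1 hu2
      simp only [Finset.mem_Ico] at hu1 hu2
      omega
    have hocc2card : occ2.card = b + a := by
      rw [hocc2, Finset.card_union_of_disjoint hdisj, Nat.card_Ico, Nat.card_Ico]
      omega
    refine fail_region (u := b+1) (v := M*a) ha _ _ hpark3
      (map_pairs_prop (fun u hu => (hxm u
        (List.mem_of_mem_erase (List.mem_of_mem_erase hu))).1))
      hoccsub ?_ (by omega) (by omega) ?_ ?_ ?_
    · rw [Finset.card_sdiff_of_subset hoccsub, Nat.card_Icc, hocc2card]
      simp only [List.length_map, hrestlen]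
      have e1 : a * (n-2) = (n-2) * a := Nat.mul_comm _ _
      have e2 : (n-2)*a + a = (n-1)*a := by
        have : (n-2+1)*a = (n-2)*a + a := by ring
        rw [show n-2+1 = n-1 by omega] at this
        omega
      omega
    · right
      simp only [hocc2, Finset.mem_union, Finset.mem_Ico]
      left
      omega
    · right
      simp only [hocc2, Finset.mem_union, Finset.mem_Ico]
      right
      omega
    · have hreg : Finset.Icc (b+1) (M*a) \ occ2 = Finset.Icc (b+1) (M*a) := by
        ext u
        simp only [hocc2, Finset.mem_sdiff, Finset.mem_Icc, Finset.mem_union, Finset.mem_Ico]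
        omega
      rw [hreg, Nat.card_Icc]
      intro hdvd
      have hdvd' : a ∣ M*a - b := by
        have : M*a + 1 - (b+1) = M*a - b := by omega
        rwa [this] at hdvd
      have hMa : a ∣ M*a := dvd_mul_left a M
      have := Nat.dvd_sub hMa hdvd'
      rw [show M*a - (M*a - b) = b by omega] at this
      exact hnd this
  · exact absurd hpark2 (fun hp => park_no_fit (fun s hf => by
      have h1 := hf.1
      have h2 := hf.2.1
      omega) hp)
/-- for `y = (b, a^{n−1})` with `a ∤ b` and `b < (n−1)a`,
`x ∈ PAinv_n(y)` iff the `i`-th smallest entry lies in `{1+(k−1)a : k ∈ [i]}` for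
`i ∈ [⌊b/a⌋+1]`, and in `{1+(k−1)a : k ∈ [⌊b/a⌋+1]}` for `⌊b/a⌋+1 < i ≤ n`.
Here `xs` is the nondecreasing rearrangement of `x` (0-based indexing, so the
paper's index `i` corresponds to `i + 1` below). -/
theorem stmt4 (n a b : ℕ) (hn : 2 ≤ n) (ha : 0 < a) (hb : 0 < b)
    (y : List ℕ) (hy : y = b :: List.replicate (n - 1) a)
    (x : List ℕ) (hxlen : x.length = n)
    (hxm : ∀ v ∈ x, 1 ≤ v ∧ v ≤ b + (n - 1) * a)
    (xs : List ℕ) (hperm : xs.Perm x) (hsort : xs.Pairwise (· ≤ ·))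
    (hnd : ¬ a ∣ b) (hlt : b < (n - 1) * a) :
    PAinv y x ↔
      ∀ i < n,
        (i + 1 ≤ b / a + 1 →
          ∃ k, 1 ≤ k ∧ k ≤ i + 1 ∧ xs.getD i 0 = 1 + (k - 1) * a) ∧
        (b / a + 1 < i + 1 →
          ∃ k, 1 ≤ k ∧ k ≤ b / a + 1 ∧ xs.getD i 0 = 1 + (k - 1) * a) := by
  subst hy
  have hq1 : (b/a)*a < b := by
    have h := Nat.div_add_mod b a
    have h0 : b % a ≠ 0 := fun h0 => hnd (Nat.dvd_of_mod_eq_zero h0)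
    have e : (b/a)*a = a*(b/a) := Nat.mul_comm _ _
    omega
  have hq2 : b < (b/a)*a + a := by
    have h := Nat.div_add_mod b a
    have h2 : b % a < a := Nat.mod_lt b ha
    have e : (b/a)*a = a*(b/a) := Nat.mul_comm _ _
    omega
  have hqn : (b/a) + 1 ≤ n - 1 := by
    have h1 : (b/a)*a < (n-1)*a := by omega
    have := lt_of_mul_lt_mul_right h1 (Nat.zero_le a)
    omega
  have hxslen : xs.length = n := by rw [hperm.length_eq, hxlen]
  constructor
  · intro hinv
    have hal := stmt4_R1 ha hb hn hinv hxlen hxm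
    have hR4 := stmt4_R4 ha hb hn hq1 hq2 hqn hinv hxlen hxm hal
    have hone : (1:ℕ) ∈ x := by
      have h1 := hR4 1 le_rfl (Nat.succ_le_succ (Nat.zero_le _))
      have h2 : 0 < x.countP (fun v => v ≤ 1 + (1-1)*a) := by omega
      obtain ⟨v, hv, hvle⟩ := List.countP_pos_iff.mp h2
      simp only [decide_eq_true_eq] at hvle
      have := (hxm v hv).1
      have hv1 : v = 1 := by omega
      rwa [hv1] at hv
    have hub := stmt4_R3 ha hb hn hq1 hq2 hqn hnd hinv hxlen hxm hal hone
    intro i hi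
    have hii : i < xs.length := by rw [hxslen]; omega
    have hmem : xs.getD i 0 ∈ x := hperm.mem_iff.mp (getD_mem hii)
    obtain ⟨t, hteq⟩ := hal _ hmem
    constructor
    · intro hiq
      have hcnt := hR4 (i+1) (by omega) hiq
      have hle : xs.getD i 0 ≤ 1 + (i+1-1)*a := by
        refine sorted_getD_of_count hsort hii ?_
        rw [hperm.countP_eq]
        exact hcnt
      rw [show i+1-1 = i by omega] at hle
      rw [hteq] at hle
      have h1 : t*a ≤ i*a := by omega
      have hti : t ≤ i := Nat.le_of_mul_le_mul_right h1 ha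
      exact ⟨t+1, by omega, by omega, by rw [hteq]; simp⟩
    · intro hiq
      have h2 := hub _ hmem
      rw [hteq] at h2
      have h1 : t*a ≤ (b/a)*a := by omega
      have ht : t ≤ b/a := Nat.le_of_mul_le_mul_right h1 ha
      exact ⟨t+1, by omega, by omega, by rw [hteq]; simp⟩
  · intro hcond
    have hal : ∀ v ∈ x, ∃ t, t ≤ b/a ∧ v = 1 + t*a := by
      intro v hv
      have hvxs : v ∈ xs := hperm.mem_iff.mpr hv
      obtain ⟨i, hi, hieq⟩ := List.mem_iff_getElem.mp hvxs
      have hiD : xs.getD i 0 = v := by rw [List.getD_eq_getElem xs 0 hi, hieq]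
      have hin : i < n := by rw [hxslen] at hi; omega
      rcases le_or_gt (i+1) (b/a+1) with hle | hltq
      · obtain ⟨k', hk1, hk2, hk3⟩ := (hcond i hin).1 hle
        exact ⟨k'-1, by omega, by rw [← hiD, hk3]⟩
      · obtain ⟨k', hk1, hk2, hk3⟩ := (hcond i hin).2 hltq
        exact ⟨k'-1, by omega, by rw [← hiD, hk3]⟩
    have hcnt : ∀ j, 1 ≤ j → j ≤ b/a+1 → j ≤ x.countP (fun v => v ≤ 1 + (j-1)*a) := by
      intro j hj1 hjq
      have hjn : j - 1 < n := by omega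
      obtain ⟨k', hk1, hk2, hk3⟩ := (hcond (j-1) hjn).1 (by omega)
      have hle : xs.getD (j-1) 0 ≤ 1 + (j-1)*a := by
        rw [hk3]
        have : (k'-1)*a ≤ (j-1)*a := Nat.mul_le_mul_right a (by omega)
        omega
      have hii : j - 1 < xs.length := by rw [hxslen]; omega
      have hcount := sorted_count_of_getD hsort hii hle
      rw [hperm.countP_eq] at hcount
      omega
    exact stmt4_forward ha hb hq1 hq2 hqn hn x hxlen hal hcnt
end
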